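/- arXiv:1705.07684 — 11 statements merged into one kernel-verified Lean document; each statement's English description precedes it below -/
import Mathlib

section
/- Let R > 0 and let f : [0, R) → ℝ be continuously differentiable with f(0) = 0, f'(0) = −1, and f' strictly increasing, and let ν := sup{t ∈ [0, R) : f'(t) < 0}. Then the Newton iteration map n_f(t) := t − f(t)/f'(t) is well defined on [0, ν) and satisfies n_f(t) < 0 for all t ∈ (0, ν). -/
theorem stmt_1 (R : ℝ) (hR : 0 < R) (f f' : ℝ → ℝ)
    (hderiv : ∀ t ∈ Set.Ico 0 R, HasDerivWithinAt f (f' t) (Set.Ico 0 R) t)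
    (hcont : ContinuousOn f' (Set.Ico 0 R))
    (h1a : f 0 = 0) (h1b : f' 0 = -1)
    (h2 : StrictMonoOn f' (Set.Ico 0 R))
    (ν : ℝ) (hν : ν = sSup {t | t ∈ Set.Ico 0 R ∧ f' t < 0})
    (nf : ℝ → ℝ) (hnf : ∀ t, nf t = t - f t / f' t) :
    (∀ t ∈ Set.Ico 0 ν, f' t ≠ 0) ∧ ∀ t ∈ Set.Ioo 0 ν, nf t < 0 := by
  set S : Set ℝ := {t | t ∈ Set.Ico 0 R ∧ f' t < 0} with hS
  have hSne : S.Nonempty := ⟨0, ⟨le_refl 0, hR⟩, by rw [h1b]; norm_num⟩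
  -- key : for t ∈ [0, ν), f' t < 0 and t < R
  have key : ∀ t, 0 ≤ t → t < ν → f' t < 0 ∧ t < R := by
    intro t ht0 htν
    obtain ⟨s, hsS, hts⟩ := exists_lt_of_lt_csSup hSne (hν ▸ htν)
    have hsR : s < R := hsS.1.2
    have htR : t < R := hts.trans hsR
    have : f' t < f' s := h2 ⟨ht0, htR⟩ hsS.1 hts
    exact ⟨this.trans hsS.2, htR⟩
  constructor
  · intro t ht
    exact (key t ht.1 ht.2).1.ne
  · intro t ht
    obtain ⟨hft, htR⟩ := key t (le_of_lt ht.1) ht.2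
    have ht0 : 0 < t := ht.1
    -- MVT on [0, t]
    have hsub : Set.Icc (0:ℝ) t ⊆ Set.Ico 0 R := fun x hx => ⟨hx.1, lt_of_le_of_lt hx.2 htR⟩
    have hcf : ContinuousOn f (Set.Icc 0 t) := fun x hx =>
      ((hderiv x (hsub hx)).continuousWithinAt).mono hsub
    have hd : ∀ x ∈ Set.Ioo (0:ℝ) t, HasDerivAt f (f' x) x := by
      intro x hx
      have hxmem : Set.Ico 0 R ∈ nhds x := by
        refine Filter.mem_of_superset (Ioo_mem_nhds hx.1 (hx.2.trans htR)) ?_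
        intro y hy; exact ⟨le_of_lt hy.1, hy.2⟩
      exact (hderiv x ⟨le_of_lt hx.1, hx.2.trans htR⟩).hasDerivAt hxmem
    obtain ⟨c, hc, hceq⟩ := exists_hasDerivAt_eq_slope f f' ht0 hcf hd
    rw [h1a] at hceq
    have hcflt : f' c < f' t := h2 ⟨le_of_lt hc.1, hc.2.trans htR⟩ ⟨le_of_lt ht0, htR⟩ hc.2
    -- f t / t = f' c < f' t, so f t < t * f' t
    have hft_lt : f t < t * f' t := by
      have : f t / t < f' t := by rw [hceq] at hcflt; simpa using hcflt
      calc f t = t * (f t / t) := by field_simp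
        _ < t * f' t := by exact mul_lt_mul_of_pos_left this ht0
    rw [hnf]
    have : t < f t / f' t := by
      rw [lt_div_iff_of_neg hft]
      linarith [hft_lt]
    linarith
end

section
/- Let R > 0 and let f : [0, R) → ℝ be continuously differentiable with f(0) = 0, f'(0) = −1, and f' strictly increasing, and let ν := sup{t ∈ [0, R) : f'(t) < 0} and n_f(t) := t − f(t)/f'(t) for t ∈ [0, ν). Then |n_f(t)|/t tends to 0 as t tends to 0 from the right. -/
theorem stmt_2 (R : ℝ) (hR : 0 < R) (f f' : ℝ → ℝ)
    (hderiv : ∀ t ∈ Set.Ico 0 R, HasDerivWithinAt f (f' t) (Set.Ico 0 R) t)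
    (hcont : ContinuousOn f' (Set.Ico 0 R))
    (h1a : f 0 = 0) (h1b : f' 0 = -1)
    (h2 : StrictMonoOn f' (Set.Ico 0 R))
    (ν : ℝ) (hν : ν = sSup {t | t ∈ Set.Ico 0 R ∧ f' t < 0})
    (nf : ℝ → ℝ) (hnf : ∀ t, nf t = t - f t / f' t) :
    Filter.Tendsto (fun t => |nf t| / t) (nhdsWithin 0 (Set.Ioi 0)) (nhds 0) := by
  have h0mem : (0:ℝ) ∈ Set.Ico 0 R := ⟨le_refl 0, hR⟩
  have hOoo : nhdsWithin (0:ℝ) (Set.Ioi 0) = nhdsWithin 0 (Set.Ioo 0 R) :=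
    (nhdsWithin_Ioo_eq_nhdsGT hR).symm
  have hsub : Set.Ioo (0:ℝ) R ⊆ Set.Ico 0 R \ {0} := by
    intro x hx
    exact ⟨⟨hx.1.le, hx.2⟩, ne_of_gt hx.1⟩
  have hsub' : Set.Ioo (0:ℝ) R ⊆ Set.Ico 0 R := fun x hx => ⟨hx.1.le, hx.2⟩
  -- slope limit
  have hA : Filter.Tendsto (fun t => f t / t) (nhdsWithin 0 (Set.Ioi 0)) (nhds (-1)) := by
    have := (hasDerivWithinAt_iff_tendsto_slope.mp (hderiv 0 h0mem))
    rw [h1b] at this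
    have h2' : Filter.Tendsto (slope f 0) (nhdsWithin 0 (Set.Ioo 0 R)) (nhds (-1)) :=
      this.mono_left (nhdsWithin_mono _ hsub)
    rw [hOoo]
    refine h2'.congr' ?_
    filter_upwards [self_mem_nhdsWithin] with t ht
    simp [slope, h1a, div_eq_inv_mul]
  -- continuity limit
  have hB : Filter.Tendsto f' (nhdsWithin 0 (Set.Ioi 0)) (nhds (-1)) := by
    have := (hcont 0 h0mem)
    rw [ContinuousWithinAt, h1b] at this
    rw [hOoo]
    exact this.mono_left (nhdsWithin_mono _ hsub')
  have hC : Filter.Tendsto (fun t => |1 - (f t / t) / f' t|) (nhdsWithin 0 (Set.Ioi 0))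
      (nhds 0) := by
    have : Filter.Tendsto (fun t => 1 - (f t / t) / f' t) (nhdsWithin 0 (Set.Ioi 0))
        (nhds (1 - (-1) / (-1))) := (tendsto_const_nhds.sub (hA.div hB (by norm_num)))
    norm_num at this
    simpa using this.abs
  refine hC.congr' ?_
  filter_upwards [self_mem_nhdsWithin] with t ht
  have ht0 : (0:ℝ) < t := ht
  have heq : nf t / t = 1 - (f t / t) / f' t := by
    rw [hnf t, sub_div, div_self ht0.ne', div_div, div_div, mul_comm]
  have habs : |nf t| / t = |nf t / t| := by rw [abs_div, abs_of_pos ht0]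
  rw [habs, heq]
end

section
/- Let R > 0 and let f : [0, R) → ℝ be continuously differentiable with f(0) = 0, f'(0) = −1, and f' strictly increasing; let ν := sup{t ∈ [0, R) : f'(t) < 0} and n_f(t) := t − f(t)/f'(t). Let constants ϑ, ω₁, ω₂, λ satisfy 0 ≤ ϑ < 1, 0 ≤ ω₂ < ω₁, ω₁ϑ + ω₂ < 1, and 0 ≤ λ < (1 − ω₂ − ω₁ϑ)/(ω₁(1+ϑ)). Define ρ := sup{δ ∈ (0, ν) : ω₁(1+ϑ)(1+λ)(f(t)/(t f'(t)) − 1) + ω₁[(1+ϑ)λ + ϑ] + ω₂ < 1 for all t ∈ (0, δ)}. Then ρ > 0 and, for every t ∈ (0, ρ), 0 < ω₁(1+ϑ)(1+λ)|n_f(t)| + (ω₁[(1+ϑ)λ + ϑ] + ω₂) t < t. -/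
theorem stmt_3 (R : ℝ) (hR : 0 < R) (f f' : ℝ → ℝ)
    (hderiv : ∀ t ∈ Set.Ico 0 R, HasDerivWithinAt f (f' t) (Set.Ico 0 R) t)
    (hcont : ContinuousOn f' (Set.Ico 0 R))
    (h1a : f 0 = 0) (h1b : f' 0 = -1)
    (h2 : StrictMonoOn f' (Set.Ico 0 R))
    (ν : ℝ) (hν : ν = sSup {t | t ∈ Set.Ico 0 R ∧ f' t < 0})
    (nf : ℝ → ℝ) (hnf : ∀ t, nf t = t - f t / f' t)
    (ϑ ω₁ ω₂ lam : ℝ)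
    (hϑ0 : 0 ≤ ϑ) (hϑ1 : ϑ < 1) (hω₂0 : 0 ≤ ω₂) (hω₁₂ : ω₂ < ω₁)
    (hωϑ : ω₁ * ϑ + ω₂ < 1)
    (hlam0 : 0 ≤ lam) (hlam : lam < (1 - ω₂ - ω₁ * ϑ) / (ω₁ * (1 + ϑ)))
    (ρ : ℝ)
    (hρ : ρ = sSup {δ | δ ∈ Set.Ioo 0 ν ∧ ∀ t ∈ Set.Ioo 0 δ,
      ω₁ * (1 + ϑ) * (1 + lam) * (f t / (t * f' t) - 1)
        + ω₁ * ((1 + ϑ) * lam + ϑ) + ω₂ < 1}) :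
    0 < ρ ∧ ∀ t ∈ Set.Ioo 0 ρ,
      0 < ω₁ * (1 + ϑ) * (1 + lam) * |nf t| + (ω₁ * ((1 + ϑ) * lam + ϑ) + ω₂) * t ∧
      ω₁ * (1 + ϑ) * (1 + lam) * |nf t| + (ω₁ * ((1 + ϑ) * lam + ϑ) + ω₂) * t < t := by
  have hω₁ : 0 < ω₁ := hω₂0.trans_lt hω₁₂
  have hϑ1' : (0:ℝ) < 1 + ϑ := by linarith
  have hlam1 : (0:ℝ) < 1 + lam := by linarith
  have hK : 0 < ω₁ * (1 + ϑ) * (1 + lam) := mul_pos (mul_pos hω₁ hϑ1') hlam1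
  have hC0 : 0 ≤ ω₁ * ((1 + ϑ) * lam + ϑ) + ω₂ := by
    have h := mul_nonneg hω₁.le (add_nonneg (mul_nonneg hϑ1'.le hlam0) hϑ0)
    linarith
  have hC1 : ω₁ * ((1 + ϑ) * lam + ϑ) + ω₂ < 1 := by
    have h := (lt_div_iff₀ (mul_pos hω₁ hϑ1')).mp hlam
    nlinarith
  -- the set defining ν
  have hS0 : (0:ℝ) ∈ {t | t ∈ Set.Ico 0 R ∧ f' t < 0} := ⟨⟨le_rfl, hR⟩, by rw [h1b]; norm_num⟩
  have hSbdd : BddAbove {t | t ∈ Set.Ico 0 R ∧ f' t < 0} := ⟨R, fun t ht => ht.1.2.le⟩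
  -- ν > 0
  have hν0 : 0 < ν := by
    have hevent : ∀ᶠ x in nhdsWithin 0 (Set.Ico 0 R), f' x < 0 := by
      have h : Filter.Tendsto f' (nhdsWithin 0 (Set.Ico 0 R)) (nhds (-1)) := by
        have := hcont 0 ⟨le_rfl, hR⟩
        rwa [ContinuousWithinAt, h1b] at this
      exact h.eventually_lt_const (by norm_num)
    obtain ⟨ε, hε, hball⟩ := Metric.mem_nhdsWithin_iff.mp hevent
    set t0 := min (ε/2) (R/2) with ht0def
    have ht00 : 0 < t0 := lt_min (by linarith) (by linarith)
    have ht0ε : t0 < ε := lt_of_le_of_lt (min_le_left _ _) (by linarith)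
    have ht0R : t0 < R := lt_of_le_of_lt (min_le_right _ _) (by linarith)
    have ht0mem : t0 ∈ {t | t ∈ Set.Ico 0 R ∧ f' t < 0} := by
      refine ⟨⟨ht00.le, ht0R⟩, hball ⟨?_, ⟨ht00.le, ht0R⟩⟩⟩
      simp [Real.dist_eq, abs_of_pos ht00, ht0ε]
    have := le_csSup hSbdd ht0mem
    rw [hν]
    linarith
  -- f' is negative on (0, ν)
  have hf'neg : ∀ t, 0 < t → t < ν → t < R ∧ f' t < 0 := by
    intro t ht0 htν
    rw [hν] at htν
    obtain ⟨s, hs, hts⟩ := exists_lt_of_lt_csSup ⟨0, hS0⟩ htν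
    have htR : t < R := hts.trans hs.1.2
    exact ⟨htR, lt_trans (h2 ⟨ht0.le, htR⟩ hs.1 hts) hs.2⟩
  -- mean value theorem consequence
  have hfc : ContinuousOn f (Set.Ico 0 R) := fun x hx => (hderiv x hx).continuousWithinAt
  have hmvt : ∀ t, 0 < t → t < R → f t < t * f' t := by
    intro t ht0 htR
    have hda : ∀ x ∈ Set.Ioo 0 t, HasDerivAt f (f' x) x := by
      intro x hx
      have hx' : x ∈ Set.Ico 0 R := ⟨hx.1.le, hx.2.trans htR⟩
      exact (hderiv x hx').hasDerivAt
        (Filter.mem_of_superset (Ioo_mem_nhds hx.1 (hx.2.trans htR)) Set.Ioo_subset_Ico_self)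
    obtain ⟨c, hc, hceq⟩ := exists_hasDerivAt_eq_slope f f' ht0
      (hfc.mono (fun x hx => ⟨hx.1, hx.2.trans_lt htR⟩)) hda
    rw [h1a, sub_zero, sub_zero] at hceq
    have hlt : f' c < f' t := h2 ⟨hc.1.le, hc.2.trans htR⟩ ⟨ht0.le, htR⟩ hc.2
    rw [hceq] at hlt
    have := (div_lt_iff₀ ht0).mp hlt
    linarith
  -- the limit of f t / (t * f' t) as t → 0+
  have hslope : Filter.Tendsto (fun t => f t / t) (nhdsWithin 0 (Set.Ioi (0:ℝ))) (nhds (-1)) := by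
    have h := hasDerivWithinAt_iff_tendsto_slope.mp (hderiv 0 ⟨le_rfl, hR⟩)
    rw [h1b] at h
    have heq : Set.Ico (0:ℝ) R \ {0} = Set.Ioo 0 R := Set.Ico_diff_left
    rw [heq, nhdsWithin_Ioo_eq_nhdsGT hR] at h
    refine h.congr fun t => ?_
    simp [slope_fun_def, h1a, div_eq_inv_mul]
  have hf'lim : Filter.Tendsto f' (nhdsWithin 0 (Set.Ioi (0:ℝ))) (nhds (-1)) := by
    have h : Filter.Tendsto f' (nhdsWithin 0 (Set.Ico 0 R)) (nhds (-1)) := by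
      have := hcont 0 ⟨le_rfl, hR⟩
      rwa [ContinuousWithinAt, h1b] at this
    refine h.mono_left ?_
    rw [← nhdsWithin_Ioo_eq_nhdsGT hR]
    exact nhdsWithin_mono 0 Set.Ioo_subset_Ico_self
  have hφ : Filter.Tendsto (fun t => f t / (t * f' t)) (nhdsWithin 0 (Set.Ioi (0:ℝ))) (nhds 1) := by
    have h := hslope.div hf'lim (by norm_num)
    have hval : ((-1:ℝ)) / (-1) = 1 := by norm_num
    rw [hval] at h
    exact h.congr fun t => by simp [Pi.div_apply, div_div]
  -- eventual inequality near 0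
  have hg : ∀ᶠ t in nhdsWithin 0 (Set.Ioi (0:ℝ)),
      ω₁ * (1 + ϑ) * (1 + lam) * (f t / (t * f' t) - 1)
        + ω₁ * ((1 + ϑ) * lam + ϑ) + ω₂ < 1 := by
    have h : Filter.Tendsto (fun t => ω₁ * (1 + ϑ) * (1 + lam) * (f t / (t * f' t) - 1)
        + ω₁ * ((1 + ϑ) * lam + ϑ) + ω₂) (nhdsWithin 0 (Set.Ioi (0:ℝ)))
        (nhds (ω₁ * ((1 + ϑ) * lam + ϑ) + ω₂)) := by
      have h' := (((hφ.sub_const 1).const_mul (ω₁ * (1 + ϑ) * (1 + lam))).add_const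
        (ω₁ * ((1 + ϑ) * lam + ϑ))).add_const ω₂
      simpa [add_assoc] using h'
    exact h.eventually_lt_const hC1
  obtain ⟨ε, hε, hsub⟩ := mem_nhdsGT_iff_exists_Ioo_subset.mp hg
  have hε0 : 0 < ε := hε
  -- δ witness in the set defining ρ
  set T := {δ | δ ∈ Set.Ioo 0 ν ∧ ∀ t ∈ Set.Ioo 0 δ,
      ω₁ * (1 + ϑ) * (1 + lam) * (f t / (t * f' t) - 1)
        + ω₁ * ((1 + ϑ) * lam + ϑ) + ω₂ < 1} with hT
  have hδT : min ε (ν/2) ∈ T := by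
    constructor
    · exact ⟨lt_min hε0 (by linarith), lt_of_le_of_lt (min_le_right _ _) (by linarith)⟩
    · intro t ht
      exact hsub ⟨ht.1, lt_of_lt_of_le ht.2 (min_le_left _ _)⟩
  have hTbdd : BddAbove T := ⟨ν, fun δ hδ => hδ.1.2.le⟩
  have hρδ : min ε (ν/2) ≤ ρ := by rw [hρ]; exact le_csSup hTbdd hδT
  have hρ0 : 0 < ρ := lt_of_lt_of_le (lt_min hε0 (by linarith)) hρδ
  refine ⟨hρ0, ?_⟩
  intro t ht
  have htρ : t < sSup T := by rw [← hρ]; exact ht.2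
  obtain ⟨δ', hδ', htδ'⟩ := exists_lt_of_lt_csSup ⟨_, hδT⟩ htρ
  have hg_t : ω₁ * (1 + ϑ) * (1 + lam) * (f t / (t * f' t) - 1)
      + ω₁ * ((1 + ϑ) * lam + ϑ) + ω₂ < 1 := hδ'.2 t ⟨ht.1, htδ'⟩
  have htν : t < ν := htδ'.trans hδ'.1.2
  obtain ⟨htR, hf't⟩ := hf'neg t ht.1 htν
  have hft : f t < t * f' t := hmvt t ht.1 htR
  have hf'ne : f' t ≠ 0 := ne_of_lt hf't
  have htne : t ≠ 0 := ne_of_gt ht.1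
  have hdivgt : t < f t / f' t := (lt_div_iff_of_neg hf't).mpr hft
  have hnfneg : nf t < 0 := by rw [hnf t]; linarith
  have habs : |nf t| = t * (f t / (t * f' t) - 1) := by
    rw [hnf t, abs_of_neg (by linarith : t - f t / f' t < 0)]
    field_simp
    ring
  have habspos : 0 < |nf t| := abs_pos.mpr (ne_of_lt hnfneg)
  constructor
  · have h1 : 0 < ω₁ * (1 + ϑ) * (1 + lam) * |nf t| := mul_pos hK habspos
    have h2' : 0 ≤ (ω₁ * ((1 + ϑ) * lam + ϑ) + ω₂) * t := mul_nonneg hC0 ht.1.le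
    linarith
  · have hmul := mul_lt_mul_of_pos_left hg_t ht.1
    calc ω₁ * (1 + ϑ) * (1 + lam) * |nf t| + (ω₁ * ((1 + ϑ) * lam + ϑ) + ω₂) * t
        = t * (ω₁ * (1 + ϑ) * (1 + lam) * (f t / (t * f' t) - 1)
            + ω₁ * ((1 + ϑ) * lam + ϑ) + ω₂) := by rw [habs]; ring
      _ < t * 1 := hmul
      _ = t := mul_one t
end

section
/- Let Ω ⊂ ℝⁿ be open, F : Ω → ℝⁿ continuously differentiable, x* ∈ Ω with F(x*) = 0 and F'(x*) invertible. Let R > 0, κ := sup{t ∈ [0, R) : B(x*, t) ⊂ Ω}, and suppose f : [0, R) → ℝ is continuously differentiable with f(0) = 0, f'(0) = −1, f' strictly increasing, and for all τ ∈ [0, 1] and all x ∈ B(x*, κ): ‖F'(x*)⁻¹[F'(x) − F'(x* + τ(x − x*))]‖ ≤ f'(‖x − x*‖) − f'(τ‖x − x*‖). Let ν := sup{t ∈ [0, R) : f'(t) < 0}. Then for every x ∈ B(x*, min{κ, ν}), the linear map F'(x) is invertible and ‖F'(x)⁻¹ F'(x*)‖ ≤ 1/|f'(‖x − x*‖)|.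 -/
theorem stmt_4 (n : ℕ) (Ω : Set (EuclideanSpace ℝ (Fin n))) (hΩ : IsOpen Ω)
    (F : EuclideanSpace ℝ (Fin n) → EuclideanSpace ℝ (Fin n))
    (F' : EuclideanSpace ℝ (Fin n) →
      (EuclideanSpace ℝ (Fin n) →L[ℝ] EuclideanSpace ℝ (Fin n)))
    (hFderiv : ∀ x ∈ Ω, HasFDerivAt F (F' x) x)
    (hFcont : ContinuousOn F' Ω)
    (xs : EuclideanSpace ℝ (Fin n)) (hxsΩ : xs ∈ Ω) (hFxs : F xs = 0)
    (hinv : IsUnit (F' xs))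
    (R : ℝ) (hR : 0 < R)
    (κ : ℝ) (hκ : κ = sSup {t | t ∈ Set.Ico 0 R ∧ Metric.ball xs t ⊆ Ω})
    (f f' : ℝ → ℝ)
    (hderiv : ∀ t ∈ Set.Ico 0 R, HasDerivWithinAt f (f' t) (Set.Ico 0 R) t)
    (hcont : ContinuousOn f' (Set.Ico 0 R))
    (h1a : f 0 = 0) (h1b : f' 0 = -1)
    (h2 : StrictMonoOn f' (Set.Ico 0 R))
    (hmaj : ∀ τ ∈ Set.Icc (0:ℝ) 1, ∀ x ∈ Metric.ball xs κ,
      ‖(Ring.inverse (F' xs)).comp (F' x - F' (xs + τ • (x - xs)))‖ ≤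
        f' ‖x - xs‖ - f' (τ * ‖x - xs‖))
    (ν : ℝ) (hν : ν = sSup {t | t ∈ Set.Ico 0 R ∧ f' t < 0}) :
    ∀ x ∈ Metric.ball xs (min κ ν),
      IsUnit (F' x) ∧ ‖(Ring.inverse (F' x)).comp (F' xs)‖ ≤ 1 / |f' ‖x - xs‖| := by
  intro x hx
  rw [Metric.mem_ball, dist_eq_norm] at hx
  set tn : ℝ := ‖x - xs‖ with htn
  have htn0 : 0 ≤ tn := norm_nonneg _
  have htκ : tn < κ := lt_of_lt_of_le hx (min_le_left _ _)
  have htν : tn < ν := lt_of_lt_of_le hx (min_le_right _ _)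
  -- f' tn < 0
  have hS : ∃ s ∈ {t | t ∈ Set.Ico 0 R ∧ f' t < 0}, tn < s := by
    apply exists_lt_of_lt_csSup
    · exact ⟨0, ⟨le_refl 0, hR⟩, by rw [h1b]; norm_num⟩
    · rwa [← hν]
  obtain ⟨s, ⟨hsIco, hsneg⟩, hts⟩ := hS
  have htIco : tn ∈ Set.Ico 0 R := ⟨htn0, lt_trans hts hsIco.2⟩
  have hftn : f' tn < 0 := lt_trans (h2 htIco hsIco hts) hsneg
  -- apply the majorant condition with τ = 0
  have hxball : x ∈ Metric.ball xs κ := by rwa [Metric.mem_ball, dist_eq_norm]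
  have hmaj0 := hmaj 0 (by norm_num) x hxball
  simp only [zero_smul, add_zero, zero_mul, h1b] at hmaj0
  -- set up the algebra
  set A := F' xs with hA
  set B := F' x with hB
  set E : EuclideanSpace ℝ (Fin n) →L[ℝ] EuclideanSpace ℝ (Fin n) :=
    Ring.inverse A * (A - B) with hE
  have hEnorm : ‖E‖ ≤ f' tn + 1 := by
    have h1 : E = -(Ring.inverse A * (B - A)) := by rw [hE, mul_sub, mul_sub]; abel
    rw [h1, norm_neg]
    have h2' : Ring.inverse A * (B - A) = (Ring.inverse A).comp (B - A) := rfl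
    rw [h2']
    calc ‖(Ring.inverse A).comp (B - A)‖ ≤ f' tn - -1 := hmaj0
      _ = f' tn + 1 := by ring
  have hE1 : ‖E‖ < 1 := lt_of_le_of_lt hEnorm (by linarith)
  -- B = A * (1 - E)
  have hBfac : B = A * (1 - E) := by
    rw [hE, mul_sub, mul_one, ← mul_assoc, Ring.mul_inverse_cancel A hinv, one_mul,
      sub_sub_cancel]
  obtain ⟨uA, huA⟩ := hinv
  set u1 : (EuclideanSpace ℝ (Fin n) →L[ℝ] EuclideanSpace ℝ (Fin n))ˣ :=
    Units.oneSub E hE1 with hu1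
  have hBu : B = ↑(uA * u1) := by rw [Units.val_mul, huA]; exact hBfac
  have hBunit : IsUnit B := ⟨uA * u1, hBu.symm⟩
  refine ⟨hBunit, ?_⟩
  -- compute Ring.inverse B * A
  have hcomp : (Ring.inverse B).comp A = Ring.inverse B * A := rfl
  have hkey : Ring.inverse B * A = ↑u1⁻¹ := by
    rw [hBu, Ring.inverse_unit, mul_inv_rev, Units.val_mul, ← huA, mul_assoc,
      ← Units.val_mul, inv_mul_cancel, Units.val_one, mul_one]
  rw [hcomp, hkey]
  -- norm bound via geometric series
  have hgeom : (↑u1⁻¹ : EuclideanSpace ℝ (Fin n) →L[ℝ] EuclideanSpace ℝ (Fin n)) =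
      ∑' k : ℕ, E ^ k := rfl
  have hbound : ‖(↑u1⁻¹ : EuclideanSpace ℝ (Fin n) →L[ℝ] EuclideanSpace ℝ (Fin n))‖ ≤
      (1 - ‖E‖)⁻¹ := by
    rw [hgeom]
    have h := tsum_geometric_le_of_norm_lt_one E hE1
    have hone : ‖(1 : EuclideanSpace ℝ (Fin n) →L[ℝ] EuclideanSpace ℝ (Fin n))‖ ≤ 1 :=
      ContinuousLinearMap.norm_id_le
    linarith
  have habs : |f' tn| = -(f' tn) := abs_of_neg hftn
  have hpos : 0 < -(f' tn) := by linarith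
  have h1E : -(f' tn) ≤ 1 - ‖E‖ := by linarith
  calc ‖(↑u1⁻¹ : EuclideanSpace ℝ (Fin n) →L[ℝ] EuclideanSpace ℝ (Fin n))‖
      ≤ (1 - ‖E‖)⁻¹ := hbound
    _ ≤ (-(f' tn))⁻¹ := by
        apply inv_anti₀ hpos h1E
    _ = 1 / |f' tn| := by rw [habs, one_div]
end

section
/- Let Ω ⊂ ℝⁿ be open, F : Ω → ℝⁿ continuously differentiable, x* ∈ Ω with F(x*) = 0 and F'(x*) invertible. Let R > 0, κ := sup{t ∈ [0, R) : B(x*, t) ⊂ Ω}, and suppose f : [0, R) → ℝ is continuously differentiable with f(0) = 0, f'(0) = −1, f' strictly increasing, and for all τ ∈ [0, 1] and all x ∈ B(x*, κ): ‖F'(x*)⁻¹[F'(x) − F'(x* + τ(x − x*))]‖ ≤ f'(‖x − x*‖) − f'(τ‖x − x*‖). Let ν := sup{t ∈ [0, R) : f'(t) < 0}. Then for every x ∈ B(x*, min{κ, ν}), F'(x) is invertible and ‖F'(x)⁻¹ F(x)‖ ≤ f(‖x − x*‖)/f'(‖x − x*‖). -/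
lemma stmt_5_aux (a b c : ℝ) (h : b ≠ 0) : a + 1 / (-b) * (a * b - c) = c / b := by
  have h1 : (a * b - c) * b / -b = -(a * b - c) := by
    rw [mul_div_assoc, div_neg, div_self h]
    ring
  rw [eq_div_iff h, add_mul, div_mul_eq_mul_div, one_mul, div_mul_eq_mul_div, h1]
  ring

theorem stmt_5 (n : ℕ) (Ω : Set (EuclideanSpace ℝ (Fin n))) (hΩ : IsOpen Ω)
    (F : EuclideanSpace ℝ (Fin n) → EuclideanSpace ℝ (Fin n))
    (F' : EuclideanSpace ℝ (Fin n) →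
      (EuclideanSpace ℝ (Fin n) →L[ℝ] EuclideanSpace ℝ (Fin n)))
    (hFderiv : ∀ x ∈ Ω, HasFDerivAt F (F' x) x)
    (hFcont : ContinuousOn F' Ω)
    (xs : EuclideanSpace ℝ (Fin n)) (hxsΩ : xs ∈ Ω) (hFxs : F xs = 0)
    (hinv : IsUnit (F' xs))
    (R : ℝ) (hR : 0 < R)
    (κ : ℝ) (hκ : κ = sSup {t | t ∈ Set.Ico 0 R ∧ Metric.ball xs t ⊆ Ω})
    (f f' : ℝ → ℝ)
    (hderiv : ∀ t ∈ Set.Ico 0 R, HasDerivWithinAt f (f' t) (Set.Ico 0 R) t)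
    (hcont : ContinuousOn f' (Set.Ico 0 R))
    (h1a : f 0 = 0) (h1b : f' 0 = -1)
    (h2 : StrictMonoOn f' (Set.Ico 0 R))
    (hmaj : ∀ τ ∈ Set.Icc (0:ℝ) 1, ∀ x ∈ Metric.ball xs κ,
      ‖(Ring.inverse (F' xs)).comp (F' x - F' (xs + τ • (x - xs)))‖ ≤
        f' ‖x - xs‖ - f' (τ * ‖x - xs‖))
    (ν : ℝ) (hν : ν = sSup {t | t ∈ Set.Ico 0 R ∧ f' t < 0}) :
    ∀ x ∈ Metric.ball xs (min κ ν),
      IsUnit (F' x) ∧ ‖(Ring.inverse (F' x)) (F x)‖ ≤ f ‖x - xs‖ / f' ‖x - xs‖ := by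
  intro x hx
  set v : EuclideanSpace ℝ (Fin n) := x - xs with hv
  set t : ℝ := ‖x - xs‖ with ht
  have ht0 : (0:ℝ) ≤ t := norm_nonneg _
  have hdist : dist x xs = t := by rw [dist_eq_norm]
  have hxball : t < min κ ν := by rwa [Metric.mem_ball, hdist] at hx
  have htκ : t < κ := lt_of_lt_of_le hxball (min_le_left _ _)
  have htν : t < ν := lt_of_lt_of_le hxball (min_le_right _ _)
  -- facts about ν
  have hSν_ne : ({s | s ∈ Set.Ico 0 R ∧ f' s < 0}).Nonempty := by
    refine ⟨0, ⟨⟨le_rfl, hR⟩, by rw [h1b]; norm_num⟩⟩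
  have hνR : ν ≤ R := by
    rw [hν]; exact csSup_le hSν_ne (fun s hs => hs.1.2.le)
  have htR : t < R := lt_of_lt_of_le htν hνR
  have htIco : t ∈ Set.Ico 0 R := ⟨ht0, htR⟩
  have hf't_neg : f' t < 0 := by
    obtain ⟨s, hs, hts⟩ := exists_lt_of_lt_csSup hSν_ne (hν ▸ htν)
    exact lt_trans (h2 htIco hs.1 hts) hs.2
  have hf't_ne : f' t ≠ 0 := ne_of_lt hf't_neg
  -- facts about κ : get a radius r with t < r and ball ⊆ Ω
  have hSκ_ne : ({s | s ∈ Set.Ico 0 R ∧ Metric.ball xs s ⊆ Ω}).Nonempty := by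
    refine ⟨0, ⟨⟨le_rfl, hR⟩, by simp⟩⟩
  obtain ⟨r, hr, htr⟩ := exists_lt_of_lt_csSup hSκ_ne (hκ ▸ htκ)
  have hxκ : x ∈ Metric.ball xs κ := by rw [Metric.mem_ball, hdist]; exact htκ
  -- the segment lies in Ω
  have hseg : ∀ τ ∈ Set.Icc (0:ℝ) 1, xs + τ • v ∈ Ω := by
    intro τ hτ
    apply hr.2
    rw [Metric.mem_ball, dist_eq_norm]
    have : xs + τ • v - xs = τ • v := by abel
    rw [this, norm_smul]
    calc ‖τ‖ * ‖v‖ = τ * t := by rw [Real.norm_of_nonneg hτ.1]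
    _ ≤ 1 * t := mul_le_mul_of_nonneg_right hτ.2 ht0
    _ = t := one_mul t
    _ < r := htr
  -- notation for the inverse of F' xs
  set Ai : EuclideanSpace ℝ (Fin n) →L[ℝ] EuclideanSpace ℝ (Fin n) :=
    Ring.inverse (F' xs) with hAi
  -- bound on the perturbation  T = 1 - Ai * F' x
  have hmaj0 := hmaj 0 ⟨le_rfl, zero_le_one⟩ x hxκ
  rw [zero_smul, add_zero, zero_mul, h1b, sub_neg_eq_add] at hmaj0
  have hTid : Ai.comp (F' x - F' xs) = Ai * F' x - 1 := by
    rw [ContinuousLinearMap.comp_sub, ← ContinuousLinearMap.mul_def,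
      ← ContinuousLinearMap.mul_def, hAi, Ring.inverse_mul_cancel _ hinv]
  have hT : ‖(1 : EuclideanSpace ℝ (Fin n) →L[ℝ] EuclideanSpace ℝ (Fin n))
      - Ai * F' x‖ ≤ f' t + 1 := by
    rw [norm_sub_rev, ← hTid]; exact hmaj0
  have hTlt : ‖(1 : EuclideanSpace ℝ (Fin n) →L[ℝ] EuclideanSpace ℝ (Fin n))
      - Ai * F' x‖ < 1 := lt_of_le_of_lt hT (by linarith)
  have hEunit : IsUnit (Ai * F' x) := by
    have := isUnit_one_sub_of_norm_lt_one hTlt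
    simpa using this
  have hFxfact : F' xs * (Ai * F' x) = F' x := by
    rw [← mul_assoc, hAi, Ring.mul_inverse_cancel _ hinv, one_mul]
  have hFxunit : IsUnit (F' x) := hFxfact ▸ hinv.mul hEunit
  refine ⟨hFxunit, ?_⟩
  -- units and inverses
  set uA := hinv.unit with huA
  set uE := hEunit.unit with huE
  have huAv : (uA : EuclideanSpace ℝ (Fin n) →L[ℝ] EuclideanSpace ℝ (Fin n)) = F' xs :=
    hinv.unit_spec
  have huEv : (uE : EuclideanSpace ℝ (Fin n) →L[ℝ] EuclideanSpace ℝ (Fin n)) = Ai * F' x :=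
    hEunit.unit_spec
  set Ei : EuclideanSpace ℝ (Fin n) →L[ℝ] EuclideanSpace ℝ (Fin n) := ↑uE⁻¹ with hEi
  have hAieq : Ai = ↑uA⁻¹ := by rw [hAi, ← huAv, Ring.inverse_unit]
  have hinvFx : Ring.inverse (F' x) = Ei * Ai := by
    have : F' x = ↑(uA * uE) := by rw [Units.val_mul, huAv, huEv, hFxfact]
    rw [this, Ring.inverse_unit, mul_inv_rev, Units.val_mul, hAieq]
  -- norm bound on Ei
  have hEiE : Ei * (Ai * F' x) = 1 := by rw [← huEv, hEi, Units.inv_mul]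
  have hEi_norm : ‖Ei‖ ≤ 1 / (-f' t) := by
    have hid : Ei = 1 + Ei * (1 - Ai * F' x) := by
      rw [mul_sub, hEiE, mul_one]; abel
    have h1 : ‖Ei‖ ≤ 1 + ‖Ei‖ * ‖(1 : EuclideanSpace ℝ (Fin n) →L[ℝ]
        EuclideanSpace ℝ (Fin n)) - Ai * F' x‖ := by
      calc ‖Ei‖ = ‖(1 : EuclideanSpace ℝ (Fin n) →L[ℝ] EuclideanSpace ℝ (Fin n))
          + Ei * (1 - Ai * F' x)‖ := by rw [← hid]
      _ ≤ ‖(1 : EuclideanSpace ℝ (Fin n) →L[ℝ] EuclideanSpace ℝ (Fin n))‖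
          + ‖Ei * (1 - Ai * F' x)‖ := norm_add_le _ _
      _ ≤ 1 + ‖Ei‖ * ‖(1 : EuclideanSpace ℝ (Fin n) →L[ℝ]
          EuclideanSpace ℝ (Fin n)) - Ai * F' x‖ := by
        gcongr
        · exact ContinuousLinearMap.norm_id_le
        · exact norm_mul_le _ _
    rw [le_div_iff₀ (by linarith : (0:ℝ) < -f' t)]
    nlinarith [norm_nonneg Ei, norm_nonneg ((1 : EuclideanSpace ℝ (Fin n) →L[ℝ]
      EuclideanSpace ℝ (Fin n)) - Ai * F' x)]
  -- the auxiliary vector-valued function along the segment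
  set g : ℝ → EuclideanSpace ℝ (Fin n) :=
    fun τ => Ai (F (xs + τ • v)) - τ • (Ai (F' x v)) with hg
  have hg0 : g 0 = 0 := by simp [hg, hFxs]
  have hgderiv : ∀ τ ∈ Set.Icc (0:ℝ) 1,
      HasDerivAt g (Ai (F' (xs + τ • v) v) - Ai (F' x v)) τ := by
    intro τ hτ
    have hγ : HasDerivAt (fun τ : ℝ => xs + τ • v) v τ := by
      simpa using (((hasDerivAt_id τ).smul_const v).const_add xs)
    have hFγ : HasDerivAt (fun τ : ℝ => F (xs + τ • v)) (F' (xs + τ • v) v) τ :=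
      (hFderiv _ (hseg τ hτ)).comp_hasDerivAt τ hγ
    have hAiFγ : HasDerivAt (fun τ : ℝ => Ai (F (xs + τ • v)))
        (Ai (F' (xs + τ • v) v)) τ :=
      (Ai.hasFDerivAt.comp_hasDerivAt τ hFγ)
    have hlin : HasDerivAt (fun τ : ℝ => τ • (Ai (F' x v))) (Ai (F' x v)) τ := by
      simpa using ((hasDerivAt_id τ).smul_const (Ai (F' x v)))
    exact hAiFγ.sub hlin
  have hgcont : ContinuousOn g (Set.Icc 0 1) := fun τ hτ =>
    (hgderiv τ hτ).continuousAt.continuousWithinAt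
  -- the scalar bound function
  set B : ℝ → ℝ := fun τ => τ * (t * f' t) - f (τ * t) with hB
  have hfmaps : Set.MapsTo (fun τ : ℝ => τ * t) (Set.Icc 0 1) (Set.Ico 0 R) := by
    intro τ hτ
    constructor
    · exact mul_nonneg hτ.1 ht0
    · calc τ * t ≤ 1 * t := mul_le_mul_of_nonneg_right hτ.2 ht0
      _ = t := one_mul t
      _ < R := htR
  have hfcontOn : ContinuousOn f (Set.Ico 0 R) := fun s hs =>
    (hderiv s hs).continuousWithinAt
  have hBcont : ContinuousOn B (Set.Icc 0 1) := by
    apply ContinuousOn.sub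
    · exact (continuous_id.mul continuous_const).continuousOn
    · exact hfcontOn.comp (continuous_id.mul continuous_const).continuousOn hfmaps
  have hBderiv : ∀ τ ∈ Set.Ico (0:ℝ) 1,
      HasDerivWithinAt B (t * f' t - f' (τ * t) * t) (Set.Ici τ) τ := by
    intro τ hτ
    have h1' : HasDerivWithinAt (fun τ : ℝ => τ * (t * f' t)) (t * f' t) (Set.Ici τ) τ := by
      simpa using (hasDerivAt_mul_const (t * f' t)).hasDerivWithinAt
    have hmul : HasDerivWithinAt (fun τ : ℝ => τ * t) t (Set.Icc 0 1) τ :=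
      (hasDerivAt_mul_const t).hasDerivWithinAt
    have h2' : HasDerivWithinAt (fun τ : ℝ => f (τ * t)) (f' (τ * t) * t) (Set.Icc 0 1) τ :=
      (hderiv (τ * t) (hfmaps ⟨hτ.1, hτ.2.le⟩)).comp τ hmul hfmaps
    have h2'' : HasDerivWithinAt (fun τ : ℝ => f (τ * t)) (f' (τ * t) * t) (Set.Ici τ) τ := by
      refine (h2'.mono (Set.Icc_subset_Icc hτ.1 le_rfl)).mono_of_mem_nhdsWithin ?_
      refine mem_nhdsWithin.2 ⟨Set.Iio 1, isOpen_Iio, hτ.2, fun y hy => ⟨hy.2, hy.1.le⟩⟩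
    exact h1'.sub h2''
  have hbound : ∀ τ ∈ Set.Ico (0:ℝ) 1,
      ‖Ai (F' (xs + τ • v) v) - Ai (F' x v)‖ ≤ t * f' t - f' (τ * t) * t := by
    intro τ hτ
    have hm := hmaj τ ⟨hτ.1, hτ.2.le⟩ x hxκ
    have heq : Ai (F' (xs + τ • v) v) - Ai (F' x v)
        = -((Ai.comp (F' x - F' (xs + τ • v))) v) := by
      simp [ContinuousLinearMap.comp_apply, ContinuousLinearMap.sub_apply, map_sub]
    rw [heq, norm_neg]
    calc ‖(Ai.comp (F' x - F' (xs + τ • v))) v‖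
        ≤ ‖Ai.comp (F' x - F' (xs + τ • v))‖ * ‖v‖ := ContinuousLinearMap.le_opNorm _ _
      _ ≤ (f' t - f' (τ * t)) * t := mul_le_mul_of_nonneg_right hm ht0
      _ = t * f' t - f' (τ * t) * t := by ring
  have hkey : ‖g 1‖ ≤ B 1 := by
    refine image_norm_le_of_norm_deriv_right_le_deriv_boundary' hgcont
      (fun τ hτ => ((hgderiv τ ⟨hτ.1, hτ.2.le⟩).hasDerivWithinAt)) ?_ hBcont hBderiv hbound
      (Set.right_mem_Icc.2 zero_le_one)
    rw [hg0, norm_zero, hB]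
    simp [h1a]
  have hgw : g 1 = Ai (F x) - Ai (F' x v) := by
    rw [hg]
    simp only [one_smul]
    have : xs + v = x := by rw [hv]; abel
    rw [this]
  have hwnorm : ‖Ai (F x) - Ai (F' x v)‖ ≤ t * f' t - f t := by
    have hB1 : B 1 = t * f' t - f t := by rw [hB]; simp
    rw [← hgw, ← hB1]; exact hkey
  -- final assembly
  have hsplit : (Ring.inverse (F' x)) (F x) = v + Ei (Ai (F x) - Ai (F' x v)) := by
    rw [hinvFx]
    have h1' : (Ei * Ai) (F x) = Ei (Ai (F x)) := rfl
    have h2' : Ei (Ai (F' x v)) = v := by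
      have := congrArg (fun (M : EuclideanSpace ℝ (Fin n) →L[ℝ]
        EuclideanSpace ℝ (Fin n)) => M v) hEiE
      simpa [ContinuousLinearMap.mul_apply] using this
    rw [h1', map_sub, h2']
    abel
  rw [hsplit]
  calc ‖v + Ei (Ai (F x) - Ai (F' x v))‖
      ≤ ‖v‖ + ‖Ei (Ai (F x) - Ai (F' x v))‖ := norm_add_le _ _
    _ ≤ t + ‖Ei‖ * ‖Ai (F x) - Ai (F' x v)‖ :=
        add_le_add le_rfl (ContinuousLinearMap.le_opNorm _ _)
    _ ≤ t + (1 / (-f' t)) * (t * f' t - f t) :=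
        add_le_add le_rfl (mul_le_mul hEi_norm hwnorm (norm_nonneg _)
          (le_of_lt (div_pos one_pos (by linarith))))
    _ = f t / f' t := stmt_5_aux t (f' t) (f t) hf't_ne
end

section
/- Let Ω ⊂ ℝⁿ be open, F : Ω → ℝⁿ continuously differentiable, x* ∈ Ω with F(x*) = 0 and F'(x*) invertible. Let R > 0, κ := sup{t ∈ [0, R) : B(x*, t) ⊂ Ω}, and suppose f : [0, R) → ℝ is continuously differentiable with f(0) = 0, f'(0) = −1, f' strictly increasing, and for all τ ∈ [0, 1] and all x ∈ B(x*, κ): ‖F'(x*)⁻¹[F'(x) − F'(x* + τ(x − x*))]‖ ≤ f'(‖x − x*‖) − f'(τ‖x − x*‖). Let ν := sup{t ∈ [0, R) : f'(t) < 0}. Then for every x ∈ B(x*, min{κ, ν}): ‖F'(x*)⁻¹[F(x*) − F(x) − F'(x)(x* − x)]‖ ≤ f'(‖x − x*‖)‖x − x*‖ − f(‖x − x*‖). -/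
theorem stmt_6 (n : ℕ) (Ω : Set (EuclideanSpace ℝ (Fin n))) (hΩ : IsOpen Ω)
    (F : EuclideanSpace ℝ (Fin n) → EuclideanSpace ℝ (Fin n))
    (F' : EuclideanSpace ℝ (Fin n) →
      (EuclideanSpace ℝ (Fin n) →L[ℝ] EuclideanSpace ℝ (Fin n)))
    (hFderiv : ∀ x ∈ Ω, HasFDerivAt F (F' x) x)
    (hFcont : ContinuousOn F' Ω)
    (xs : EuclideanSpace ℝ (Fin n)) (hxsΩ : xs ∈ Ω) (hFxs : F xs = 0)
    (hinv : IsUnit (F' xs))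
    (R : ℝ) (hR : 0 < R)
    (κ : ℝ) (hκ : κ = sSup {t | t ∈ Set.Ico 0 R ∧ Metric.ball xs t ⊆ Ω})
    (f f' : ℝ → ℝ)
    (hderiv : ∀ t ∈ Set.Ico 0 R, HasDerivWithinAt f (f' t) (Set.Ico 0 R) t)
    (hcont : ContinuousOn f' (Set.Ico 0 R))
    (h1a : f 0 = 0) (h1b : f' 0 = -1)
    (h2 : StrictMonoOn f' (Set.Ico 0 R))
    (hmaj : ∀ τ ∈ Set.Icc (0:ℝ) 1, ∀ x ∈ Metric.ball xs κ,
      ‖(Ring.inverse (F' xs)).comp (F' x - F' (xs + τ • (x - xs)))‖ ≤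
        f' ‖x - xs‖ - f' (τ * ‖x - xs‖))
    (ν : ℝ) (hν : ν = sSup {t | t ∈ Set.Ico 0 R ∧ f' t < 0}) :
    ∀ x ∈ Metric.ball xs (min κ ν),
      ‖(Ring.inverse (F' xs)) (F xs - F x - (F' x) (xs - x))‖ ≤
        f' ‖x - xs‖ * ‖x - xs‖ - f ‖x - xs‖ := by
  intro x hx
  set A : EuclideanSpace ℝ (Fin n) →L[ℝ] EuclideanSpace ℝ (Fin n) :=
    Ring.inverse (F' xs) with hA
  set r : ℝ := ‖x - xs‖ with hr
  have hr0 : 0 ≤ r := norm_nonneg _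
  rw [Metric.mem_ball, dist_eq_norm] at hx
  have hrκ : r < κ := lt_of_lt_of_le hx (min_le_left _ _)
  have hrν : r < ν := lt_of_lt_of_le hx (min_le_right _ _)
  have hνR : ν ≤ R := by
    rw [hν]
    apply Real.sSup_le
    · rintro t ⟨⟨ht0, htR⟩, _⟩
      exact htR.le
    · exact hR.le
  have hrR : r < R := lt_of_lt_of_le hrν hνR
  -- get a radius t with r < t and ball xs t ⊆ Ω
  obtain ⟨t, ⟨⟨ht0, htR⟩, htΩ⟩, hrt⟩ :
      ∃ t, (t ∈ Set.Ico 0 R ∧ Metric.ball xs t ⊆ Ω) ∧ r < t := by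
    by_contra hcon
    push_neg at hcon
    have : κ ≤ r := by
      rw [hκ]
      apply Real.sSup_le
      · rintro t ht
        exact hcon t ht
      · exact hr0
    exact absurd (lt_of_lt_of_le hrκ this) (lt_irrefl r)
  -- segment is inside Ω
  have hseg : ∀ τ : ℝ, τ ∈ Set.Icc (0:ℝ) 1 → xs + τ • (x - xs) ∈ Ω := by
    intro τ hτ
    apply htΩ
    rw [Metric.mem_ball, dist_eq_norm]
    have : xs + τ • (x - xs) - xs = τ • (x - xs) := by abel
    rw [this, norm_smul, Real.norm_eq_abs, abs_of_nonneg hτ.1]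
    calc τ * r ≤ 1 * r := by nlinarith [hτ.2]
      _ = r := one_mul r
      _ < t := hrt
  have hxΩ : x ∈ Ω := by
    have := hseg 1 (by norm_num)
    simpa using this
  -- the path
  set p : ℝ → EuclideanSpace ℝ (Fin n) := fun τ => xs + τ • (x - xs) with hp
  have hpcont : Continuous p := by
    apply continuous_const.add
    exact (continuous_id.smul continuous_const)
  have hpderiv : ∀ τ : ℝ, HasDerivAt p (x - xs) τ := by
    intro τ
    have h1 : HasDerivAt (fun s : ℝ => s • (x - xs)) ((1:ℝ) • (x - xs)) τ :=
      (hasDerivAt_id τ).smul_const (x - xs)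
    have h2 := h1.const_add xs
    rw [one_smul] at h2
    exact h2
  have hGderiv : ∀ τ ∈ Set.uIcc (0:ℝ) 1,
      HasDerivAt (fun s => F (p s)) ((F' (p τ)) (x - xs)) τ := by
    intro τ hτ
    rw [Set.uIcc_of_le (by norm_num : (0:ℝ) ≤ 1)] at hτ
    exact (hFderiv (p τ) (hseg τ hτ)).comp_hasDerivAt τ (hpderiv τ)
  have hFpcont : ContinuousOn (fun τ => F' (p τ)) (Set.Icc (0:ℝ) 1) :=
    hFcont.comp hpcont.continuousOn (fun τ hτ => hseg τ hτ)
  have hIcont : ContinuousOn (fun τ => (F' (p τ)) (x - xs)) (Set.Icc (0:ℝ) 1) :=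
    hFpcont.clm_apply continuousOn_const
  have hIint : IntervalIntegrable (fun τ => (F' (p τ)) (x - xs))
      MeasureTheory.volume 0 1 := by
    apply ContinuousOn.intervalIntegrable
    rwa [Set.uIcc_of_le (by norm_num : (0:ℝ) ≤ 1)]
  have hFTC : (∫ τ in (0:ℝ)..1, (F' (p τ)) (x - xs)) = F x - F xs := by
    have := intervalIntegral.integral_eq_sub_of_hasDerivAt hGderiv hIint
    simpa [hp] using this
  -- scalar FTC
  have hmul : ∀ τ : ℝ, τ ∈ Set.Icc (0:ℝ) 1 → τ * r ∈ Set.Ico 0 R := by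
    intro τ hτ
    constructor
    · exact mul_nonneg hτ.1 hr0
    · calc τ * r ≤ 1 * r := by nlinarith [hτ.2]
        _ = r := one_mul r
        _ < R := hrR
  have hfcontOn : ContinuousOn f (Set.Ico 0 R) := fun s hs =>
    (hderiv s hs).continuousWithinAt
  have hgdcont : ContinuousOn (fun τ : ℝ => f' (τ * r) * r) (Set.Icc 0 1) := by
    apply ContinuousOn.mul _ continuousOn_const
    exact hcont.comp ((continuousOn_id.mul continuousOn_const)) hmul
  have hgdint : IntervalIntegrable (fun τ : ℝ => f' (τ * r) * r)
      MeasureTheory.volume 0 1 := by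
    apply ContinuousOn.intervalIntegrable
    rwa [Set.uIcc_of_le (by norm_num : (0:ℝ) ≤ 1)]
  have hfFTC : (∫ τ in (0:ℝ)..1, f' (τ * r) * r) = f r := by
    have hgcont : ContinuousOn (fun τ : ℝ => f (τ * r)) (Set.Icc 0 1) :=
      hfcontOn.comp ((continuousOn_id.mul continuousOn_const)) hmul
    have hgderiv : ∀ τ ∈ Set.Ioo (0:ℝ) 1,
        HasDerivWithinAt (fun τ : ℝ => f (τ * r)) (f' (τ * r) * r) (Set.Ioi τ) τ := by
      intro τ hτ
      rcases eq_or_lt_of_le hr0 with hre | hrpos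
      · have : ∀ s : ℝ, f (s * r) = f 0 := by intro s; rw [← hre, mul_zero]
        have h0 : f' (τ * r) * r = 0 := by rw [← hre, mul_zero]
        rw [h0]
        apply HasDerivWithinAt.congr (hasDerivWithinAt_const τ _ (f 0))
        · intro s _; exact this s
        · exact this τ
      · have hmem : τ * r ∈ Set.Ioo (0:ℝ) R :=
          ⟨mul_pos hτ.1 hrpos, (hmul τ ⟨hτ.1.le, hτ.2.le⟩).2⟩
        have hnhds : Set.Ico (0:ℝ) R ∈ nhds (τ * r) :=
          Ico_mem_nhds hmem.1 hmem.2
        have hfd : HasDerivAt f (f' (τ * r)) (τ * r) :=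
          (hderiv (τ * r) (hmul τ ⟨hτ.1.le, hτ.2.le⟩)).hasDerivAt hnhds
        have := hfd.comp τ (hasDerivAt_mul_const r)
        exact this.hasDerivWithinAt
    have := intervalIntegral.integral_eq_sub_of_hasDeriv_right_of_le
      (by norm_num : (0:ℝ) ≤ 1) hgcont hgderiv hgdint
    simpa [h1a] using this
  -- key identity
  have hsint : IntervalIntegrable (fun τ => ((F' x - F' (p τ))) (x - xs))
      MeasureTheory.volume 0 1 := by
    apply ContinuousOn.intervalIntegrable
    rw [Set.uIcc_of_le (by norm_num : (0:ℝ) ≤ 1)]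
    have : ContinuousOn (fun τ => (F' x) (x - xs) - (F' (p τ)) (x - xs))
        (Set.Icc (0:ℝ) 1) := continuousOn_const.sub hIcont
    apply this.congr
    intro τ _
    simp [ContinuousLinearMap.sub_apply]
  have hAint : IntervalIntegrable (fun τ => A ((F' x - F' (p τ)) (x - xs)))
      MeasureTheory.volume 0 1 := by
    apply ContinuousOn.intervalIntegrable
    rw [Set.uIcc_of_le (by norm_num : (0:ℝ) ≤ 1)]
    apply A.continuous.comp_continuousOn
    have : ContinuousOn (fun τ => (F' x) (x - xs) - (F' (p τ)) (x - xs))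
        (Set.Icc (0:ℝ) 1) := continuousOn_const.sub hIcont
    apply this.congr
    intro τ _
    simp [ContinuousLinearMap.sub_apply]
  have hkey : A (F xs - F x - (F' x) (xs - x)) =
      ∫ τ in (0:ℝ)..1, A ((F' x - F' (p τ)) (x - xs)) := by
    rw [ContinuousLinearMap.intervalIntegral_comp_comm A hsint]
    congr 1
    have : (∫ τ in (0:ℝ)..1, (F' x - F' (p τ)) (x - xs)) =
        (∫ τ in (0:ℝ)..1, ((F' x) (x - xs) - (F' (p τ)) (x - xs))) := by
      congr 1
    rw [this, intervalIntegral.integral_sub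
      (by apply intervalIntegrable_const) hIint,
      intervalIntegral.integral_const, hFTC]
    have h1 : (F' x) (xs - x) = -((F' x) (x - xs)) := by
      rw [← map_neg]; congr 1; abel
    rw [h1]
    simp only [sub_zero, one_smul]
    abel
  -- bound the integral
  have hbound : ∀ τ ∈ Set.Icc (0:ℝ) 1,
      ‖A ((F' x - F' (p τ)) (x - xs))‖ ≤ (f' r - f' (τ * r)) * r := by
    intro τ hτ
    have h1 : ‖A ((F' x - F' (p τ)) (x - xs))‖ =
        ‖(A.comp (F' x - F' (p τ))) (x - xs)‖ := by
      rw [ContinuousLinearMap.comp_apply]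
    rw [h1]
    calc ‖(A.comp (F' x - F' (p τ))) (x - xs)‖
        ≤ ‖A.comp (F' x - F' (p τ))‖ * r := (A.comp (F' x - F' (p τ))).le_opNorm _
      _ ≤ (f' r - f' (τ * r)) * r := by
          apply mul_le_mul_of_nonneg_right _ hr0
          exact hmaj τ hτ x (by rw [Metric.mem_ball, dist_eq_norm]; exact hrκ)
  have hbint : IntervalIntegrable (fun τ : ℝ => (f' r - f' (τ * r)) * r)
      MeasureTheory.volume 0 1 := by
    apply ContinuousOn.intervalIntegrable
    rw [Set.uIcc_of_le (by norm_num : (0:ℝ) ≤ 1)]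
    have : ContinuousOn (fun τ : ℝ => f' r * r - f' (τ * r) * r)
        (Set.Icc (0:ℝ) 1) := continuousOn_const.sub hgdcont
    apply this.congr
    intro τ _
    ring
  have hmain : ‖A (F xs - F x - (F' x) (xs - x))‖ ≤
      ∫ τ in (0:ℝ)..1, (f' r - f' (τ * r)) * r := by
    rw [hkey]
    calc ‖∫ τ in (0:ℝ)..1, A ((F' x - F' (p τ)) (x - xs))‖
        ≤ ∫ τ in (0:ℝ)..1, ‖A ((F' x - F' (p τ)) (x - xs))‖ :=
          intervalIntegral.norm_integral_le_integral_norm (by norm_num)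
      _ ≤ ∫ τ in (0:ℝ)..1, (f' r - f' (τ * r)) * r := by
          apply intervalIntegral.integral_mono_on (by norm_num : (0:ℝ) ≤ 1)
            hAint.norm hbint
          exact hbound
  have hval : (∫ τ in (0:ℝ)..1, (f' r - f' (τ * r)) * r) = f' r * r - f r := by
    have heq : (∫ τ in (0:ℝ)..1, (f' r - f' (τ * r)) * r) =
        ∫ τ in (0:ℝ)..1, (f' r * r - f' (τ * r) * r) := by
      congr 1; funext τ; ring
    rw [heq, intervalIntegral.integral_sub (by apply intervalIntegrable_const) hgdint,
      intervalIntegral.integral_const, hfFTC]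
    simp
  rw [hval] at hmain
  exact hmain
end

section
/- Let C ⊂ ℝⁿ be a nonempty convex compact set, let y, ỹ ∈ ℝⁿ, let ε ≥ 0, and let z, z̃ ∈ C satisfy the (in)exact optimality conditions of the conditional gradient procedure: ⟨z − y, u − z⟩ ≥ −ε for all u ∈ C, and ⟨z̃ − ỹ, u − z̃⟩ ≥ 0 for all u ∈ C. Then ‖z − z̃‖ ≤ ‖y − ỹ‖ + √(2ε). -/
open scoped RealInnerProductSpace

theorem stmt_7 (n : ℕ) (C : Set (EuclideanSpace ℝ (Fin n)))
    (hCne : C.Nonempty) (hCconv : Convex ℝ C) (hCcomp : IsCompact C)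
    (y yt : EuclideanSpace ℝ (Fin n)) (ε : ℝ) (hε : 0 ≤ ε)
    (z zt : EuclideanSpace ℝ (Fin n)) (hz : z ∈ C) (hzt : zt ∈ C)
    (hopt : ∀ u ∈ C, ⟪z - y, u - z⟫ ≥ -ε)
    (hopt' : ∀ u ∈ C, ⟪zt - yt, u - zt⟫ ≥ 0) :
    ‖z - zt‖ ≤ ‖y - yt‖ + Real.sqrt (2 * ε) := by
  have h1 := hopt zt hzt
  have h2 := hopt' z hz
  have key : ‖z - zt‖ ^ 2 ≤ ⟪y - yt, z - zt⟫ + ε := by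
    have e : ⟪z - zt, z - zt⟫ - ⟪y - yt, z - zt⟫
        = -⟪z - y, zt - z⟫ - ⟪zt - yt, z - zt⟫ := by
      simp only [inner_sub_left, inner_sub_right]
      ring
    have : ‖z - zt‖ ^ 2 = ⟪z - zt, z - zt⟫ := (real_inner_self_eq_norm_sq _).symm
    linarith
  have cs : ⟪y - yt, z - zt⟫ ≤ ‖y - yt‖ * ‖z - zt‖ := real_inner_le_norm _ _
  set t := ‖z - zt‖ with ht
  set a := ‖y - yt‖ with ha
  have hs : Real.sqrt (2 * ε) ^ 2 = 2 * ε := Real.sq_sqrt (by linarith)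
  have hs0 : 0 ≤ Real.sqrt (2 * ε) := Real.sqrt_nonneg _
  have ha0 : 0 ≤ a := norm_nonneg _
  have ht0 : 0 ≤ t := norm_nonneg _
  nlinarith [sq_nonneg (t - a - Real.sqrt (2 * ε)), sq_nonneg (t - Real.sqrt (2 * ε))]
end

section
/- Let Ω ⊂ ℝⁿ be open, C ⊂ Ω a nonempty convex compact set, F : Ω → ℝⁿ continuously differentiable, x* ∈ C with F(x*) = 0 and F'(x*) invertible, and let f, κ, ν, n_f, ϑ, ω₁, ω₂, λ, ρ, σ be as in the majorant setting. Let x ∈ C ∩ B(x*, σ) with x ≠ x*. Let M be an invertible n×n matrix with ‖M⁻¹F'(x)‖ ≤ ω₁ and ‖M⁻¹F'(x) − I‖ ≤ ω₂; let P be an invertible matrix, η ≥ 0, and r ∈ ℝⁿ with ‖P r‖ ≤ η‖P F(x)‖ and η·‖(P F'(x))⁻¹‖·‖P F'(x)‖ ≤ ϑ; let θ ≥ 0. Then ‖x − M⁻¹(F(x) − r) − x*‖ + √(2θ)·‖M⁻¹(F(x) − r)‖ ≤ ω₁(1+ϑ)(1+√(2θ))|n_f(‖x − x*‖)| + (ω₁[(1+ϑ)√(2θ)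 + ϑ] + ω₂)‖x − x*‖. -/
open Set

private lemma my_inv_rev {M : Type*} [MonoidWithZero M] (a b : M) (ha : IsUnit a)
    (hb : IsUnit b) :
    Ring.inverse (a * b) = Ring.inverse b * Ring.inverse a := by
  rw [← ha.unit_spec, ← hb.unit_spec, ← Units.val_mul, Ring.inverse_unit, Ring.inverse_unit,
    Ring.inverse_unit, mul_inv_rev, Units.val_mul]

private lemma banach_aux {E : Type*} [NormedAddCommGroup E] [NormedSpace ℝ E] [CompleteSpace E]
    (A X : E →L[ℝ] E) (hA : IsUnit A) (a : ℝ) (ha : a < 1)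
    (hw : ‖(Ring.inverse A).comp (X - A)‖ ≤ a) :
    IsUnit X ∧ ∀ v : E, ‖Ring.inverse X v‖ ≤ (1 - a)⁻¹ * ‖Ring.inverse A v‖ := by
  set A' := Ring.inverse A with hA'def
  set w := A'.comp (X - A) with hw_def
  have ha0 : 0 ≤ a := le_trans (norm_nonneg _) hw
  have hw1 : ‖w‖ < 1 := lt_of_le_of_lt hw ha
  have ht1 : ‖-w‖ < 1 := by rwa [norm_neg]
  have hAA' : A * A' = 1 := Ring.mul_inverse_cancel _ hA
  set u1 := Units.oneSub (-w) ht1 with hu1_def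
  have hu1val : (u1 : E →L[ℝ] E) = 1 + w := by
    rw [hu1_def, Units.val_oneSub, sub_neg_eq_add]
  set uA := hA.unit with huA_def
  have huA : (uA : E →L[ℝ] E) = A := hA.unit_spec
  set uX := uA * u1 with huX_def
  have huX : (uX : E →L[ℝ] E) = X := by
    rw [huX_def, Units.val_mul, huA, hu1val, hw_def, ← ContinuousLinearMap.mul_def,
      mul_add, mul_one, ← mul_assoc, hAA', one_mul]
    abel
  have hXunit : IsUnit X := ⟨uX, huX⟩
  refine ⟨hXunit, fun v => ?_⟩
  have hA'u : A' = ((uA⁻¹ : _) : E →L[ℝ] E) := by rw [hA'def, ← huA, Ring.inverse_unit]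
  have hinvX : Ring.inverse X = ((u1⁻¹ : _) : E →L[ℝ] E) * A' := by
    rw [← huX, Ring.inverse_unit, huX_def, mul_inv_rev, Units.val_mul, hA'u]
  have hu1inv : ‖((u1⁻¹ : _) : E →L[ℝ] E)‖ ≤ (1 - a)⁻¹ := by
    have h := tsum_geometric_le_of_norm_lt_one (-w) ht1
    have h1 : ‖(1 : E →L[ℝ] E)‖ ≤ 1 := by
      rw [ContinuousLinearMap.one_def]; exact ContinuousLinearMap.norm_id_le
    have h2 : (1 - ‖-w‖)⁻¹ ≤ (1 - a)⁻¹ := by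
      apply inv_anti₀ (by linarith)
      rw [norm_neg]; linarith
    calc ‖((u1⁻¹ : _) : E →L[ℝ] E)‖ = ‖∑' n : ℕ, (-w) ^ n‖ := rfl
      _ ≤ ‖(1 : E →L[ℝ] E)‖ - 1 + (1 - ‖-w‖)⁻¹ := h
      _ ≤ (1 - a)⁻¹ := by linarith
  calc ‖Ring.inverse X v‖ = ‖((u1⁻¹ : _) : E →L[ℝ] E) (A' v)‖ := by
        rw [hinvX, ContinuousLinearMap.mul_apply]
    _ ≤ ‖((u1⁻¹ : _) : E →L[ℝ] E)‖ * ‖A' v‖ := ContinuousLinearMap.le_opNorm _ _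
    _ ≤ (1 - a)⁻¹ * ‖A' v‖ :=
        mul_le_mul_of_nonneg_right hu1inv (norm_nonneg _)



set_option maxHeartbeats 1000000 in
set_option synthInstance.maxHeartbeats 1000000 in
theorem stmt_8 (n : ℕ) (Ω : Set (EuclideanSpace ℝ (Fin n))) (hΩ : IsOpen Ω)
    (C : Set (EuclideanSpace ℝ (Fin n))) (hCne : C.Nonempty)
    (hCconv : Convex ℝ C) (hCcomp : IsCompact C) (hCΩ : C ⊆ Ω)
    (F : EuclideanSpace ℝ (Fin n) → EuclideanSpace ℝ (Fin n))
    (F' : EuclideanSpace ℝ (Fin n) →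
      (EuclideanSpace ℝ (Fin n) →L[ℝ] EuclideanSpace ℝ (Fin n)))
    (hFderiv : ∀ x ∈ Ω, HasFDerivAt F (F' x) x)
    (hFcont : ContinuousOn F' Ω)
    (xs : EuclideanSpace ℝ (Fin n)) (hxsC : xs ∈ C) (hFxs : F xs = 0)
    (hinv : IsUnit (F' xs))
    (R : ℝ) (hR : 0 < R)
    (κ : ℝ) (hκ : κ = sSup {t | t ∈ Set.Ico 0 R ∧ Metric.ball xs t ⊆ Ω})
    (f f' : ℝ → ℝ)
    (hderiv : ∀ t ∈ Set.Ico 0 R, HasDerivWithinAt f (f' t) (Set.Ico 0 R) t)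
    (hcont : ContinuousOn f' (Set.Ico 0 R))
    (h1a : f 0 = 0) (h1b : f' 0 = -1)
    (h2 : StrictMonoOn f' (Set.Ico 0 R))
    (hmaj : ∀ τ ∈ Set.Icc (0:ℝ) 1, ∀ x ∈ Metric.ball xs κ,
      ‖(Ring.inverse (F' xs)).comp (F' x - F' (xs + τ • (x - xs)))‖ ≤
        f' ‖x - xs‖ - f' (τ * ‖x - xs‖))
    (ν : ℝ) (hν : ν = sSup {t | t ∈ Set.Ico 0 R ∧ f' t < 0})
    (ϑ ω₁ ω₂ lam : ℝ)
    (hϑ0 : 0 ≤ ϑ) (hϑ1 : ϑ < 1) (hω₂0 : 0 ≤ ω₂) (hω₁₂ : ω₂ < ω₁)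
    (hωϑ : ω₁ * ϑ + ω₂ < 1)
    (hlam0 : 0 ≤ lam) (hlam : lam < (1 - ω₂ - ω₁ * ϑ) / (ω₁ * (1 + ϑ)))
    (ρ : ℝ)
    (hρ : ρ = sSup {δ | δ ∈ Set.Ioo 0 ν ∧ ∀ t ∈ Set.Ioo 0 δ,
      ω₁ * (1 + ϑ) * (1 + lam) * (f t / (t * f' t) - 1)
        + ω₁ * ((1 + ϑ) * lam + ϑ) + ω₂ < 1})
    (σ : ℝ) (hσ : σ = min κ ρ)
    (x : EuclideanSpace ℝ (Fin n)) (hx : x ∈ C ∩ Metric.ball xs σ) (hxne : x ≠ xs)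
    (M P : EuclideanSpace ℝ (Fin n) →L[ℝ] EuclideanSpace ℝ (Fin n))
    (hM : IsUnit M) (hP : IsUnit P)
    (hM1 : ‖(Ring.inverse M).comp (F' x)‖ ≤ ω₁)
    (hM2 : ‖(Ring.inverse M).comp (F' x) - 1‖ ≤ ω₂)
    (η : ℝ) (hη : 0 ≤ η) (r : EuclideanSpace ℝ (Fin n))
    (hres : ‖P r‖ ≤ η * ‖P (F x)‖)
    (hcond : η * (‖Ring.inverse (P.comp (F' x))‖ * ‖P.comp (F' x)‖) ≤ ϑ)
    (θ : ℝ) (hθ : 0 ≤ θ) :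
    ‖x - (Ring.inverse M) (F x - r) - xs‖
        + Real.sqrt (2 * θ) * ‖(Ring.inverse M) (F x - r)‖ ≤
      ω₁ * (1 + ϑ) * (1 + Real.sqrt (2 * θ))
          * |‖x - xs‖ - f ‖x - xs‖ / f' ‖x - xs‖|
        + (ω₁ * ((1 + ϑ) * Real.sqrt (2 * θ) + ϑ) + ω₂) * ‖x - xs‖ := by
  have hxC : x ∈ C := hx.1
  have hxb : x ∈ Metric.ball xs σ := hx.2
  set s : ℝ := ‖x - xs‖ with hs_def
  have hs0 : 0 < s := by
    rw [hs_def]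
    exact norm_sub_pos_iff.mpr hxne
  have hsσ : s < σ := by
    rw [hs_def, ← dist_eq_norm]; exact Metric.mem_ball.mp hxb
  -- basic facts about ν, ρ, κ
  have hT0 : (0:ℝ) ∈ {t | t ∈ Set.Ico 0 R ∧ f' t < 0} :=
    ⟨⟨le_refl 0, hR⟩, by rw [h1b]; norm_num⟩
  have hTbdd : BddAbove {t | t ∈ Set.Ico 0 R ∧ f' t < 0} :=
    ⟨R, fun t ht => le_of_lt ht.1.2⟩
  have hν0 : 0 ≤ ν := hν ▸ le_csSup hTbdd hT0
  have hρν : ρ ≤ ν := by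
    rw [hρ]; exact Real.sSup_le (fun δ hδ => le_of_lt hδ.1.2) hν0
  have hsν : s < ν := lt_of_lt_of_le (lt_of_lt_of_le hsσ (hσ ▸ min_le_right κ ρ)) hρν
  have hsκ : s < κ := lt_of_lt_of_le hsσ (hσ ▸ min_le_left κ ρ)
  have hxballκ : x ∈ Metric.ball xs κ := by
    rw [Metric.mem_ball, dist_eq_norm]; exact hsκ
  have hex : ∃ t, (t ∈ Set.Ico 0 R ∧ f' t < 0) ∧ s < t := by
    by_contra h
    push_neg at h
    have : ν ≤ s := hν ▸ Real.sSup_le (fun t ht => h t ht) hs0.le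
    linarith
  obtain ⟨t₀, ⟨⟨ht₀0, ht₀R⟩, hft₀⟩, hst₀⟩ := hex
  have hsR : s < R := lt_trans hst₀ ht₀R
  have hsIco : s ∈ Set.Ico 0 R := ⟨hs0.le, hsR⟩
  have hfs_neg : f' s < 0 := lt_trans (h2 hsIco ⟨ht₀0, ht₀R⟩ hst₀) hft₀
  have hfs_gt : -1 < f' s := by
    have := h2 ⟨le_refl 0, hR⟩ hsIco hs0
    rwa [h1b] at this
  have hseg : ∀ τ ∈ Set.Icc (0:ℝ) 1, xs + τ • (x - xs) ∈ Ω := fun τ hτ =>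
    hCΩ (hCconv.add_smul_sub_mem hxsC hxC hτ)
  -- notation
  set A' := Ring.inverse (F' xs) with hA'def
  set X := F' x with hXdef
  set e := x - xs with he_def
  have hse : ‖e‖ = s := rfl
  have hxe : xs + e = x := by rw [he_def]; abel
  -- the function g and its derivative
  set g : ℝ → EuclideanSpace ℝ (Fin n) :=
    fun τ => A' (X (τ • e)) - A' (F (xs + τ • e)) with hg_def
  have hg' : ∀ τ ∈ Set.Icc (0:ℝ) 1,
      HasDerivAt g ((A'.comp (X - F' (xs + τ • e))) e) τ := by
    intro τ hτ
    have h1 : HasDerivAt (fun τ' : ℝ => xs + τ' • e) e τ := by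
      simpa using ((hasDerivAt_id τ).smul_const e).const_add xs
    have h2f : HasDerivAt (fun τ' : ℝ => F (xs + τ' • e)) ((F' (xs + τ • e)) e) τ :=
      (hFderiv _ (hseg τ hτ)).comp_hasDerivAt τ h1
    have h3 : HasDerivAt (fun τ' : ℝ => A' (F (xs + τ' • e)))
        (A' ((F' (xs + τ • e)) e)) τ :=
      A'.hasFDerivAt.comp_hasDerivAt τ h2f
    have h4 : HasDerivAt (fun τ' : ℝ => A' (X (τ' • e))) (A' (X e)) τ := by
      have heq : (fun τ' : ℝ => A' (X (τ' • e))) = fun τ' : ℝ => τ' • (A' (X e)) := by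
        funext τ'; simp [map_smul]
      rw [heq]
      simpa using (hasDerivAt_id τ).smul_const (A' (X e))
    have h5 := h4.sub h3
    have heq : (A'.comp (X - F' (xs + τ • e))) e = A' (X e) - A' ((F' (xs + τ • e)) e) := by
      rw [ContinuousLinearMap.comp_apply, ContinuousLinearMap.sub_apply, map_sub]
    rw [heq]
    exact h5
  -- the majorant function B and its derivative
  set B : ℝ → ℝ := fun τ => τ * (s * f' s) - f (τ * s) with hB_def
  set c : ℝ := (s + R) / (2 * s) with hc_def
  have hc1 : 1 < c := by
    rw [hc_def]
    rw [lt_div_iff₀ (by linarith)]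
    linarith
  have hcsR : c * s < R := by
    rw [hc_def]
    rw [div_mul_eq_mul_div, div_lt_iff₀ (by linarith)]
    nlinarith
  have hmapc : Set.MapsTo (fun τ' : ℝ => τ' * s) (Set.Icc 0 c) (Set.Ico 0 R) := by
    intro τ' hτ'
    constructor
    · exact mul_nonneg hτ'.1 hs0.le
    · calc τ' * s ≤ c * s := mul_le_mul_of_nonneg_right hτ'.2 hs0.le
        _ < R := hcsR
  have hB' : ∀ τ ∈ Set.Ico (0:ℝ) 1,
      HasDerivWithinAt B (s * f' s - f' (τ * s) * s) (Set.Ici τ) τ := by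
    intro τ hτ
    have hτc : τ ∈ Set.Icc (0:ℝ) c := ⟨hτ.1, le_of_lt (lt_trans hτ.2 hc1)⟩
    have hin : HasDerivWithinAt (fun τ' : ℝ => f (τ' * s)) (f' (τ * s) * s)
        (Set.Icc 0 c) τ :=
      (hderiv (τ * s) (hmapc hτc)).comp τ (hasDerivAt_mul_const s).hasDerivWithinAt hmapc
    have hmono : HasDerivWithinAt (fun τ' : ℝ => f (τ' * s)) (f' (τ * s) * s)
        (Set.Ici τ ∩ Set.Ioo (τ - 1) c) τ :=
      hin.mono (fun y hy => ⟨le_trans hτ.1 hy.1, le_of_lt hy.2.2⟩)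
    rw [hasDerivWithinAt_inter (Ioo_mem_nhds (by linarith) (lt_trans hτ.2 hc1))] at hmono
    have hlin : HasDerivWithinAt (fun τ' : ℝ => τ' * (s * f' s)) (s * f' s)
        (Set.Ici τ) τ := (hasDerivAt_mul_const (s * f' s)).hasDerivWithinAt
    exact hlin.sub hmono
  have hfc : ContinuousOn f (Set.Ico 0 R) := fun t ht => (hderiv t ht).continuousWithinAt
  have hmap01 : Set.MapsTo (fun τ' : ℝ => τ' * s) (Set.Icc 0 1) (Set.Ico 0 R) := by
    intro τ' hτ'
    exact hmapc ⟨hτ'.1, le_of_lt (lt_of_le_of_lt hτ'.2 hc1)⟩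
  have hBcont : ContinuousOn B (Set.Icc 0 1) := by
    apply ContinuousOn.sub
    · exact (continuous_id.mul continuous_const).continuousOn
    · exact hfc.comp ((continuous_id.mul continuous_const).continuousOn) hmap01
  have hgcont : ContinuousOn g (Set.Icc 0 1) :=
    fun τ hτ => (hg' τ hτ).continuousAt.continuousWithinAt
  have hg0 : ‖g 0‖ ≤ B 0 := by
    simp [hg_def, hB_def, hFxs, h1a]
  have hbound : ∀ τ ∈ Set.Ico (0:ℝ) 1,
      ‖(A'.comp (X - F' (xs + τ • e))) e‖ ≤ s * f' s - f' (τ * s) * s := by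
    intro τ hτ
    have hm := hmaj τ ⟨hτ.1, hτ.2.le⟩ x hxballκ
    calc ‖(A'.comp (X - F' (xs + τ • e))) e‖
        ≤ ‖A'.comp (X - F' (xs + τ • e))‖ * ‖e‖ := ContinuousLinearMap.le_opNorm _ _
      _ ≤ (f' s - f' (τ * s)) * s := by
          rw [hse]
          exact mul_le_mul_of_nonneg_right hm hs0.le
      _ = s * f' s - f' (τ * s) * s := by ring
  have hkey : ‖g 1‖ ≤ B 1 := by
    exact image_norm_le_of_norm_deriv_right_le_deriv_boundary' hgcont
      (fun τ hτ => (hg' τ ⟨hτ.1, hτ.2.le⟩).hasDerivWithinAt) hg0 hBcont hB' hbound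
      (right_mem_Icc.mpr zero_le_one)
  set β : ℝ := s * f' s - f s with hβ_def
  have hkey2 : ‖A' (X e - F x)‖ ≤ β := by
    have h1 : g 1 = A' (X e - F x) := by
      have hg1 : g 1 = A' (X e) - A' (F x) := by
        rw [hg_def]; simp only [one_smul, hxe]
      rw [hg1, ← map_sub]
    have h2' : B 1 = β := by rw [hB_def]; simp [hβ_def]
    rw [← h1, ← h2']; exact hkey
  have hβ0 : 0 ≤ β := le_trans (norm_nonneg _) hkey2
  -- Banach perturbation: F' x is invertible
  have hwmaj : ‖A'.comp (X - F' xs)‖ ≤ f' s + 1 := by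
    have hm := hmaj 0 ⟨le_refl 0, zero_le_one⟩ x hxballκ
    have h0 : xs + (0:ℝ) • (x - xs) = xs := by simp
    rw [h0] at hm
    rw [zero_mul, h1b, sub_neg_eq_add] at hm
    exact hm
  obtain ⟨hXunit, hXinv_bound⟩ := banach_aux (F' xs) X hinv (f' s + 1) (by linarith) hwmaj
  have hfs1 : (1 : ℝ) - (f' s + 1) = -(f' s) := by ring
  -- the Newton step bound
  set u : EuclideanSpace ℝ (Fin n) := Ring.inverse X (F x) with hu_def
  have hXu : X u = F x := by
    have h := congrArg (fun T : EuclideanSpace ℝ (Fin n) →L[ℝ] EuclideanSpace ℝ (Fin n) =>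
      T (F x)) (Ring.mul_inverse_cancel X hXunit)
    simpa [ContinuousLinearMap.mul_apply] using h
  have hXe : Ring.inverse X (X e) = e := by
    have h := congrArg (fun T : EuclideanSpace ℝ (Fin n) →L[ℝ] EuclideanSpace ℝ (Fin n) =>
      T e) (Ring.inverse_mul_cancel X hXunit)
    simpa [ContinuousLinearMap.mul_apply] using h
  set nf : ℝ := |s - f s / f' s| with hnf_def
  have hnf_eq : nf = (-(f' s))⁻¹ * β := by
    rw [hnf_def]
    have h1 : s - f s / f' s = β / f' s := by
      rw [hβ_def]
      field_simp [hfs_neg.ne]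
    rw [h1, abs_div, abs_of_nonneg hβ0, abs_of_neg hfs_neg, div_eq_mul_inv]
    ring
  have hEU : ‖e - u‖ ≤ nf := by
    have h1 : e - u = Ring.inverse X (X e - F x) := by
      rw [map_sub, hXe, hu_def]
    rw [h1, hnf_eq]
    calc ‖Ring.inverse X (X e - F x)‖
        ≤ (1 - (f' s + 1))⁻¹ * ‖A' (X e - F x)‖ := hXinv_bound _
      _ ≤ (-(f' s))⁻¹ * β := by
          rw [hfs1]
          apply mul_le_mul_of_nonneg_left hkey2
          rw [inv_nonneg]; linarith
  have hnf0 : 0 ≤ nf := abs_nonneg _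
  have hu_norm : ‖u‖ ≤ nf + s := by
    have h0 : u = e - (e - u) := by abel
    calc ‖u‖ = ‖e - (e - u)‖ := by rw [← h0]
      _ ≤ ‖e‖ + ‖e - u‖ := norm_sub_le _ _
      _ ≤ s + nf := by rw [hse]; linarith
      _ = nf + s := by ring
  -- the residual bound
  set M' := Ring.inverse M with hM'def
  set Q := P.comp X with hQdef
  have hQX : Q = P * X := rfl
  have hQunit : IsUnit Q := by rw [hQX]; exact hP.mul hXunit
  set r' : EuclideanSpace ℝ (Fin n) := Ring.inverse Q (P r) with hr'_def
  have hPr : Ring.inverse P (P r) = r := by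
    have h := congrArg (fun T : EuclideanSpace ℝ (Fin n) →L[ℝ] EuclideanSpace ℝ (Fin n) =>
      T r) (Ring.inverse_mul_cancel P hP)
    simpa [ContinuousLinearMap.mul_apply] using h
  have hXir : X (Ring.inverse X r) = r := by
    have h := congrArg (fun T : EuclideanSpace ℝ (Fin n) →L[ℝ] EuclideanSpace ℝ (Fin n) =>
      T r) (Ring.mul_inverse_cancel X hXunit)
    simpa [ContinuousLinearMap.mul_apply] using h
  have hXr' : X r' = r := by
    rw [hr'_def, hQX, my_inv_rev P X hP hXunit, ContinuousLinearMap.mul_apply, hPr, hXir]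
  have hMr : M' r = (M'.comp X) r' := by
    rw [ContinuousLinearMap.comp_apply, hXr']
  have hr'_norm : ‖r'‖ ≤ ‖Ring.inverse Q‖ * (η * ‖P (F x)‖) := by
    calc ‖r'‖ ≤ ‖Ring.inverse Q‖ * ‖P r‖ := ContinuousLinearMap.le_opNorm _ _
      _ ≤ ‖Ring.inverse Q‖ * (η * ‖P (F x)‖) :=
          mul_le_mul_of_nonneg_left hres (norm_nonneg _)
  have hPFx : ‖P (F x)‖ ≤ ‖Q‖ * ‖u‖ := by
    have h1 : P (F x) = Q u := by
      rw [← hXu, hQdef, ContinuousLinearMap.comp_apply]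
    rw [h1]
    exact ContinuousLinearMap.le_opNorm _ _
  have hω₁0 : 0 ≤ ω₁ := le_trans hω₂0 hω₁₂.le
  have hM'r : ‖M' r‖ ≤ ω₁ * (ϑ * ‖u‖) := by
    have h1 : ‖M' r‖ ≤ ω₁ * ‖r'‖ := by
      rw [hMr]
      calc ‖(M'.comp X) r'‖ ≤ ‖M'.comp X‖ * ‖r'‖ := ContinuousLinearMap.le_opNorm _ _
        _ ≤ ω₁ * ‖r'‖ := mul_le_mul_of_nonneg_right hM1 (norm_nonneg _)
    have h2' : ‖r'‖ ≤ (η * (‖Ring.inverse Q‖ * ‖Q‖)) * ‖u‖ := by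
      refine le_trans hr'_norm ?_
      have hstep : η * ‖P (F x)‖ ≤ η * (‖Q‖ * ‖u‖) := mul_le_mul_of_nonneg_left hPFx hη
      calc ‖Ring.inverse Q‖ * (η * ‖P (F x)‖)
          ≤ ‖Ring.inverse Q‖ * (η * (‖Q‖ * ‖u‖)) :=
            mul_le_mul_of_nonneg_left hstep (norm_nonneg _)
        _ = (η * (‖Ring.inverse Q‖ * ‖Q‖)) * ‖u‖ := by ring
    have h3 : (η * (‖Ring.inverse Q‖ * ‖Q‖)) * ‖u‖ ≤ ϑ * ‖u‖ :=
      mul_le_mul_of_nonneg_right hcond (norm_nonneg _)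
    calc ‖M' r‖ ≤ ω₁ * ‖r'‖ := h1
      _ ≤ ω₁ * (ϑ * ‖u‖) := by
          apply mul_le_mul_of_nonneg_left _ hω₁0
          exact le_trans h2' h3
  -- assemble
  set d : EuclideanSpace ℝ (Fin n) := M' (F x - r) with hd_def
  have hd_decomp : d = (M'.comp X) u - M' r := by
    rw [hd_def, map_sub, ← hXu, ContinuousLinearMap.comp_apply]
  have hd_norm : ‖d‖ ≤ ω₁ * (1 + ϑ) * (nf + s) := by
    have h1 : ‖(M'.comp X) u‖ ≤ ω₁ * ‖u‖ := by
      calc ‖(M'.comp X) u‖ ≤ ‖M'.comp X‖ * ‖u‖ := ContinuousLinearMap.le_opNorm _ _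
        _ ≤ ω₁ * ‖u‖ := mul_le_mul_of_nonneg_right hM1 (norm_nonneg _)
    have h2' : ‖d‖ ≤ ‖(M'.comp X) u‖ + ‖M' r‖ := by
      rw [hd_decomp]; exact norm_sub_le _ _
    have h3 : ω₁ * ‖u‖ + ω₁ * (ϑ * ‖u‖) = ω₁ * (1 + ϑ) * ‖u‖ := by ring
    have h4 : ω₁ * (1 + ϑ) * ‖u‖ ≤ ω₁ * (1 + ϑ) * (nf + s) := by
      apply mul_le_mul_of_nonneg_left hu_norm
      positivity
    linarith
  have hed : e - d = ((1 : EuclideanSpace ℝ (Fin n) →L[ℝ] EuclideanSpace ℝ (Fin n))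
      - M'.comp X) e + ((M'.comp X) (e - u) + M' r) := by
    rw [hd_decomp]
    simp only [ContinuousLinearMap.sub_apply, ContinuousLinearMap.one_apply, map_sub]
    abel
  have hed_norm : ‖e - d‖ ≤ ω₂ * s + ω₁ * nf + ω₁ * (ϑ * (nf + s)) := by
    have h1 : ‖((1 : EuclideanSpace ℝ (Fin n) →L[ℝ] EuclideanSpace ℝ (Fin n))
        - M'.comp X) e‖ ≤ ω₂ * s := by
      calc ‖((1 : EuclideanSpace ℝ (Fin n) →L[ℝ] EuclideanSpace ℝ (Fin n))
          - M'.comp X) e‖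
          ≤ ‖(1 : EuclideanSpace ℝ (Fin n) →L[ℝ] EuclideanSpace ℝ (Fin n))
            - M'.comp X‖ * ‖e‖ := ContinuousLinearMap.le_opNorm _ _
        _ ≤ ω₂ * s := by
            rw [hse, norm_sub_rev]
            exact mul_le_mul_of_nonneg_right hM2 hs0.le
    have h2' : ‖(M'.comp X) (e - u)‖ ≤ ω₁ * nf := by
      calc ‖(M'.comp X) (e - u)‖ ≤ ‖M'.comp X‖ * ‖e - u‖ :=
            ContinuousLinearMap.le_opNorm _ _
        _ ≤ ω₁ * nf := mul_le_mul hM1 hEU (norm_nonneg _) hω₁0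
    have h3 : ‖M' r‖ ≤ ω₁ * (ϑ * (nf + s)) := by
      refine le_trans hM'r ?_
      apply mul_le_mul_of_nonneg_left _ hω₁0
      exact mul_le_mul_of_nonneg_left hu_norm hϑ0
    calc ‖e - d‖ ≤ ‖((1 : EuclideanSpace ℝ (Fin n) →L[ℝ] EuclideanSpace ℝ (Fin n))
          - M'.comp X) e‖ + ‖(M'.comp X) (e - u) + M' r‖ := by
          rw [hed]; exact norm_add_le _ _
      _ ≤ ‖((1 : EuclideanSpace ℝ (Fin n) →L[ℝ] EuclideanSpace ℝ (Fin n))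
          - M'.comp X) e‖ + (‖(M'.comp X) (e - u)‖ + ‖M' r‖) := by
          have := norm_add_le ((M'.comp X) (e - u)) (M' r)
          linarith
      _ ≤ ω₂ * s + ω₁ * nf + ω₁ * (ϑ * (nf + s)) := by linarith
  set q : ℝ := Real.sqrt (2 * θ) with hq_def
  have hq0 : 0 ≤ q := Real.sqrt_nonneg _
  have hxd : x - d - xs = e - d := by rw [he_def]; abel
  rw [hxd]
  have hqd : q * ‖d‖ ≤ q * (ω₁ * (1 + ϑ) * (nf + s)) :=
    mul_le_mul_of_nonneg_left hd_norm hq0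
  have hfinal : ω₂ * s + ω₁ * nf + ω₁ * (ϑ * (nf + s)) + q * (ω₁ * (1 + ϑ) * (nf + s))
      = ω₁ * (1 + ϑ) * (1 + q) * nf + (ω₁ * ((1 + ϑ) * q + ϑ) + ω₂) * s := by ring
  linarith
end

section
/- In the majorant setting with x ∈ C ∩ B(x*, σ), x ≠ x*, invertible M with ‖M⁻¹F'(x)‖ ≤ ω₁ and ‖M⁻¹F'(x) − I‖ ≤ ω₂, residual r with ‖P r‖ ≤ η‖P F(x)‖ and η·‖(P F'(x))⁻¹‖·‖P F'(x)‖ ≤ ϑ for some invertible matrix P and η ≥ 0, and 0 ≤ θ ≤ λ²/2: if x⁺ ∈ C satisfies ‖x⁺ − x*‖ ≤ ‖x − M⁻¹(F(x) − r) − x*‖ + √(2θ)·‖M⁻¹(F(x) − r)‖, then ‖x⁺ − x*‖ ≤ ω₁(1+ϑ)(1+√(2θ))|n_f(‖x − x*‖)| + (ω₁[(1+ϑ)√(2θ) + ϑ] + ω₂)‖x − x*‖ < ‖x − x*‖. -/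
set_option maxHeartbeats 2000000
private lemma stmt_9_aux (ω₁ ϑ ω₂ lam c q t : ℝ) (hω₁ : 0 < ω₁) (hϑ0 : 0 ≤ ϑ)
    (hq : 0 ≤ q) (ht : 0 < t) (hc0 : 0 ≤ c) (hclam : c ≤ lam)
    (hkey : ω₁ * (1 + ϑ) * (1 + lam) * q + ω₁ * ((1 + ϑ) * lam + ϑ) + ω₂ < 1) :
    ω₁ * (1 + ϑ) * (1 + c) * (t * q) + (ω₁ * ((1 + ϑ) * c + ϑ) + ω₂) * t < t := by
  nlinarith [mul_lt_mul_of_pos_right hkey ht,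
    mul_nonneg (mul_nonneg (mul_nonneg hω₁.le (by linarith : (0:ℝ) ≤ 1 + ϑ))
      (sub_nonneg.2 hclam)) (mul_nonneg hq ht.le),
    mul_nonneg (mul_nonneg (mul_nonneg hω₁.le (by linarith : (0:ℝ) ≤ 1 + ϑ))
      (sub_nonneg.2 hclam)) ht.le]


theorem stmt_9 (n : ℕ) (Ω : Set (EuclideanSpace ℝ (Fin n))) (hΩ : IsOpen Ω)
    (C : Set (EuclideanSpace ℝ (Fin n))) (hCne : C.Nonempty)
    (hCconv : Convex ℝ C) (hCcomp : IsCompact C) (hCΩ : C ⊆ Ω)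
    (F : EuclideanSpace ℝ (Fin n) → EuclideanSpace ℝ (Fin n))
    (F' : EuclideanSpace ℝ (Fin n) →
      (EuclideanSpace ℝ (Fin n) →L[ℝ] EuclideanSpace ℝ (Fin n)))
    (hFderiv : ∀ x ∈ Ω, HasFDerivAt F (F' x) x)
    (hFcont : ContinuousOn F' Ω)
    (xs : EuclideanSpace ℝ (Fin n)) (hxsC : xs ∈ C) (hFxs : F xs = 0)
    (hinv : IsUnit (F' xs))
    (R : ℝ) (hR : 0 < R)
    (κ : ℝ) (hκ : κ = sSup {t | t ∈ Set.Ico 0 R ∧ Metric.ball xs t ⊆ Ω})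
    (f f' : ℝ → ℝ)
    (hderiv : ∀ t ∈ Set.Ico 0 R, HasDerivWithinAt f (f' t) (Set.Ico 0 R) t)
    (hcont : ContinuousOn f' (Set.Ico 0 R))
    (h1a : f 0 = 0) (h1b : f' 0 = -1)
    (h2 : StrictMonoOn f' (Set.Ico 0 R))
    (hmaj : ∀ τ ∈ Set.Icc (0:ℝ) 1, ∀ x ∈ Metric.ball xs κ,
      ‖(Ring.inverse (F' xs)).comp (F' x - F' (xs + τ • (x - xs)))‖ ≤
        f' ‖x - xs‖ - f' (τ * ‖x - xs‖))
    (ν : ℝ) (hν : ν = sSup {t | t ∈ Set.Ico 0 R ∧ f' t < 0})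
    (ϑ ω₁ ω₂ lam : ℝ)
    (hϑ0 : 0 ≤ ϑ) (hϑ1 : ϑ < 1) (hω₂0 : 0 ≤ ω₂) (hω₁₂ : ω₂ < ω₁)
    (hωϑ : ω₁ * ϑ + ω₂ < 1)
    (hlam0 : 0 ≤ lam) (hlam : lam < (1 - ω₂ - ω₁ * ϑ) / (ω₁ * (1 + ϑ)))
    (ρ : ℝ)
    (hρ : ρ = sSup {δ | δ ∈ Set.Ioo 0 ν ∧ ∀ t ∈ Set.Ioo 0 δ,
      ω₁ * (1 + ϑ) * (1 + lam) * (f t / (t * f' t) - 1)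
        + ω₁ * ((1 + ϑ) * lam + ϑ) + ω₂ < 1})
    (σ : ℝ) (hσ : σ = min κ ρ)
    (x : EuclideanSpace ℝ (Fin n)) (hx : x ∈ C ∩ Metric.ball xs σ) (hxne : x ≠ xs)
    (M P : EuclideanSpace ℝ (Fin n) →L[ℝ] EuclideanSpace ℝ (Fin n))
    (hM : IsUnit M) (hP : IsUnit P)
    (hM1 : ‖(Ring.inverse M).comp (F' x)‖ ≤ ω₁)
    (hM2 : ‖(Ring.inverse M).comp (F' x) - 1‖ ≤ ω₂)
    (η : ℝ) (hη : 0 ≤ η) (r : EuclideanSpace ℝ (Fin n))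
    (hres : ‖P r‖ ≤ η * ‖P (F x)‖)
    (hcond : η * (‖Ring.inverse (P.comp (F' x))‖ * ‖P.comp (F' x)‖) ≤ ϑ)
    (θ : ℝ) (hθ0 : 0 ≤ θ) (hθ : θ ≤ lam ^ 2 / 2)
    (xp : EuclideanSpace ℝ (Fin n)) (hxpC : xp ∈ C)
    (hxp : ‖xp - xs‖ ≤ ‖x - (Ring.inverse M) (F x - r) - xs‖
        + Real.sqrt (2 * θ) * ‖(Ring.inverse M) (F x - r)‖) :
    ‖xp - xs‖ ≤
      ω₁ * (1 + ϑ) * (1 + Real.sqrt (2 * θ))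
          * |‖x - xs‖ - f ‖x - xs‖ / f' ‖x - xs‖|
        + (ω₁ * ((1 + ϑ) * Real.sqrt (2 * θ) + ϑ) + ω₂) * ‖x - xs‖ ∧
      ω₁ * (1 + ϑ) * (1 + Real.sqrt (2 * θ))
          * |‖x - xs‖ - f ‖x - xs‖ / f' ‖x - xs‖|
        + (ω₁ * ((1 + ϑ) * Real.sqrt (2 * θ) + ϑ) + ω₂) * ‖x - xs‖ < ‖x - xs‖ := by
  classical
  obtain ⟨hxC, hxball⟩ := hx
  set u := x - xs with hu_def
  set t := ‖u‖ with ht_def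
  have ht0 : 0 < t := by
    rw [ht_def, hu_def]; exact norm_pos_iff.mpr (sub_ne_zero.mpr hxne)
  have htσ : t < σ := by
    have := Metric.mem_ball.mp hxball
    rwa [dist_eq_norm] at this
  have htκ : t < κ := lt_of_lt_of_le htσ (hσ ▸ min_le_left _ _)
  have htρ : t < ρ := lt_of_lt_of_le htσ (hσ ▸ min_le_right _ _)
  -- key scalar inequality from ρ
  have hSρne : {δ | δ ∈ Set.Ioo 0 ν ∧ ∀ s ∈ Set.Ioo 0 δ,
      ω₁ * (1 + ϑ) * (1 + lam) * (f s / (s * f' s) - 1)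
        + ω₁ * ((1 + ϑ) * lam + ϑ) + ω₂ < 1}.Nonempty := by
    by_contra h
    rw [Set.not_nonempty_iff_eq_empty] at h
    rw [hρ, h, Real.sSup_empty] at htρ; linarith
  obtain ⟨δ, ⟨hδν, hδkey⟩, htδ⟩ := exists_lt_of_lt_csSup hSρne (hρ ▸ htρ)
  have hkey := hδkey t ⟨ht0, htδ⟩
  have htν : t < ν := htδ.trans hδν.2
  -- f' t < 0
  have hSνne : {s | s ∈ Set.Ico 0 R ∧ f' s < 0}.Nonempty := by
    by_contra h
    rw [Set.not_nonempty_iff_eq_empty] at h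
    rw [hν, h, Real.sSup_empty] at htν; linarith
  obtain ⟨s, ⟨hsIco, hfs⟩, hts⟩ := exists_lt_of_lt_csSup hSνne (hν ▸ htν)
  have htR : t < R := hts.trans_le hsIco.2.le
  have ht_mem : t ∈ Set.Ico 0 R := ⟨ht0.le, htR⟩
  have hf't : f' t < 0 := (h2 ht_mem hsIco hts).trans hfs
  -- segment inside Ω
  have hSκne : {s | s ∈ Set.Ico 0 R ∧ Metric.ball xs s ⊆ Ω}.Nonempty := by
    by_contra h
    rw [Set.not_nonempty_iff_eq_empty] at h
    rw [hκ, h, Real.sSup_empty] at htκ; linarith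
  obtain ⟨t', ⟨ht'Ico, ht'Ω⟩, htt'⟩ := exists_lt_of_lt_csSup hSκne (hκ ▸ htκ)
  have hseg : ∀ τ : ℝ, τ ∈ Set.Icc (0:ℝ) 1 → xs + τ • u ∈ Ω := by
    intro τ hτ
    apply ht'Ω
    rw [Metric.mem_ball, dist_eq_norm]
    have h1 : ‖xs + τ • u - xs‖ = τ * t := by
      rw [add_sub_cancel_left, norm_smul, Real.norm_eq_abs, abs_of_nonneg hτ.1, ht_def]
    rw [h1]
    calc τ * t ≤ 1 * t := by nlinarith [hτ.2]
    _ < t' := by linarith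
  have hxκ : x ∈ Metric.ball xs κ := by rw [Metric.mem_ball, dist_eq_norm]; exact htκ
  -- notation
  set A := Ring.inverse (F' xs) with hA_def
  -- bound from majorant at τ = 0
  have hJ1 : ‖A * F' x - 1‖ ≤ f' t + 1 := by
    have e0 := hmaj 0 (by norm_num) x hxκ
    rw [zero_smul, add_zero, zero_mul, h1b, ContinuousLinearMap.comp_sub] at e0
    rw [← ContinuousLinearMap.mul_def, ← ContinuousLinearMap.mul_def,
      Ring.inverse_mul_cancel _ hinv] at e0
    rw [← ht_def] at e0
    linarith [e0]
  -- Banach lemma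
  set J := A * F' x with hJ_def
  have hJsub : ‖1 - J‖ < 1 := by rw [norm_sub_rev]; linarith [hJ1]
  have hJunit : IsUnit J := by
    have h := isUnit_one_sub_of_norm_lt_one hJsub
    simpa using h
  have hFxunit : IsUnit (F' x) := by
    have h : F' x = F' xs * J := by
      rw [hJ_def, hA_def, ← mul_assoc, Ring.mul_inverse_cancel _ hinv, one_mul]
    rw [h]; exact hinv.mul hJunit
  set Jinv := Ring.inverse J with hJinv_def
  have hJJ : J * Jinv = 1 := Ring.mul_inverse_cancel _ hJunit
  have hJinv_norm : ‖Jinv‖ ≤ 1 / (-(f' t)) := by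
    have h1 : Jinv = 1 + (1 - J) * Jinv := by
      rw [sub_mul, one_mul, hJJ]; abel
    have h2 : ‖Jinv‖ ≤ 1 + (f' t + 1) * ‖Jinv‖ := by
      calc ‖Jinv‖ = ‖1 + (1 - J) * Jinv‖ := by rw [← h1]
      _ ≤ ‖(1 : EuclideanSpace ℝ (Fin n) →L[ℝ] EuclideanSpace ℝ (Fin n))‖
          + ‖(1 - J) * Jinv‖ := norm_add_le _ _
      _ ≤ 1 + ‖1 - J‖ * ‖Jinv‖ := by
          gcongr
          · rw [ContinuousLinearMap.one_def]; exact ContinuousLinearMap.norm_id_le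
          · exact norm_mul_le _ _
      _ ≤ 1 + (f' t + 1) * ‖Jinv‖ := by
          have hn : ‖1 - J‖ ≤ f' t + 1 := by rw [norm_sub_rev]; exact hJ1
          nlinarith [norm_nonneg Jinv]
    rw [le_div_iff₀ (by linarith : (0:ℝ) < -(f' t))]
    nlinarith [norm_nonneg Jinv]
  -- inverse of F' x
  set N := Ring.inverse (F' x) with hN_def
  have hNone : N * F' x = 1 := Ring.inverse_mul_cancel _ hFxunit
  have hFxN : F' x * N = 1 := Ring.mul_inverse_cancel _ hFxunit
  have hN_eq : N = Jinv * A := by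
    have hba : (Jinv * A) * F' x = 1 := by
      rw [mul_assoc, ← hJ_def, hJinv_def]
      exact Ring.inverse_mul_cancel _ hJunit
    calc N = 1 * N := (one_mul _).symm
    _ = ((Jinv * A) * F' x) * N := by rw [hba]
    _ = (Jinv * A) * (F' x * N) := by rw [mul_assoc]
    _ = Jinv * A := by rw [hFxN, mul_one]
  have hNv : ∀ v, ‖N v‖ ≤ (1 / (-(f' t))) * ‖A v‖ := by
    intro v
    rw [hN_eq, ContinuousLinearMap.mul_apply]
    calc ‖Jinv (A v)‖ ≤ ‖Jinv‖ * ‖A v‖ := Jinv.le_opNorm _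
    _ ≤ (1 / (-(f' t))) * ‖A v‖ := by
        exact mul_le_mul_of_nonneg_right hJinv_norm (norm_nonneg _)
  -- derivative of g on [0,1]
  have hg : ∀ τ ∈ Set.Icc (0:ℝ) 1,
      HasDerivAt (fun τ : ℝ => A (F (xs + τ • u)) - τ • (A ((F' x) u)))
        (A ((F' (xs + τ • u)) u) - A ((F' x) u)) τ := by
    intro τ hτ
    have hz : xs + τ • u ∈ Ω := hseg τ hτ
    have hc : HasDerivAt (fun τ : ℝ => xs + τ • u) u τ := by
      simpa using ((hasDerivAt_id τ).smul_const u).const_add xs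
    have hF : HasDerivAt (fun τ : ℝ => F (xs + τ • u)) ((F' (xs + τ • u)) u) τ :=
      (hFderiv _ hz).comp_hasDerivAt τ hc
    have hAF : HasDerivAt (fun τ : ℝ => A (F (xs + τ • u)))
        (A ((F' (xs + τ • u)) u)) τ := A.hasFDerivAt.comp_hasDerivAt τ hF
    have hlin2 : HasDerivAt (fun τ : ℝ => τ • (A ((F' x) u))) (A ((F' x) u)) τ := by
      simpa using (hasDerivAt_id τ).smul_const (A ((F' x) u))
    exact hAF.sub hlin2
  -- boundary function B
  have hBderiv : ∀ τ ∈ Set.Ico (0:ℝ) 1,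
      HasDerivWithinAt (fun τ : ℝ => τ * (t * f' t) - f (τ * t))
        (t * f' t - f' (τ * t) * t) (Set.Ici τ) τ := by
    intro τ hτ
    have h1 : HasDerivWithinAt (fun τ : ℝ => τ * (t * f' t)) (t * f' t) (Set.Ici τ) τ :=
      (hasDerivAt_mul_const (t * f' t)).hasDerivWithinAt
    have hmem : τ * t ∈ Set.Ico 0 R :=
      ⟨mul_nonneg hτ.1 ht0.le, lt_of_le_of_lt (by nlinarith [hτ.2.le] : τ * t ≤ t) htR⟩
    have hin : HasDerivWithinAt (fun τ : ℝ => τ * t) t (Set.Icc τ 1) τ :=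
      (hasDerivAt_mul_const t).hasDerivWithinAt
    have hmaps : Set.MapsTo (fun τ : ℝ => τ * t) (Set.Icc τ 1) (Set.Ico 0 R) := by
      intro s hs
      exact ⟨mul_nonneg (le_trans hτ.1 hs.1) ht0.le,
        lt_of_le_of_lt (by nlinarith [hs.2] : s * t ≤ t) htR⟩
    have h2 : HasDerivWithinAt (fun τ : ℝ => f (τ * t)) (f' (τ * t) * t) (Set.Icc τ 1) τ :=
      (hderiv _ hmem).comp τ hin hmaps
    have h2' : HasDerivWithinAt (fun τ : ℝ => f (τ * t)) (f' (τ * t) * t) (Set.Ici τ) τ :=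
      h2.mono_of_mem_nhdsWithin (Icc_mem_nhdsGE hτ.2)
    exact h1.sub h2'
  have hBcont : ContinuousOn (fun τ : ℝ => τ * (t * f' t) - f (τ * t)) (Set.Icc 0 1) := by
    apply ContinuousOn.sub
    · exact (continuousOn_id.mul continuousOn_const)
    · have hfc : ContinuousOn f (Set.Ico 0 R) := fun s hs =>
        ((hderiv s hs).differentiableWithinAt).continuousWithinAt
      apply hfc.comp ((continuous_id.mul continuous_const).continuousOn)
      intro τ hτ
      exact ⟨mul_nonneg hτ.1 ht0.le, lt_of_le_of_lt (by nlinarith [hτ.2] : τ * t ≤ t) htR⟩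
  -- bound on ‖g'‖
  have hgbound : ∀ τ ∈ Set.Ico (0:ℝ) 1,
      ‖A ((F' (xs + τ • u)) u) - A ((F' x) u)‖ ≤ t * f' t - f' (τ * t) * t := by
    intro τ hτ
    have h := hmaj τ ⟨hτ.1, hτ.2.le⟩ x hxκ
    rw [← hu_def, ← ht_def] at h
    have heq : A ((F' (xs + τ • u)) u) - A ((F' x) u)
        = -((A.comp (F' x - F' (xs + τ • u))) u) := by
      simp [ContinuousLinearMap.comp_apply, ContinuousLinearMap.sub_apply, map_sub]
    rw [heq, norm_neg]
    calc ‖(A.comp (F' x - F' (xs + τ • u))) u‖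
        ≤ ‖A.comp (F' x - F' (xs + τ • u))‖ * ‖u‖ := ContinuousLinearMap.le_opNorm _ _
    _ ≤ (f' t - f' (τ * t)) * t := by
        rw [← ht_def]; exact mul_le_mul_of_nonneg_right h ht0.le
    _ = t * f' t - f' (τ * t) * t := by ring
  -- fencing theorem
  have hmain := image_norm_le_of_norm_deriv_right_le_deriv_boundary'
    (f := fun τ : ℝ => A (F (xs + τ • u)) - τ • (A ((F' x) u)))
    (f' := fun τ : ℝ => A ((F' (xs + τ • u)) u) - A ((F' x) u))
    (a := 0) (b := 1)
    (fun τ hτ => (hg τ hτ).continuousAt.continuousWithinAt)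
    (fun τ hτ => ((hg τ ⟨hτ.1, hτ.2.le⟩).hasDerivWithinAt))
    (by simp [hFxs, h1a])
    hBcont hBderiv hgbound
  have hg1 := hmain (Set.right_mem_Icc.2 zero_le_one)
  have hlin : ‖A (F x - (F' x) u)‖ ≤ t * f' t - f t := by
    have h1 : xs + (1:ℝ) • u = x := by rw [one_smul, hu_def]; abel
    rw [h1, one_smul, one_mul, one_mul] at hg1
    rw [map_sub]
    exact hg1
  -- f t ≤ t * f' t
  have hftle : f t ≤ t * f' t := by
    have hB'0 : ∀ τ ∈ Set.Ico (0:ℝ) 1, ‖(0 : EuclideanSpace ℝ (Fin n))‖ ≤ t * f' t - f' (τ * t) * t := by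
      intro τ hτ
      have hmem : τ * t ∈ Set.Ico 0 R :=
        ⟨mul_nonneg hτ.1 ht0.le, lt_of_le_of_lt (by nlinarith [hτ.2.le] : τ * t ≤ t) htR⟩
      have hle : f' (τ * t) ≤ f' t :=
        h2.monotoneOn hmem ht_mem (by nlinarith [hτ.2.le] : τ * t ≤ t)
      simp; nlinarith
    have h0 := image_norm_le_of_norm_deriv_right_le_deriv_boundary'
      (f := fun _ : ℝ => (0 : EuclideanSpace ℝ (Fin n)))
      (f' := fun _ : ℝ => (0 : EuclideanSpace ℝ (Fin n)))
      (a := 0) (b := 1)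
      continuousOn_const
      (fun τ _ => hasDerivWithinAt_const _ _ _)
      (by simp [h1a])
      hBcont hBderiv hB'0 (Set.right_mem_Icc.2 zero_le_one)
    simp at h0; linarith
  -- the quantity e
  set e := (t * f' t - f t) / (-(f' t)) with he_def
  have he0 : 0 ≤ e := div_nonneg (by linarith) (by linarith)
  have hf'ne : f' t ≠ 0 := ne_of_lt hf't
  have he_eq : |t - f t / f' t| = e := by
    rw [abs_of_nonpos]
    · rw [he_def, eq_div_iff (by linarith : -f' t ≠ 0)]
      field_simp
    · rw [sub_nonpos, le_div_iff_of_neg hf't]; linarith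
  -- bound on N applied to linearization error
  have hNlin : ‖N (F x - (F' x) u)‖ ≤ e := by
    calc ‖N (F x - (F' x) u)‖ ≤ (1 / (-(f' t))) * ‖A (F x - (F' x) u)‖ := hNv _
    _ ≤ (1 / (-(f' t))) * (t * f' t - f t) := by
        exact mul_le_mul_of_nonneg_left hlin (div_nonneg zero_le_one (by linarith))
    _ = e := by rw [he_def]; ring
  have hNFx_eq : N (F x) = N (F x - (F' x) u) + u := by
    have h : N ((F' x) u) = u := by
      rw [← ContinuousLinearMap.mul_apply, hNone, ContinuousLinearMap.one_apply]
    rw [map_sub, h]; abel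
  have hNFx : ‖N (F x)‖ ≤ e + t := by
    rw [hNFx_eq]
    exact (norm_add_le _ _).trans (add_le_add hNlin (le_of_eq ht_def.symm))
  -- residual bound through P
  have hPFx : IsUnit (P.comp (F' x)) := by
    rw [← ContinuousLinearMap.mul_def]; exact hP.mul hFxunit
  set Q := Ring.inverse (P.comp (F' x)) with hQ_def
  have hQP : Q * P = N := by
    have h1 : (Q * P) * F' x = 1 := by
      rw [mul_assoc, ContinuousLinearMap.mul_def P (F' x), hQ_def]
      exact Ring.inverse_mul_cancel _ hPFx
    calc Q * P = (Q * P) * (F' x * N) := by rw [hFxN, mul_one]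
    _ = ((Q * P) * F' x) * N := by rw [← mul_assoc]
    _ = N := by rw [h1, one_mul]
  have hNr : ‖N r‖ ≤ ϑ * ‖N (F x)‖ := by
    have h1 : ‖N r‖ ≤ ‖Q‖ * ‖P r‖ := by
      rw [← hQP, ContinuousLinearMap.mul_apply]; exact Q.le_opNorm _
    have h2 : ‖P (F x)‖ ≤ ‖P.comp (F' x)‖ * ‖N (F x)‖ := by
      have h : P (F x) = (P.comp (F' x)) (N (F x)) := by
        rw [ContinuousLinearMap.comp_apply]
        congr 1
        rw [← ContinuousLinearMap.mul_apply, hFxN, ContinuousLinearMap.one_apply]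
      rw [h]; exact ContinuousLinearMap.le_opNorm _ _
    calc ‖N r‖ ≤ ‖Q‖ * ‖P r‖ := h1
    _ ≤ ‖Q‖ * (η * ‖P (F x)‖) := mul_le_mul_of_nonneg_left hres (norm_nonneg _)
    _ ≤ ‖Q‖ * (η * (‖P.comp (F' x)‖ * ‖N (F x)‖)) := by
        apply mul_le_mul_of_nonneg_left _ (norm_nonneg _)
        exact mul_le_mul_of_nonneg_left h2 hη
    _ = (η * (‖Q‖ * ‖P.comp (F' x)‖)) * ‖N (F x)‖ := by ring
    _ ≤ ϑ * ‖N (F x)‖ := mul_le_mul_of_nonneg_right hcond (norm_nonneg _)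
  -- M side
  have hω₁ : 0 < ω₁ := lt_of_le_of_lt hω₂0 hω₁₂
  set K := (Ring.inverse M).comp (F' x) with hK_def
  have hMiv : ∀ v, (Ring.inverse M) v = K (N v) := by
    intro v
    rw [hK_def, ContinuousLinearMap.comp_apply]
    congr 1
    rw [← ContinuousLinearMap.mul_apply, hFxN, ContinuousLinearMap.one_apply]
  have hNr' : ‖N r‖ ≤ ϑ * (e + t) :=
    hNr.trans (mul_le_mul_of_nonneg_left hNFx hϑ0)
  have hMr : ‖(Ring.inverse M) r‖ ≤ ω₁ * (ϑ * (e + t)) := by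
    rw [hMiv r]
    calc ‖K (N r)‖ ≤ ‖K‖ * ‖N r‖ := K.le_opNorm _
    _ ≤ ω₁ * (ϑ * (e + t)) :=
        mul_le_mul hM1 hNr' (norm_nonneg _) hω₁.le
  have hMFx : ‖(Ring.inverse M) (F x)‖ ≤ ω₁ * (e + t) := by
    rw [hMiv (F x)]
    calc ‖K (N (F x))‖ ≤ ‖K‖ * ‖N (F x)‖ := K.le_opNorm _
    _ ≤ ω₁ * (e + t) := mul_le_mul hM1 hNFx (norm_nonneg _) hω₁.le
  -- main vector decomposition
  set w := N (F x - (F' x) u) with hw_def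
  have hv1 : x - (Ring.inverse M) (F x - r) - xs
      = (u - K u) - K w + (Ring.inverse M) r := by
    rw [map_sub (Ring.inverse M) (F x) r, hMiv (F x), hNFx_eq,
      map_add K w u, hu_def]
    abel
  have hKu : ‖u - K u‖ ≤ ω₂ * t := by
    have h : u - K u = -((K - 1) u) := by
      simp [ContinuousLinearMap.sub_apply, ContinuousLinearMap.one_apply]
    rw [h, norm_neg]
    calc ‖(K - 1) u‖ ≤ ‖K - 1‖ * ‖u‖ := ContinuousLinearMap.le_opNorm _ _
    _ ≤ ω₂ * t := by
        rw [← ht_def]; exact mul_le_mul_of_nonneg_right hM2 (by positivity)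
  have hKw : ‖K w‖ ≤ ω₁ * e := by
    calc ‖K w‖ ≤ ‖K‖ * ‖w‖ := K.le_opNorm _
    _ ≤ ω₁ * e := mul_le_mul hM1 hNlin (norm_nonneg _) hω₁.le
  have hv1n : ‖x - (Ring.inverse M) (F x - r) - xs‖
      ≤ ω₂ * t + ω₁ * e + ω₁ * (ϑ * (e + t)) := by
    rw [hv1]
    calc ‖(u - K u) - K w + (Ring.inverse M) r‖
        ≤ ‖(u - K u) - K w‖ + ‖(Ring.inverse M) r‖ := norm_add_le _ _
    _ ≤ (‖u - K u‖ + ‖K w‖) + ‖(Ring.inverse M) r‖ := by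
        exact add_le_add_left (norm_sub_le _ _) _
    _ ≤ ω₂ * t + ω₁ * e + ω₁ * (ϑ * (e + t)) := by
        exact add_le_add (add_le_add hKu hKw) hMr
  have hv2n : ‖(Ring.inverse M) (F x - r)‖ ≤ ω₁ * (1 + ϑ) * (e + t) := by
    rw [map_sub]
    calc ‖(Ring.inverse M) (F x) - (Ring.inverse M) r‖
        ≤ ‖(Ring.inverse M) (F x)‖ + ‖(Ring.inverse M) r‖ := norm_sub_le _ _
    _ ≤ ω₁ * (e + t) + ω₁ * (ϑ * (e + t)) := add_le_add hMFx hMr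
    _ = ω₁ * (1 + ϑ) * (e + t) := by ring
  -- combine
  set c := Real.sqrt (2 * θ) with hc_def
  have hc0 : 0 ≤ c := Real.sqrt_nonneg _
  have hpart1 : ‖xp - xs‖ ≤ ω₁ * (1 + ϑ) * (1 + c) * e
      + (ω₁ * ((1 + ϑ) * c + ϑ) + ω₂) * t := by
    calc ‖xp - xs‖ ≤ ‖x - (Ring.inverse M) (F x - r) - xs‖
        + c * ‖(Ring.inverse M) (F x - r)‖ := hxp
    _ ≤ (ω₂ * t + ω₁ * e + ω₁ * (ϑ * (e + t))) + c * (ω₁ * (1 + ϑ) * (e + t)) :=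
        add_le_add hv1n (mul_le_mul_of_nonneg_left hv2n hc0)
    _ = ω₁ * (1 + ϑ) * (1 + c) * e + (ω₁ * ((1 + ϑ) * c + ϑ) + ω₂) * t := by ring
  -- strict inequality
  have hclam : c ≤ lam := by
    have h := Real.sqrt_le_sqrt (by linarith : 2 * θ ≤ lam ^ 2)
    rwa [Real.sqrt_sq hlam0] at h
  have hden : t * f' t < 0 := mul_neg_of_pos_of_neg ht0 hf't
  have hq : 0 ≤ f t / (t * f' t) - 1 := by
    rw [sub_nonneg, le_div_iff_of_neg hden]; linarith
  have he2 : e = t * (f t / (t * f' t) - 1) := by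
    rw [he_def, div_eq_iff (by linarith : -f' t ≠ 0)]
    field_simp
    ring
  have hpart2 : ω₁ * (1 + ϑ) * (1 + c) * e
      + (ω₁ * ((1 + ϑ) * c + ϑ) + ω₂) * t < t := by
    rw [he2]
    exact stmt_9_aux ω₁ ϑ ω₂ lam c _ t hω₁ hϑ0 hq ht0 hc0 hclam hkey
  rw [he_eq]
  exact ⟨hpart1, hpart2⟩
end

section
/- In the majorant setting, with the INL-CondG sequence assumptions (M_k s_k = −F(x_k) + r_k; ‖M_k⁻¹F'(x_k)‖ ≤ ω₁; ‖M_k⁻¹F'(x_k) − I‖ ≤ ω₂; ‖P_k r_k‖ ≤ η_k‖P_k F(x_k)‖; η_k·cond(P_k F'(x_k)) ≤ ϑ; x_{k+1} ∈ C with ‖x_{k+1} − x*‖ ≤ ‖x_k + s_k − x*‖ + √(2θ_k)‖s_k‖), {θ_k} ⊂ [0, λ²/2], and x₀ ∈ C ∩ B(x*, σ), x₀ ≠ x*, we have limsup_{k→∞} ‖x_{k+1} − x*‖/‖x_k − x*‖ ≤ ω₁[(1+ϑ)√(2θ̃) + ϑ] + ω₂, where θ̃ := limsup_{k→∞} θ_k.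 -/
open Filter Set Metric Topology MeasureTheory

/-- Majorant Newton-error function: `(t f'(t) - f(t)) / (-f'(t))`. -/
noncomputable def err11 (f f' : ℝ → ℝ) (t : ℝ) : ℝ := (t * f' t - f t) / (-f' t)

set_option maxHeartbeats 2000000 in
theorem stmt_11 (n : ℕ) (Ω : Set (EuclideanSpace ℝ (Fin n))) (hΩ : IsOpen Ω)
    (C : Set (EuclideanSpace ℝ (Fin n))) (hCne : C.Nonempty)
    (hCconv : Convex ℝ C) (hCcomp : IsCompact C) (hCΩ : C ⊆ Ω)
    (F : EuclideanSpace ℝ (Fin n) → EuclideanSpace ℝ (Fin n))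
    (F' : EuclideanSpace ℝ (Fin n) →
      (EuclideanSpace ℝ (Fin n) →L[ℝ] EuclideanSpace ℝ (Fin n)))
    (hFderiv : ∀ x ∈ Ω, HasFDerivAt F (F' x) x)
    (hFcont : ContinuousOn F' Ω)
    (xs : EuclideanSpace ℝ (Fin n)) (hxsC : xs ∈ C) (hFxs : F xs = 0)
    (hinv : IsUnit (F' xs))
    (R : ℝ) (hR : 0 < R)
    (κ : ℝ) (hκ : κ = sSup {t | t ∈ Set.Ico 0 R ∧ Metric.ball xs t ⊆ Ω})
    (f f' : ℝ → ℝ)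
    (hderiv : ∀ t ∈ Set.Ico 0 R, HasDerivWithinAt f (f' t) (Set.Ico 0 R) t)
    (hcont : ContinuousOn f' (Set.Ico 0 R))
    (h1a : f 0 = 0) (h1b : f' 0 = -1)
    (h2 : StrictMonoOn f' (Set.Ico 0 R))
    (hmaj : ∀ τ ∈ Set.Icc (0:ℝ) 1, ∀ x ∈ Metric.ball xs κ,
      ‖(Ring.inverse (F' xs)).comp (F' x - F' (xs + τ • (x - xs)))‖ ≤
        f' ‖x - xs‖ - f' (τ * ‖x - xs‖))
    (ν : ℝ) (hν : ν = sSup {t | t ∈ Set.Ico 0 R ∧ f' t < 0})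
    (ϑ ω₁ ω₂ lam : ℝ)
    (hϑ0 : 0 ≤ ϑ) (hϑ1 : ϑ < 1) (hω₂0 : 0 ≤ ω₂) (hω₁₂ : ω₂ < ω₁)
    (hωϑ : ω₁ * ϑ + ω₂ < 1)
    (hlam0 : 0 ≤ lam) (hlam : lam < (1 - ω₂ - ω₁ * ϑ) / (ω₁ * (1 + ϑ)))
    (ρ : ℝ)
    (hρ : ρ = sSup {δ | δ ∈ Set.Ioo 0 ν ∧ ∀ t ∈ Set.Ioo 0 δ,
      ω₁ * (1 + ϑ) * (1 + lam) * (f t / (t * f' t) - 1)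
        + ω₁ * ((1 + ϑ) * lam + ϑ) + ω₂ < 1})
    (σ : ℝ) (hσ : σ = min κ ρ)
    (x s r : ℕ → EuclideanSpace ℝ (Fin n))
    (M P : ℕ → (EuclideanSpace ℝ (Fin n) →L[ℝ] EuclideanSpace ℝ (Fin n)))
    (η θ : ℕ → ℝ)
    (hθ : ∀ k, θ k ∈ Set.Icc 0 (lam ^ 2 / 2))
    (hx0 : x 0 ∈ C ∩ Metric.ball xs σ) (hx0ne : x 0 ≠ xs)
    (hM : ∀ k, IsUnit (M k)) (hP : ∀ k, IsUnit (P k)) (hη : ∀ k, 0 ≤ η k)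
    (hstep : ∀ k, (M k) (s k) = -F (x k) + r k)
    (hM1 : ∀ k, ‖(Ring.inverse (M k)).comp (F' (x k))‖ ≤ ω₁)
    (hM2 : ∀ k, ‖(Ring.inverse (M k)).comp (F' (x k)) - 1‖ ≤ ω₂)
    (hres : ∀ k, ‖(P k) (r k)‖ ≤ η k * ‖(P k) (F (x k))‖)
    (hcond : ∀ k, η k * (‖Ring.inverse ((P k).comp (F' (x k)))‖
      * ‖(P k).comp (F' (x k))‖) ≤ ϑ)
    (hxC : ∀ k, x (k + 1) ∈ C)
    (hcondg : ∀ k, ‖x (k + 1) - xs‖ ≤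
      ‖x k + s k - xs‖ + Real.sqrt (2 * θ k) * ‖s k‖) :
    Filter.limsup (fun k => ‖x (k + 1) - xs‖ / ‖x k - xs‖) Filter.atTop ≤
      ω₁ * ((1 + ϑ) * Real.sqrt (2 * Filter.limsup θ Filter.atTop) + ϑ) + ω₂ := by
  rcases Nat.eq_zero_or_pos n with hn | hn
  · subst hn
    exact absurd (Subsingleton.elim (x 0) xs) hx0ne
  haveI : Nonempty (Fin n) := ⟨⟨0, hn⟩⟩
  haveI : Nontrivial (EuclideanSpace ℝ (Fin n)) := inferInstance
  -- notation
  -- basic positivity facts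
  have hω₁pos : 0 < ω₁ := lt_of_le_of_lt hω₂0 hω₁₂
  have h1ϑpos : (0:ℝ) < 1 + ϑ := by linarith
  have h1lpos : (0:ℝ) < 1 + lam := by linarith
  -- facts about ν, κ, ρ, σ
  have hν0 : 0 ≤ ν := hν ▸ Real.sSup_nonneg (fun u hu => hu.1.1)
  have hνR : ν ≤ R := by
    rw [hν]; exact Real.sSup_le (fun u hu => le_of_lt hu.1.2) hR.le
  have hfneg : ∀ t : ℝ, 0 ≤ t → t < ν → f' t < 0 := by
    intro t h0 hlt
    have hne : {u : ℝ | u ∈ Set.Ico 0 R ∧ f' u < 0}.Nonempty := by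
      by_contra h
      rw [Set.not_nonempty_iff_eq_empty] at h
      rw [hν, h, Real.sSup_empty] at hlt
      linarith
    obtain ⟨u, hu, htu⟩ := exists_lt_of_lt_csSup hne (hν ▸ hlt)
    have h3 : f' t < f' u := h2 ⟨h0, htu.trans hu.1.2⟩ hu.1 htu
    linarith [hu.2]
  have hρν : ρ ≤ ν := by
    rw [hρ]; exact Real.sSup_le (fun u hu => le_of_lt hu.1.2) hν0
  have hσκ : σ ≤ κ := hσ ▸ min_le_left _ _
  have hσρ : σ ≤ ρ := hσ ▸ min_le_right _ _
  have hσν : σ ≤ ν := hσρ.trans hρν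
  have hballΩ : Metric.ball xs κ ⊆ Ω := by
    intro y hy
    rw [Metric.mem_ball] at hy
    have hne : {t : ℝ | t ∈ Set.Ico 0 R ∧ Metric.ball xs t ⊆ Ω}.Nonempty :=
      ⟨0, ⟨⟨le_refl 0, hR⟩, by rw [Metric.ball_zero]; exact Set.empty_subset Ω⟩⟩
    obtain ⟨u, hu, hyu⟩ := exists_lt_of_lt_csSup hne (hκ ▸ hy)
    exact hu.2 (Metric.mem_ball.mpr hyu)
  have hρprop : ∀ t : ℝ, 0 < t → t < ρ →
      ω₁ * (1 + ϑ) * (1 + lam) * (f t / (t * f' t) - 1)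
        + ω₁ * ((1 + ϑ) * lam + ϑ) + ω₂ < 1 := by
    intro t h0 hlt
    have hne : {δ : ℝ | δ ∈ Set.Ioo 0 ν ∧ ∀ t ∈ Set.Ioo 0 δ,
        ω₁ * (1 + ϑ) * (1 + lam) * (f t / (t * f' t) - 1)
          + ω₁ * ((1 + ϑ) * lam + ϑ) + ω₂ < 1}.Nonempty := by
      by_contra h
      rw [Set.not_nonempty_iff_eq_empty] at h
      rw [hρ, h, Real.sSup_empty] at hlt
      linarith
    obtain ⟨δ, hδ, htδ⟩ := exists_lt_of_lt_csSup hne (hρ ▸ hlt)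
    exact hδ.2 t ⟨h0, htδ⟩
  have hx0ball : ‖x 0 - xs‖ < σ := mem_ball_iff_norm.mp hx0.2
  have hσ0 : 0 < σ := lt_of_le_of_lt (norm_nonneg _) hx0ball
  -- scalar majorant facts
  have hfc : ContinuousOn f (Set.Ico 0 R) := fun u hu => (hderiv u hu).continuousWithinAt
  have hmono : MonotoneOn f' (Set.Ico 0 R) := h2.monotoneOn
  have hIccsub : ∀ t : ℝ, t < R → Set.Icc (0:ℝ) t ⊆ Set.Ico 0 R :=
    fun t htR u hu => ⟨hu.1, lt_of_le_of_lt hu.2 htR⟩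
  have hf'int : ∀ t : ℝ, 0 ≤ t → t < R → IntervalIntegrable f' volume 0 t := by
    intro t h0 htR
    apply ContinuousOn.intervalIntegrable
    rw [Set.uIcc_of_le h0]
    exact hcont.mono (hIccsub t htR)
  have hFTC : ∀ t : ℝ, 0 ≤ t → t < R → ∫ u in (0:ℝ)..t, f' u = f t := by
    intro t h0 htR
    have h := intervalIntegral.integral_eq_sub_of_hasDeriv_right_of_le h0
      (hfc.mono (hIccsub t htR))
      (fun u hu => by
        have hu' : u ∈ Set.Ico (0:ℝ) R := ⟨hu.1.le, hu.2.trans htR⟩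
        have := (hderiv u hu').hasDerivAt (Ico_mem_nhds hu.1 hu'.2)
        exact this.hasDerivWithinAt)
      (hf'int t h0 htR)
    rw [h, h1a, sub_zero]
  have hf'm1 : ∀ t : ℝ, 0 ≤ t → t < R → -1 ≤ f' t := by
    intro t h0 htR
    rw [← h1b]
    exact hmono ⟨le_refl 0, hR⟩ ⟨h0, htR⟩ h0
  have hfle : ∀ t : ℝ, 0 ≤ t → t < R → f t ≤ t * f' t := by
    intro t h0 htR
    rw [← hFTC t h0 htR]
    calc ∫ u in (0:ℝ)..t, f' u ≤ ∫ _ in (0:ℝ)..t, f' t :=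
          intervalIntegral.integral_mono_on h0 (hf'int t h0 htR) intervalIntegrable_const
            (fun u hu => hmono ⟨hu.1, lt_of_le_of_lt hu.2 htR⟩ ⟨h0, htR⟩ hu.2)
      _ = t * f' t := by simp [mul_comm]
  have hfge : ∀ t : ℝ, 0 ≤ t → t < R → -t ≤ f t := by
    intro t h0 htR
    rw [← hFTC t h0 htR]
    calc (-t : ℝ) = ∫ _ in (0:ℝ)..t, (-1 : ℝ) := by simp
      _ ≤ ∫ u in (0:ℝ)..t, f' u :=
          intervalIntegral.integral_mono_on h0 intervalIntegrable_const (hf'int t h0 htR)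
            (fun u hu => hf'm1 u hu.1 (lt_of_le_of_lt hu.2 htR))
  have herr0 : ∀ t : ℝ, 0 ≤ t → t < ν → 0 ≤ err11 f f' t := by
    intro t h0 htν
    have h1 := hfle t h0 (htν.trans_le hνR)
    have h2' := hfneg t h0 htν
    exact div_nonneg (by linarith) (by linarith)
  have herrbar : ∀ t : ℝ, 0 ≤ t → t < ν →
      err11 f f' t ≤ ((f' t + 1) / (-f' t)) * t := by
    intro t h0 htν
    have h1 := hfge t h0 (htν.trans_le hνR)
    have h2' := hfneg t h0 htν
    have hnum : t * f' t - f t ≤ (f' t + 1) * t := by nlinarith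
    calc err11 f f' t ≤ ((f' t + 1) * t) / (-f' t) := by
          unfold err11
          exact div_le_div_of_nonneg_right hnum (by linarith) |>.trans_eq rfl
      _ = ((f' t + 1) / (-f' t)) * t := by ring
  have hΦident : ∀ t : ℝ, 0 < t → t < ν →
      ω₁ * (1 + ϑ) * (1 + lam) * err11 f f' t
        = (ω₁ * (1 + ϑ) * (1 + lam) * (f t / (t * f' t) - 1)) * t := by
    intro t h0 htν
    have h2' := hfneg t h0.le htν
    unfold err11
    field_simp [h0.ne', h2'.ne]
    ring
  -- applying CLM inverses
  have hTinv1 : ∀ (T : EuclideanSpace ℝ (Fin n) →L[ℝ] EuclideanSpace ℝ (Fin n)),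
      IsUnit T → ∀ v, T (Ring.inverse T v) = v := by
    intro T hT v
    have h := Ring.mul_inverse_cancel T hT
    calc T (Ring.inverse T v) = (T * Ring.inverse T) v := (ContinuousLinearMap.mul_apply _ _ _).symm
      _ = (1 : EuclideanSpace ℝ (Fin n) →L[ℝ] EuclideanSpace ℝ (Fin n)) v := by rw [h]
      _ = v := ContinuousLinearMap.one_apply _
  have hTinv2 : ∀ (T : EuclideanSpace ℝ (Fin n) →L[ℝ] EuclideanSpace ℝ (Fin n)),
      IsUnit T → ∀ v, Ring.inverse T (T v) = v := by
    intro T hT v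
    have h := Ring.inverse_mul_cancel T hT
    calc Ring.inverse T (T v) = (Ring.inverse T * T) v := (ContinuousLinearMap.mul_apply _ _ _).symm
      _ = (1 : EuclideanSpace ℝ (Fin n) →L[ℝ] EuclideanSpace ℝ (Fin n)) v := by rw [h]
      _ = v := ContinuousLinearMap.one_apply _
  -- THE KEY LEMMA
  have hkey : ∀ y : EuclideanSpace ℝ (Fin n), ‖y - xs‖ < σ →
      IsUnit (F' y) ∧ ‖y - xs - Ring.inverse (F' y) (F y)‖ ≤ err11 f f' ‖y - xs‖ := by
    intro y hyσ
    have ht0 : 0 ≤ ‖y - xs‖ := norm_nonneg _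
    have htν : ‖y - xs‖ < ν := hyσ.trans_le hσν
    have htκ : ‖y - xs‖ < κ := hyσ.trans_le hσκ
    have htR : ‖y - xs‖ < R := htν.trans_le hνR
    have hf't : f' ‖y - xs‖ < 0 := hfneg _ ht0 htν
    have hf'm : -1 ≤ f' ‖y - xs‖ := hf'm1 _ ht0 htR
    have hyball : y ∈ Metric.ball xs κ := mem_ball_iff_norm.mpr htκ
    -- step 1 : Banach perturbation lemma
    have hmaj0 := hmaj 0 ⟨le_refl 0, zero_le_one⟩ y hyball
    simp only [zero_smul, add_zero, zero_mul, h1b, sub_neg_eq_add] at hmaj0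
    have hone : Ring.inverse (F' xs) * F' xs = 1 := Ring.inverse_mul_cancel _ hinv
    have hsub1 : (1 : EuclideanSpace ℝ (Fin n) →L[ℝ] EuclideanSpace ℝ (Fin n))
        - Ring.inverse (F' xs) * F' y
        = -((Ring.inverse (F' xs)).comp (F' y - F' xs)) := by
      calc (1 : EuclideanSpace ℝ (Fin n) →L[ℝ] EuclideanSpace ℝ (Fin n))
          - Ring.inverse (F' xs) * F' y
          = Ring.inverse (F' xs) * F' xs - Ring.inverse (F' xs) * F' y := by rw [hone]
        _ = -(Ring.inverse (F' xs) * (F' y - F' xs)) := by rw [mul_sub, neg_sub]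
        _ = -((Ring.inverse (F' xs)).comp (F' y - F' xs)) := rfl
    have hznorm : ‖(1 : EuclideanSpace ℝ (Fin n) →L[ℝ] EuclideanSpace ℝ (Fin n))
        - Ring.inverse (F' xs) * F' y‖ ≤ f' ‖y - xs‖ + 1 := by
      rw [hsub1, norm_neg]; linarith [hmaj0]
    have hzlt : ‖(1 : EuclideanSpace ℝ (Fin n) →L[ℝ] EuclideanSpace ℝ (Fin n))
        - Ring.inverse (F' xs) * F' y‖ < 1 := hznorm.trans_lt (by linarith)
    have hDu : IsUnit (Ring.inverse (F' xs) * F' y) := by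
      have := isUnit_one_sub_of_norm_lt_one hzlt
      rwa [sub_sub_cancel] at this
    have hDinv_norm : ‖Ring.inverse (Ring.inverse (F' xs) * F' y)‖ ≤ (-f' ‖y - xs‖)⁻¹ := by
      have hgeo : Ring.inverse (Ring.inverse (F' xs) * F' y)
          = ∑' i : ℕ, ((1 : EuclideanSpace ℝ (Fin n) →L[ℝ] EuclideanSpace ℝ (Fin n))
              - Ring.inverse (F' xs) * F' y) ^ i := by
        rw [geom_series_eq_inverse _ hzlt, sub_sub_cancel]
      have hbd := tsum_geometric_le_of_norm_lt_one _ hzlt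
      have hn1 : ‖(1 : EuclideanSpace ℝ (Fin n) →L[ℝ] EuclideanSpace ℝ (Fin n))‖ = 1 := by
        rw [ContinuousLinearMap.one_def]; exact ContinuousLinearMap.norm_id
      rw [hn1] at hbd
      rw [hgeo]
      refine hbd.trans ?_
      have hpos : 0 < -f' ‖y - xs‖ := by linarith
      have hle2 : -f' ‖y - xs‖ ≤ 1 - ‖(1 : EuclideanSpace ℝ (Fin n) →L[ℝ] EuclideanSpace ℝ (Fin n))
          - Ring.inverse (F' xs) * F' y‖ := by linarith
      have := one_div_le_one_div_of_le hpos hle2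
      rw [one_div, one_div] at this
      linarith
    have hFy_eq : F' xs * (Ring.inverse (F' xs) * F' y) = F' y := by
      rw [← mul_assoc, Ring.mul_inverse_cancel _ hinv, one_mul]
    have hFu : IsUnit (F' y) := hFy_eq ▸ hinv.mul hDu
    have hFinv : Ring.inverse (F' y)
        = Ring.inverse (Ring.inverse (F' xs) * F' y) * Ring.inverse (F' xs) := by
      have hl : (Ring.inverse (Ring.inverse (F' xs) * F' y) * Ring.inverse (F' xs)) * F' y = 1 := by
        rw [mul_assoc]
        exact Ring.inverse_mul_cancel _ hDu
      calc Ring.inverse (F' y) = 1 * Ring.inverse (F' y) := (one_mul _).symm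
        _ = ((Ring.inverse (Ring.inverse (F' xs) * F' y) * Ring.inverse (F' xs)) * F' y)
            * Ring.inverse (F' y) := by rw [hl]
        _ = (Ring.inverse (Ring.inverse (F' xs) * F' y) * Ring.inverse (F' xs))
            * (F' y * Ring.inverse (F' y)) := by rw [mul_assoc]
        _ = Ring.inverse (Ring.inverse (F' xs) * F' y) * Ring.inverse (F' xs) := by
            rw [Ring.mul_inverse_cancel _ hFu, mul_one]
    -- step 2 : fundamental theorem of calculus along the segment
    have hseg : ∀ τ : ℝ, τ ∈ Set.Icc (0:ℝ) 1 → xs + τ • (y - xs) ∈ Metric.ball xs κ := by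
      intro τ hτ
      rw [mem_ball_iff_norm]
      have hid : xs + τ • (y - xs) - xs = τ • (y - xs) := by abel
      rw [hid, norm_smul, Real.norm_of_nonneg hτ.1]
      calc τ * ‖y - xs‖ ≤ 1 * ‖y - xs‖ := mul_le_mul_of_nonneg_right hτ.2 ht0
        _ = ‖y - xs‖ := one_mul _
        _ < κ := htκ
    have hsegΩ : ∀ τ : ℝ, τ ∈ Set.Icc (0:ℝ) 1 → xs + τ • (y - xs) ∈ Ω :=
      fun τ hτ => hballΩ (hseg τ hτ)
    have hγcont : Continuous (fun τ : ℝ => xs + τ • (y - xs)) := by fun_prop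
    have hDFcont : ContinuousOn (fun τ : ℝ => (F' (xs + τ • (y - xs))) (y - xs))
        (Set.Icc (0:ℝ) 1) :=
      (hFcont.comp hγcont.continuousOn (fun τ hτ => hsegΩ τ hτ)).clm_apply continuousOn_const
    have hint1 : IntervalIntegrable (fun τ : ℝ => (F' (xs + τ • (y - xs))) (y - xs))
        volume 0 1 := by
      apply ContinuousOn.intervalIntegrable
      rw [Set.uIcc_of_le zero_le_one]
      exact hDFcont
    have hFy' : F y = ∫ τ in (0:ℝ)..1, (F' (xs + τ • (y - xs))) (y - xs) := by
      have hder : ∀ τ ∈ Set.uIcc (0:ℝ) 1,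
          HasDerivAt (fun τ : ℝ => F (xs + τ • (y - xs)))
            ((F' (xs + τ • (y - xs))) (y - xs)) τ := by
        intro τ hτ
        rw [Set.uIcc_of_le zero_le_one] at hτ
        have hγ : HasDerivAt (fun τ : ℝ => xs + τ • (y - xs)) (y - xs) τ := by
          have h := ((hasDerivAt_id τ).smul_const (y - xs)).const_add xs
          simpa using h
        have := (hFderiv _ (hsegΩ τ hτ)).comp_hasDerivAt τ hγ
        exact this
      have h := intervalIntegral.integral_eq_sub_of_hasDerivAt hder hint1
      rw [h]
      simp [hFxs]
    have hAFy : Ring.inverse (F' xs) (F y)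
        = ∫ τ in (0:ℝ)..1, Ring.inverse (F' xs) ((F' (xs + τ • (y - xs))) (y - xs)) := by
      rw [hFy']
      exact ((Ring.inverse (F' xs)).intervalIntegral_comp_comm hint1).symm
    have hint2 : IntervalIntegrable
        (fun τ : ℝ => Ring.inverse (F' xs) ((F' (xs + τ • (y - xs))) (y - xs))) volume 0 1 := by
      apply ContinuousOn.intervalIntegrable
      rw [Set.uIcc_of_le zero_le_one]
      exact (Ring.inverse (F' xs)).continuous.comp_continuousOn hDFcont
    have hVT : Ring.inverse (F' xs) ((F' y) (y - xs)) - Ring.inverse (F' xs) (F y)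
        = ∫ τ in (0:ℝ)..1,
            ((Ring.inverse (F' xs)).comp (F' y - F' (xs + τ • (y - xs)))) (y - xs) := by
      have hconst : Ring.inverse (F' xs) ((F' y) (y - xs))
          = ∫ _ in (0:ℝ)..1, Ring.inverse (F' xs) ((F' y) (y - xs)) := by
        rw [intervalIntegral.integral_const]; simp
      rw [hconst, hAFy, ← intervalIntegral.integral_sub intervalIntegrable_const hint2]
      apply intervalIntegral.integral_congr
      intro τ _
      simp only [ContinuousLinearMap.comp_apply, ContinuousLinearMap.sub_apply, map_sub]
      abel
    -- step 3 : bounding the integral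
    have hf'c2 : ContinuousOn (fun τ : ℝ => (f' ‖y - xs‖ - f' (τ * ‖y - xs‖)) * ‖y - xs‖)
        (Set.Icc (0:ℝ) 1) := by
      apply ContinuousOn.mul _ continuousOn_const
      apply ContinuousOn.sub continuousOn_const
      apply hcont.comp (Continuous.continuousOn (by fun_prop))
      intro τ hτ
      exact ⟨mul_nonneg hτ.1 ht0, lt_of_le_of_lt
        (by calc τ * ‖y - xs‖ ≤ 1 * ‖y - xs‖ := mul_le_mul_of_nonneg_right hτ.2 ht0
              _ = ‖y - xs‖ := one_mul _) htR⟩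
    have hgint : IntervalIntegrable
        (fun τ : ℝ => (f' ‖y - xs‖ - f' (τ * ‖y - xs‖)) * ‖y - xs‖) volume 0 1 := by
      apply ContinuousOn.intervalIntegrable
      rw [Set.uIcc_of_le zero_le_one]
      exact hf'c2
    have hVnorm : ‖Ring.inverse (F' xs) ((F' y) (y - xs)) - Ring.inverse (F' xs) (F y)‖
        ≤ ‖y - xs‖ * f' ‖y - xs‖ - f ‖y - xs‖ := by
      rw [hVT]
      have hbd := intervalIntegral.norm_integral_le_abs_of_norm_le
        (f := fun τ : ℝ =>
          ((Ring.inverse (F' xs)).comp (F' y - F' (xs + τ • (y - xs)))) (y - xs))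
        (g := fun τ : ℝ => (f' ‖y - xs‖ - f' (τ * ‖y - xs‖)) * ‖y - xs‖)
        (μ := volume) (a := 0) (b := 1) ?_ hgint
      · refine hbd.trans ?_
        have hval : ∫ τ in (0:ℝ)..1, (f' ‖y - xs‖ - f' (τ * ‖y - xs‖)) * ‖y - xs‖
            = ‖y - xs‖ * f' ‖y - xs‖ - f ‖y - xs‖ := by
          have hcomp : IntervalIntegrable (fun τ : ℝ => f' (τ * ‖y - xs‖) * ‖y - xs‖)
              volume 0 1 := by
            apply ContinuousOn.intervalIntegrable
            rw [Set.uIcc_of_le zero_le_one]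
            apply ContinuousOn.mul _ continuousOn_const
            apply hcont.comp (Continuous.continuousOn (by fun_prop))
            intro τ hτ
            exact ⟨mul_nonneg hτ.1 ht0, lt_of_le_of_lt
              (by calc τ * ‖y - xs‖ ≤ 1 * ‖y - xs‖ := mul_le_mul_of_nonneg_right hτ.2 ht0
                    _ = ‖y - xs‖ := one_mul _) htR⟩
          have hsplit : ∫ τ in (0:ℝ)..1, (f' ‖y - xs‖ - f' (τ * ‖y - xs‖)) * ‖y - xs‖
              = (∫ _ in (0:ℝ)..1, f' ‖y - xs‖ * ‖y - xs‖)
                - ∫ τ in (0:ℝ)..1, f' (τ * ‖y - xs‖) * ‖y - xs‖ := by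
            rw [← intervalIntegral.integral_sub intervalIntegrable_const hcomp]
            apply intervalIntegral.integral_congr
            intro τ _
            ring
          rw [hsplit]
          have hsubst : ∫ τ in (0:ℝ)..1, f' (τ * ‖y - xs‖) * ‖y - xs‖ = f ‖y - xs‖ := by
            have h := intervalIntegral.smul_integral_comp_mul_right f' ‖y - xs‖
              (a := (0:ℝ)) (b := 1)
            simp only [zero_mul, one_mul, smul_eq_mul] at h
            rw [intervalIntegral.integral_mul_const, mul_comm]
            rw [h, hFTC _ ht0 htR]
          rw [hsubst]
          simp [mul_comm]
        rw [hval, abs_of_nonneg]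
        have := hfle _ ht0 htR
        linarith
      · apply MeasureTheory.ae_restrict_of_forall_mem measurableSet_uIoc
        intro τ hτ
        rw [Set.uIoc_of_le zero_le_one] at hτ
        have hτ' : τ ∈ Set.Icc (0:ℝ) 1 := ⟨hτ.1.le, hτ.2⟩
        have hm := hmaj τ hτ' y hyball
        calc ‖((Ring.inverse (F' xs)).comp (F' y - F' (xs + τ • (y - xs)))) (y - xs)‖
            ≤ ‖(Ring.inverse (F' xs)).comp (F' y - F' (xs + τ • (y - xs)))‖ * ‖y - xs‖ :=
              ContinuousLinearMap.le_opNorm _ _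
          _ ≤ (f' ‖y - xs‖ - f' (τ * ‖y - xs‖)) * ‖y - xs‖ :=
              mul_le_mul_of_nonneg_right hm ht0
    -- step 4 : conclusion
    refine ⟨hFu, ?_⟩
    have hNid : y - xs - Ring.inverse (F' y) (F y)
        = Ring.inverse (Ring.inverse (F' xs) * F' y)
            (Ring.inverse (F' xs) ((F' y) (y - xs)) - Ring.inverse (F' xs) (F y)) := by
      rw [map_sub]
      have hq1 : Ring.inverse (Ring.inverse (F' xs) * F' y)
          (Ring.inverse (F' xs) ((F' y) (y - xs))) = y - xs := by
        have h := hTinv2 _ hDu (y - xs)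
        rw [ContinuousLinearMap.mul_apply] at h
        exact h
      have hq2 : Ring.inverse (Ring.inverse (F' xs) * F' y)
          (Ring.inverse (F' xs) (F y)) = Ring.inverse (F' y) (F y) := by
        rw [hFinv, ContinuousLinearMap.mul_apply]
      rw [hq1, hq2]
    rw [hNid]
    have hpos : (0:ℝ) ≤ (-f' ‖y - xs‖)⁻¹ := by
      have : 0 < -f' ‖y - xs‖ := by linarith
      positivity
    calc ‖Ring.inverse (Ring.inverse (F' xs) * F' y)
          (Ring.inverse (F' xs) ((F' y) (y - xs)) - Ring.inverse (F' xs) (F y))‖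
        ≤ ‖Ring.inverse (Ring.inverse (F' xs) * F' y)‖
          * ‖Ring.inverse (F' xs) ((F' y) (y - xs)) - Ring.inverse (F' xs) (F y)‖ :=
          ContinuousLinearMap.le_opNorm _ _
      _ ≤ (-f' ‖y - xs‖)⁻¹ * (‖y - xs‖ * f' ‖y - xs‖ - f ‖y - xs‖) :=
          mul_le_mul hDinv_norm hVnorm (norm_nonneg _) hpos
      _ = err11 f f' ‖y - xs‖ := by
          unfold err11
          rw [div_eq_mul_inv, mul_comm]
  -- the per-step estimate
  have hstep' : ∀ k, ‖x k - xs‖ < σ → ‖x (k + 1) - xs‖ ≤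
      ω₁ * (1 + ϑ) * (1 + Real.sqrt (2 * θ k)) * err11 f f' ‖x k - xs‖
        + (ω₁ * ((1 + ϑ) * Real.sqrt (2 * θ k) + ϑ) + ω₂) * ‖x k - xs‖ := by
    intro k hk
    obtain ⟨hFu, hN⟩ := hkey (x k) hk
    have herrnn : 0 ≤ err11 f f' ‖x k - xs‖ := herr0 _ (norm_nonneg _) (hk.trans_le hσν)
    set W : EuclideanSpace ℝ (Fin n) →L[ℝ] EuclideanSpace ℝ (Fin n) :=
      (Ring.inverse (M k)).comp (F' (x k)) with hWdef
    have hWmul : W = Ring.inverse (M k) * F' (x k) := rfl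
    have hMinv : ∀ v, Ring.inverse (M k) v = W (Ring.inverse (F' (x k)) v) := by
      intro v
      rw [hWdef, ContinuousLinearMap.comp_apply, hTinv1 _ hFu]
    -- expression for s k
    have hsk : s k = W (Ring.inverse (F' (x k)) (r k))
        - W (Ring.inverse (F' (x k)) (F (x k))) := by
      have h0 : s k = Ring.inverse (M k) ((M k) (s k)) := (hTinv2 _ (hM k) _).symm
      rw [h0, hstep k, map_add, map_neg, hMinv, hMinv]
      abel
    -- decomposition of x k + s k - xs
    have hdecomp : x k + s k - xs
        = W (x k - xs - Ring.inverse (F' (x k)) (F (x k)))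
          + ((1 : EuclideanSpace ℝ (Fin n) →L[ℝ] EuclideanSpace ℝ (Fin n)) - W) (x k - xs)
          + W (Ring.inverse (F' (x k)) (r k)) := by
      rw [hsk]
      simp only [map_sub, ContinuousLinearMap.sub_apply, ContinuousLinearMap.one_apply]
      abel
    -- residual bound
    have hQu : IsUnit ((P k).comp (F' (x k))) := by
      rw [show (P k).comp (F' (x k)) = P k * F' (x k) from rfl]
      exact (hP k).mul hFu
    have hQinv : Ring.inverse ((P k).comp (F' (x k)))
        = Ring.inverse (F' (x k)) * Ring.inverse (P k) := by
      have hl : (Ring.inverse (F' (x k)) * Ring.inverse (P k)) * ((P k).comp (F' (x k))) = 1 := by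
        rw [show (P k).comp (F' (x k)) = P k * F' (x k) from rfl]
        rw [mul_assoc, ← mul_assoc (Ring.inverse (P k)), Ring.inverse_mul_cancel _ (hP k),
          one_mul, Ring.inverse_mul_cancel _ hFu]
      calc Ring.inverse ((P k).comp (F' (x k)))
          = 1 * Ring.inverse ((P k).comp (F' (x k))) := (one_mul _).symm
        _ = ((Ring.inverse (F' (x k)) * Ring.inverse (P k)) * ((P k).comp (F' (x k))))
            * Ring.inverse ((P k).comp (F' (x k))) := by rw [hl]
        _ = (Ring.inverse (F' (x k)) * Ring.inverse (P k))
            * (((P k).comp (F' (x k))) * Ring.inverse ((P k).comp (F' (x k)))) := by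
            rw [mul_assoc]
        _ = Ring.inverse (F' (x k)) * Ring.inverse (P k) := by
            rw [Ring.mul_inverse_cancel _ hQu, mul_one]
    have hFr : Ring.inverse (F' (x k)) (r k)
        = Ring.inverse ((P k).comp (F' (x k))) ((P k) (r k)) := by
      rw [hQinv, ContinuousLinearMap.mul_apply, hTinv2 _ (hP k)]
    have hPF : (P k) (F (x k))
        = ((P k).comp (F' (x k))) (Ring.inverse (F' (x k)) (F (x k))) := by
      rw [ContinuousLinearMap.comp_apply, hTinv1 _ hFu]
    have hresid : ‖Ring.inverse (F' (x k)) (r k)‖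
        ≤ ϑ * ‖Ring.inverse (F' (x k)) (F (x k))‖ := by
      have h1 : ‖Ring.inverse (F' (x k)) (r k)‖
          ≤ ‖Ring.inverse ((P k).comp (F' (x k)))‖ * ‖(P k) (r k)‖ := by
        rw [hFr]; exact ContinuousLinearMap.le_opNorm _ _
      have h2' : ‖(P k) (r k)‖ ≤ η k * ‖(P k) (F (x k))‖ := hres k
      have h3 : ‖(P k) (F (x k))‖
          ≤ ‖(P k).comp (F' (x k))‖ * ‖Ring.inverse (F' (x k)) (F (x k))‖ := by
        rw [hPF]; exact ContinuousLinearMap.le_opNorm _ _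
      have h4 := hcond k
      have h5 : 0 ≤ ‖Ring.inverse ((P k).comp (F' (x k)))‖ := norm_nonneg _
      have h6 : 0 ≤ ‖(P k).comp (F' (x k))‖ := norm_nonneg _
      have h7 : 0 ≤ η k := hη k
      have h8 : 0 ≤ ‖Ring.inverse (F' (x k)) (F (x k))‖ := norm_nonneg _
      calc ‖Ring.inverse (F' (x k)) (r k)‖
          ≤ ‖Ring.inverse ((P k).comp (F' (x k)))‖ * (η k * ‖(P k) (F (x k))‖) :=
            h1.trans (mul_le_mul_of_nonneg_left h2' h5)
        _ ≤ ‖Ring.inverse ((P k).comp (F' (x k)))‖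
            * (η k * (‖(P k).comp (F' (x k))‖ * ‖Ring.inverse (F' (x k)) (F (x k))‖)) := by
            apply mul_le_mul_of_nonneg_left _ h5
            exact mul_le_mul_of_nonneg_left h3 h7
        _ = (η k * (‖Ring.inverse ((P k).comp (F' (x k)))‖ * ‖(P k).comp (F' (x k))‖))
            * ‖Ring.inverse (F' (x k)) (F (x k))‖ := by ring
        _ ≤ ϑ * ‖Ring.inverse (F' (x k)) (F (x k))‖ :=
            mul_le_mul_of_nonneg_right h4 h8
    -- bound on ‖Finv F‖
    have hFF : ‖Ring.inverse (F' (x k)) (F (x k))‖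
        ≤ ‖x k - xs‖ + err11 f f' ‖x k - xs‖ := by
      have hid : Ring.inverse (F' (x k)) (F (x k))
          = (x k - xs) - (x k - xs - Ring.inverse (F' (x k)) (F (x k))) := by abel
      rw [hid]
      exact (norm_sub_le _ _).trans (add_le_add le_rfl hN)
    -- norm bounds on the three pieces
    have hWn : ‖W‖ ≤ ω₁ := hM1 k
    have hW1n : ‖(1 : EuclideanSpace ℝ (Fin n) →L[ℝ] EuclideanSpace ℝ (Fin n)) - W‖ ≤ ω₂ := by
      rw [norm_sub_rev]; exact hM2 k
    have hb1 : ‖W (x k - xs - Ring.inverse (F' (x k)) (F (x k)))‖ ≤ ω₁ * err11 f f' ‖x k - xs‖ :=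
      (ContinuousLinearMap.le_opNorm _ _).trans
        (mul_le_mul hWn hN (norm_nonneg _) hω₁pos.le)
    have hb2 : ‖((1 : EuclideanSpace ℝ (Fin n) →L[ℝ] EuclideanSpace ℝ (Fin n)) - W) (x k - xs)‖
        ≤ ω₂ * ‖x k - xs‖ :=
      (ContinuousLinearMap.le_opNorm _ _).trans
        (mul_le_mul_of_nonneg_right hW1n (norm_nonneg _))
    have hb3 : ‖W (Ring.inverse (F' (x k)) (r k))‖
        ≤ ω₁ * (ϑ * (‖x k - xs‖ + err11 f f' ‖x k - xs‖)) := by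
      refine (ContinuousLinearMap.le_opNorm _ _).trans ?_
      have := hresid.trans (mul_le_mul_of_nonneg_left hFF hϑ0)
      exact mul_le_mul hWn this (norm_nonneg _) hω₁pos.le
    have hb4 : ‖W (Ring.inverse (F' (x k)) (F (x k)))‖
        ≤ ω₁ * (‖x k - xs‖ + err11 f f' ‖x k - xs‖) := by
      refine (ContinuousLinearMap.le_opNorm _ _).trans ?_
      exact mul_le_mul hWn hFF (norm_nonneg _) hω₁pos.le
    have hxw : ‖x k + s k - xs‖ ≤ ω₁ * err11 f f' ‖x k - xs‖ + ω₂ * ‖x k - xs‖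
        + ω₁ * (ϑ * (‖x k - xs‖ + err11 f f' ‖x k - xs‖)) := by
      rw [hdecomp]
      exact (norm_add₃_le).trans (by linarith)
    have hsnorm : ‖s k‖ ≤ ω₁ * (1 + ϑ) * (‖x k - xs‖ + err11 f f' ‖x k - xs‖) := by
      rw [hsk]
      refine (norm_sub_le _ _).trans ?_
      have h5 := hb3
      have h6 := hb4
      nlinarith [norm_nonneg (x k - xs)]
    have hu0 : 0 ≤ Real.sqrt (2 * θ k) := Real.sqrt_nonneg _
    calc ‖x (k + 1) - xs‖ ≤ ‖x k + s k - xs‖ + Real.sqrt (2 * θ k) * ‖s k‖ := hcondg k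
      _ ≤ (ω₁ * err11 f f' ‖x k - xs‖ + ω₂ * ‖x k - xs‖
            + ω₁ * (ϑ * (‖x k - xs‖ + err11 f f' ‖x k - xs‖)))
          + Real.sqrt (2 * θ k) * (ω₁ * (1 + ϑ) * (‖x k - xs‖ + err11 f f' ‖x k - xs‖)) :=
        add_le_add hxw (mul_le_mul_of_nonneg_left hsnorm hu0)
      _ = ω₁ * (1 + ϑ) * (1 + Real.sqrt (2 * θ k)) * err11 f f' ‖x k - xs‖
          + (ω₁ * ((1 + ϑ) * Real.sqrt (2 * θ k) + ϑ) + ω₂) * ‖x k - xs‖ := by ring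
  -- sqrt bound
  have hu_le : ∀ k, Real.sqrt (2 * θ k) ≤ lam := by
    intro k
    have h := (hθ k).2
    calc Real.sqrt (2 * θ k) ≤ Real.sqrt (lam ^ 2) := Real.sqrt_le_sqrt (by linarith)
      _ = lam := Real.sqrt_sq hlam0
  -- lam-uniform estimate
  have hmain : ∀ k, ‖x k - xs‖ < σ → ‖x (k + 1) - xs‖ ≤
      ω₁ * (1 + ϑ) * (1 + lam) * err11 f f' ‖x k - xs‖
        + (ω₁ * ((1 + ϑ) * lam + ϑ) + ω₂) * ‖x k - xs‖ := by
    intro k hk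
    refine le_trans (hstep' k hk) ?_
    have h1 : 0 ≤ err11 f f' ‖x k - xs‖ := herr0 _ (norm_nonneg _) (hk.trans_le hσν)
    have h2' : Real.sqrt (2 * θ k) ≤ lam := hu_le k
    have h3 : 0 ≤ ‖x k - xs‖ := norm_nonneg _
    have h4 : 0 ≤ ω₁ * (1 + ϑ) * ((lam - Real.sqrt (2 * θ k)) * (err11 f f' ‖x k - xs‖ + ‖x k - xs‖)) := by
      apply mul_nonneg (by positivity)
      exact mul_nonneg (by linarith) (by linarith)
    nlinarith [h4]
  -- ball invariance and decrease
  have hdec : ∀ k, ‖x k - xs‖ < σ → ‖x (k + 1) - xs‖ ≤ ‖x k - xs‖ ∧ ‖x (k + 1) - xs‖ < σ := by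
    intro k hk
    rcases eq_or_lt_of_le (norm_nonneg (x k - xs)) with h0 | h0
    · have herr00 : err11 f f' ‖x k - xs‖ = 0 := by
        rw [← h0]; unfold err11; rw [h1a]; simp
      have h := hmain k hk
      rw [herr00, ← h0] at h
      simp only [mul_zero, zero_add] at h
      constructor
      · calc ‖x (k + 1) - xs‖ ≤ 0 := by linarith
          _ ≤ ‖x k - xs‖ := norm_nonneg _
      · calc ‖x (k + 1) - xs‖ ≤ 0 := by linarith
          _ < σ := hσ0
    · have hΦ := hρprop ‖x k - xs‖ h0 (lt_of_lt_of_le hk hσρ)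
      have hid := hΦident ‖x k - xs‖ h0 (hk.trans_le hσν)
      have h := hmain k hk
      have hkey2 : ‖x (k + 1) - xs‖ ≤ (ω₁ * (1 + ϑ) * (1 + lam) * (f ‖x k - xs‖ / (‖x k - xs‖ * f' ‖x k - xs‖) - 1)
          + ω₁ * ((1 + ϑ) * lam + ϑ) + ω₂) * ‖x k - xs‖ := by
        rw [hid] at h; linarith [h]
      have hlt : ‖x (k + 1) - xs‖ < ‖x k - xs‖ := by
        calc ‖x (k + 1) - xs‖ ≤ _ := hkey2
          _ < 1 * ‖x k - xs‖ := by
            apply mul_lt_mul_of_pos_right hΦ h0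
          _ = ‖x k - xs‖ := one_mul _
      exact ⟨hlt.le, hlt.trans hk⟩
  have hball : ∀ k, ‖x k - xs‖ < σ := by
    intro k
    induction k with
    | zero => exact hx0ball
    | succ k ih => exact (hdec k ih).2
  have hanti : ∀ k, ‖x (k + 1) - xs‖ ≤ ‖x k - xs‖ := fun k => (hdec k (hball k)).1
  -- convergence to zero
  have htend : Tendsto (fun k => ‖x k - xs‖) atTop (𝓝 0) := by
    by_cases hzero : ∃ K, ‖x K - xs‖ = 0
    · obtain ⟨K, hK⟩ := hzero
      have hall : ∀ m, K ≤ m → ‖x m - xs‖ = 0 := by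
        intro m hm
        induction m, hm using Nat.le_induction with
        | base => exact hK
        | succ m hm ih =>
          exact le_antisymm (le_trans (hanti m) (le_of_eq ih)) (norm_nonneg _)
      exact tendsto_atTop_of_eventually_const hall
    · push_neg at hzero
      have hpos : ∀ k, 0 < ‖x k - xs‖ :=
        fun k => (norm_nonneg _).lt_of_ne (Ne.symm (hzero k))
      have hAnti : Antitone fun k => ‖x k - xs‖ := antitone_nat_of_succ_le hanti
      have hbdd : BddBelow (Set.range fun k => ‖x k - xs‖) := by
        refine ⟨0, ?_⟩
        rintro v ⟨k, rfl⟩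
        exact norm_nonneg _
      have htendL : Tendsto (fun k => ‖x k - xs‖) atTop (𝓝 (⨅ k, ‖x k - xs‖)) :=
        tendsto_atTop_ciInf hAnti hbdd
      have hL0 : (0:ℝ) ≤ ⨅ k, ‖x k - xs‖ := le_ciInf fun k => norm_nonneg _
      rcases eq_or_lt_of_le hL0 with h0 | h0
      · rwa [← h0] at htendL
      · exfalso
        set L := ⨅ k, ‖x k - xs‖ with hLdef
        have hLt : ∀ k, L ≤ ‖x k - xs‖ := fun k => ciInf_le hbdd k
        have hLσ : L < σ := lt_of_le_of_lt (hLt 0) (hball 0)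
        have hLν : L < ν := hLσ.trans_le hσν
        have hLR : L < R := hLν.trans_le hνR
        have hf'L : f' L < 0 := hfneg L h0.le hLν
        have hmemL : Set.Ico 0 R ∈ 𝓝 L :=
          Filter.mem_of_superset (isOpen_Ioo.mem_nhds ⟨h0, hLR⟩) Set.Ioo_subset_Ico_self
        have hfLc : ContinuousAt f L := (hfc L ⟨h0.le, hLR⟩).continuousAt hmemL
        have hf'Lc : ContinuousAt f' L := (hcont L ⟨h0.le, hLR⟩).continuousAt hmemL
        have hfdne : L * f' L ≠ 0 := mul_ne_zero h0.ne' hf'L.ne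
        have hftd : Tendsto (fun k => f ‖x k - xs‖) atTop (𝓝 (f L)) :=
          hfLc.tendsto.comp htendL
        have hf'td : Tendsto (fun k => f' ‖x k - xs‖) atTop (𝓝 (f' L)) :=
          hf'Lc.tendsto.comp htendL
        have hΦtend : Tendsto (fun k =>
            (ω₁ * (1 + ϑ) * (1 + lam) * (f ‖x k - xs‖ / (‖x k - xs‖ * f' ‖x k - xs‖) - 1)
              + ω₁ * ((1 + ϑ) * lam + ϑ) + ω₂) * ‖x k - xs‖) atTop
            (𝓝 ((ω₁ * (1 + ϑ) * (1 + lam) * (f L / (L * f' L) - 1)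
              + ω₁ * ((1 + ϑ) * lam + ϑ) + ω₂) * L)) := by
          apply Tendsto.mul _ htendL
          apply Tendsto.add_const
          apply Tendsto.add_const
          apply Tendsto.const_mul
          apply Tendsto.sub_const
          exact hftd.div (htendL.mul hf'td) hfdne
        have htend1 : Tendsto (fun k => ‖x (k + 1) - xs‖) atTop (𝓝 L) :=
          htendL.comp (tendsto_add_atTop_nat 1)
        have hineq : ∀ k, ‖x (k + 1) - xs‖ ≤
            (ω₁ * (1 + ϑ) * (1 + lam) * (f ‖x k - xs‖ / (‖x k - xs‖ * f' ‖x k - xs‖) - 1)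
              + ω₁ * ((1 + ϑ) * lam + ϑ) + ω₂) * ‖x k - xs‖ := by
          intro k
          have h := hmain k (hball k)
          have hid := hΦident ‖x k - xs‖ (hpos k) ((hball k).trans_le hσν)
          rw [hid] at h
          linarith [h]
        have hle := le_of_tendsto_of_tendsto' htend1 hΦtend hineq
        have hΦL := hρprop L h0 (lt_of_lt_of_le hLσ hσρ)
        have hfin : (ω₁ * (1 + ϑ) * (1 + lam) * (f L / (L * f' L) - 1)
            + ω₁ * ((1 + ϑ) * lam + ϑ) + ω₂) * L < 1 * L :=
          mul_lt_mul_of_pos_right hΦL h0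
        rw [one_mul] at hfin
        linarith
  -- final limsup computation
  have hθbdd : Filter.IsBoundedUnder (· ≤ ·) atTop θ :=
    ⟨lam ^ 2 / 2, Filter.eventually_map.mpr (Filter.Eventually.of_forall fun k => (hθ k).2)⟩
  have hθt0 : 0 ≤ Filter.limsup θ Filter.atTop :=
    le_limsup_of_frequently_le (Filter.Frequently.of_forall fun k => (hθ k).1) hθbdd
  have hsqθnn : 0 ≤ Real.sqrt (2 * Filter.limsup θ Filter.atTop) := Real.sqrt_nonneg _
  have hRHS0 : 0 ≤ ω₁ * ((1 + ϑ) * Real.sqrt (2 * Filter.limsup θ Filter.atTop) + ϑ) + ω₂ := by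
    have h1 : 0 ≤ (1 + ϑ) * Real.sqrt (2 * Filter.limsup θ Filter.atTop) + ϑ := by positivity
    nlinarith
  apply le_of_forall_pos_le_add
  intro ε hε
  have hcb : Filter.IsCoboundedUnder (· ≤ ·) atTop (fun k => ‖x (k + 1) - xs‖ / ‖x k - xs‖) :=
    isCoboundedUnder_le_of_le atTop (x := 0) fun k => div_nonneg (norm_nonneg _) (norm_nonneg _)
  refine Filter.limsup_le_of_le hcb ?_
  have hc₁pos : (0:ℝ) < ω₁ * (1 + ϑ) * (1 + lam) := by positivity
  have hc₂pos : (0:ℝ) < ω₁ * (1 + ϑ) := by positivity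
  -- eventual smallness of the error quotient
  have hebar_tend : Tendsto (fun k => (f' ‖x k - xs‖ + 1) / (-f' ‖x k - xs‖)) atTop (𝓝 0) := by
    have h1 : Tendsto (fun k => ‖x k - xs‖) atTop (𝓝[Set.Ico 0 R] 0) :=
      tendsto_nhdsWithin_of_tendsto_nhds_of_eventually_within _ htend
        (Filter.Eventually.of_forall fun k =>
          ⟨norm_nonneg _, ((hball k).trans_le hσν).trans_le hνR⟩)
    have hf'td : Tendsto (fun k => f' ‖x k - xs‖) atTop (𝓝 (f' 0)) :=
      ((hcont 0 ⟨le_refl 0, hR⟩).tendsto).comp h1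
    rw [h1b] at hf'td
    have := (hf'td.add_const 1).div hf'td.neg (by norm_num : -(-1:ℝ) ≠ 0)
    have hlim0 : ((-1:ℝ) + 1) / -(-1) = 0 := by norm_num
    rw [hlim0] at this
    exact this
  have hev1 : ∀ᶠ k in atTop,
      (f' ‖x k - xs‖ + 1) / (-f' ‖x k - xs‖) < ε / (2 * (ω₁ * (1 + ϑ) * (1 + lam))) :=
    hebar_tend.eventually_lt_const (by positivity)
  -- eventual bound on θ
  have hδpos : (0:ℝ) < (ε / (2 * (ω₁ * (1 + ϑ)))) ^ 2 / 2 := by positivity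
  have hev2 : ∀ᶠ k in atTop,
      θ k < Filter.limsup θ Filter.atTop + (ε / (2 * (ω₁ * (1 + ϑ)))) ^ 2 / 2 :=
    eventually_lt_of_limsup_lt (by linarith) hθbdd
  filter_upwards [hev1, hev2] with k h1 h2
  rcases eq_or_lt_of_le (norm_nonneg (x k - xs)) with h0 | h0
  · rw [← h0, div_zero]
    linarith
  · -- sqrt bound from h2
    have hsq : Real.sqrt (2 * θ k)
        ≤ Real.sqrt (2 * Filter.limsup θ Filter.atTop) + ε / (2 * (ω₁ * (1 + ϑ))) := by
      have hb : 2 * θ k ≤ 2 * Filter.limsup θ Filter.atTop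
          + (ε / (2 * (ω₁ * (1 + ϑ)))) ^ 2 := by linarith
      have hsum : 2 * Filter.limsup θ Filter.atTop + (ε / (2 * (ω₁ * (1 + ϑ)))) ^ 2
          ≤ (Real.sqrt (2 * Filter.limsup θ Filter.atTop) + ε / (2 * (ω₁ * (1 + ϑ)))) ^ 2 := by
        have hs1 := Real.sq_sqrt (show (0:ℝ) ≤ 2 * Filter.limsup θ Filter.atTop by linarith)
        have hd : (0:ℝ) ≤ ε / (2 * (ω₁ * (1 + ϑ))) := by positivity
        nlinarith [mul_nonneg hsqθnn hd]
      calc Real.sqrt (2 * θ k)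
          ≤ Real.sqrt ((Real.sqrt (2 * Filter.limsup θ Filter.atTop)
              + ε / (2 * (ω₁ * (1 + ϑ)))) ^ 2) := Real.sqrt_le_sqrt (hb.trans hsum)
        _ = _ := Real.sqrt_sq (by positivity)
    rw [div_le_iff₀ h0]
    have hst := hstep' k (hball k)
    have herrle := herrbar ‖x k - xs‖ (norm_nonneg _) ((hball k).trans_le hσν)
    have herrnn := herr0 ‖x k - xs‖ (norm_nonneg _) ((hball k).trans_le hσν)
    have hu0 : 0 ≤ Real.sqrt (2 * θ k) := Real.sqrt_nonneg _
    have hulam := hu_le k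
    have herrsmall : err11 f f' ‖x k - xs‖
        ≤ (ε / (2 * (ω₁ * (1 + ϑ) * (1 + lam)))) * ‖x k - xs‖ :=
      herrle.trans (mul_le_mul_of_nonneg_right h1.le (norm_nonneg _))
    calc ‖x (k + 1) - xs‖
        ≤ ω₁ * (1 + ϑ) * (1 + Real.sqrt (2 * θ k)) * err11 f f' ‖x k - xs‖
          + (ω₁ * ((1 + ϑ) * Real.sqrt (2 * θ k) + ϑ) + ω₂) * ‖x k - xs‖ := hst
      _ ≤ ω₁ * (1 + ϑ) * (1 + lam) * ((ε / (2 * (ω₁ * (1 + ϑ) * (1 + lam)))) * ‖x k - xs‖)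
          + (ω₁ * ((1 + ϑ) * (Real.sqrt (2 * Filter.limsup θ Filter.atTop)
              + ε / (2 * (ω₁ * (1 + ϑ)))) + ϑ) + ω₂) * ‖x k - xs‖ := by
          have hA : ω₁ * (1 + ϑ) * (1 + Real.sqrt (2 * θ k)) * err11 f f' ‖x k - xs‖
              ≤ ω₁ * (1 + ϑ) * (1 + lam) * ((ε / (2 * (ω₁ * (1 + ϑ) * (1 + lam)))) * ‖x k - xs‖) := by
            calc ω₁ * (1 + ϑ) * (1 + Real.sqrt (2 * θ k)) * err11 f f' ‖x k - xs‖
                ≤ ω₁ * (1 + ϑ) * (1 + lam) * err11 f f' ‖x k - xs‖ := by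
                  have hprod : 0 ≤ ω₁ * (1 + ϑ)
                      * ((lam - Real.sqrt (2 * θ k)) * err11 f f' ‖x k - xs‖) :=
                    mul_nonneg (by positivity) (mul_nonneg (by linarith) herrnn)
                  nlinarith [hprod]
              _ ≤ _ := mul_le_mul_of_nonneg_left herrsmall hc₁pos.le
          have hB : (ω₁ * ((1 + ϑ) * Real.sqrt (2 * θ k) + ϑ) + ω₂) * ‖x k - xs‖
              ≤ (ω₁ * ((1 + ϑ) * (Real.sqrt (2 * Filter.limsup θ Filter.atTop)
                  + ε / (2 * (ω₁ * (1 + ϑ)))) + ϑ) + ω₂) * ‖x k - xs‖ := by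
            apply mul_le_mul_of_nonneg_right _ (norm_nonneg _)
            nlinarith [hsq]
          linarith
      _ = (ω₁ * ((1 + ϑ) * Real.sqrt (2 * Filter.limsup θ Filter.atTop) + ϑ) + ω₂ + ε)
            * ‖x k - xs‖ := by
          field_simp
          ring
end

section
/- In the majorant setting, with the INL-CondG sequence assumptions, {θ_k} ⊂ [0, λ²/2], x₀ ∈ C ∩ B(x*, σ), x₀ ≠ x*, assume additionally there is p ∈ (0, 1] such that the function t ↦ [f(t)/f'(t) − t]/t^{p+1} is strictly increasing on (0, ν). Then for all integers k ≥ 0: ‖x_{k+1} − x*‖ ≤ ω₁(1+ϑ)(1+λ)·(f(‖x₀ − x*‖)/f'(‖x₀ − x*‖) − ‖x₀ − x*‖)·(‖x_k − x*‖/‖x₀ − x*‖)^{p+1} + (ω₁[(1+ϑ)λ + ϑ] + ω₂)‖x_k − x*‖. -/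
section aux
variable {E : Type*} [NormedAddCommGroup E] [NormedSpace ℝ E] [CompleteSpace E]

lemma aux_isUnit_of_near_one (A : E →L[ℝ] E) (h : ‖1 - A‖ < 1) :
    IsUnit A := by
  have := (Units.oneSub (1 - A) h).isUnit
  simpa using this

lemma aux_inv_bound (A : E →L[ℝ] E) (h : ‖1 - A‖ < 1) :
    ‖Ring.inverse A‖ ≤ (1 - ‖1 - A‖)⁻¹ := by
  have h1 : Ring.inverse A = ∑' n : ℕ, (1 - A) ^ n := by
    rw [geom_series_eq_inverse _ h, sub_sub_cancel]
  rw [h1]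
  have h2 := tsum_geometric_le_of_norm_lt_one (1 - A) h
  have h3 : ‖(1 : E →L[ℝ] E)‖ ≤ 1 := by
    rw [ContinuousLinearMap.one_def]; exact ContinuousLinearMap.norm_id_le
  linarith

end aux

open Set intervalIntegral

variable {E : Type*} [NormedAddCommGroup E] [NormedSpace ℝ E] [CompleteSpace E]

lemma aux_taylor (Ω : Set E) (F : E → E) (F' : E → (E →L[ℝ] E))
    (hF : ∀ y ∈ Ω, HasFDerivAt F (F' y) y) (hFc : ContinuousOn F' Ω)
    (xs x : E) (hseg : ∀ τ ∈ Set.Icc (0:ℝ) 1, xs + τ • (x - xs) ∈ Ω)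
    (G : E →L[ℝ] E) (φ : ℝ → ℝ) (hφ : ContinuousOn φ (Set.Icc 0 1))
    (hb : ∀ τ ∈ Set.Icc (0:ℝ) 1, ‖G.comp (F' x - F' (xs + τ • (x - xs)))‖ ≤ φ τ)
    (hφ0 : ∀ τ ∈ Set.Icc (0:ℝ) 1, 0 ≤ φ τ) :
    ‖G (F xs - F x - (F' x) (xs - x))‖ ≤ (∫ τ in (0:ℝ)..1, φ τ) * ‖x - xs‖ := by
  set γ : ℝ → E := fun τ => xs + τ • (x - xs) with hγ
  have hγc : Continuous γ := by continuity
  have hγd : ∀ τ : ℝ, HasDerivAt γ (x - xs) τ := by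
    intro τ
    have h1 : HasDerivAt (fun τ : ℝ => τ • (x - xs)) ((1:ℝ) • (x - xs)) τ :=
      (hasDerivAt_id τ).smul_const (x - xs)
    simpa [hγ] using h1.const_add xs
  have hgd : ∀ τ ∈ Set.uIcc (0:ℝ) 1,
      HasDerivAt (fun τ => F (γ τ)) ((F' (γ τ)) (x - xs)) τ := by
    intro τ hτ
    rw [Set.uIcc_of_le (by norm_num : (0:ℝ) ≤ 1)] at hτ
    exact (hF _ (hseg τ hτ)).comp_hasDerivAt τ (hγd τ)
  have hFγc : ContinuousOn (fun τ => F' (γ τ)) (Set.Icc (0:ℝ) 1) :=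
    hFc.comp hγc.continuousOn (fun τ hτ => hseg τ hτ)
  have hcont' : ContinuousOn (fun τ => (F' (γ τ)) (x - xs)) (Set.Icc (0:ℝ) 1) :=
    hFγc.clm_apply continuousOn_const
  have hint : IntervalIntegrable (fun τ => (F' (γ τ)) (x - xs)) MeasureTheory.volume 0 1 :=
    hcont'.intervalIntegrable_of_Icc (by norm_num)
  have hftc : ∫ τ in (0:ℝ)..1, (F' (γ τ)) (x - xs) = F x - F xs := by
    have h := integral_eq_sub_of_hasDerivAt hgd hint
    have hγ1 : γ 1 = x := by simp [hγ]
    have hγ0 : γ 0 = xs := by simp [hγ]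
    rw [h, hγ1, hγ0]
  have hint2 : IntervalIntegrable (fun τ => ((F' x - F' (γ τ)) (x - xs)))
      MeasureTheory.volume 0 1 := by
    apply ContinuousOn.intervalIntegrable_of_Icc (by norm_num)
    exact (continuousOn_const.sub hFγc).clm_apply continuousOn_const
  have hkey : F xs - F x - (F' x) (xs - x)
      = ∫ τ in (0:ℝ)..1, ((F' x - F' (γ τ)) (x - xs)) := by
    have hsub : ∫ τ in (0:ℝ)..1, ((F' x - F' (γ τ)) (x - xs))
        = (∫ τ in (0:ℝ)..1, (F' x) (x - xs)) - ∫ τ in (0:ℝ)..1, (F' (γ τ)) (x - xs) := by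
      rw [← intervalIntegral.integral_sub (by
          exact (continuousOn_const (c := (F' x) (x - xs))).intervalIntegrable_of_Icc
            (by norm_num)) hint]
      simp
    rw [hsub, hftc]
    simp [map_sub]
    abel
  rw [hkey, ← ContinuousLinearMap.intervalIntegral_comp_comm G hint2]
  have hφint : IntervalIntegrable (fun τ => φ τ * ‖x - xs‖) MeasureTheory.volume 0 1 := by
    apply ContinuousOn.intervalIntegrable_of_Icc (by norm_num)
    exact hφ.mul continuousOn_const
  have hbd := intervalIntegral.norm_integral_le_abs_of_norm_le (μ := MeasureTheory.volume)
    (a := 0) (b := 1) (f := fun τ => G ((F' x - F' (γ τ)) (x - xs)))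
    (g := fun τ => φ τ * ‖x - xs‖) ?_ hφint
  · refine hbd.trans ?_
    rw [intervalIntegral.integral_mul_const]
    rw [abs_of_nonneg]
    apply mul_nonneg _ (norm_nonneg _)
    apply intervalIntegral.integral_nonneg (by norm_num)
    exact fun u hu => hφ0 u hu
  · apply MeasureTheory.ae_restrict_of_forall_mem measurableSet_uIoc
    intro τ hτ
    rw [Set.uIoc_of_le (by norm_num : (0:ℝ) ≤ 1)] at hτ
    have hτ' : τ ∈ Set.Icc (0:ℝ) 1 := ⟨le_of_lt hτ.1, hτ.2⟩
    calc ‖G ((F' x - F' (γ τ)) (x - xs))‖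
        = ‖(G.comp (F' x - F' (γ τ))) (x - xs)‖ := rfl
      _ ≤ ‖G.comp (F' x - F' (γ τ))‖ * ‖x - xs‖ := ContinuousLinearMap.le_opNorm _ _
      _ ≤ φ τ * ‖x - xs‖ := by
          apply mul_le_mul_of_nonneg_right (hb τ hτ') (norm_nonneg _)

open Set intervalIntegral

lemma aux_scalar (f f' : ℝ → ℝ) (R : ℝ)
    (hderiv : ∀ t ∈ Set.Ico 0 R, HasDerivWithinAt f (f' t) (Set.Ico 0 R) t)
    (hcont : ContinuousOn f' (Set.Ico 0 R)) (h1a : f 0 = 0)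
    (t : ℝ) (ht0 : 0 < t) (htR : t < R) :
    ∫ τ in (0:ℝ)..1, (f' t - f' (τ * t)) = f' t - f t / t := by
  have hsub : Set.Icc 0 t ⊆ Set.Ico 0 R := Set.Icc_subset_Ico_iff (le_of_lt ht0) |>.2
    ⟨le_refl 0, htR⟩
  have hfc : ContinuousOn f (Set.Ico 0 R) := fun u hu => (hderiv u hu).continuousWithinAt
  have hftc : ∫ u in (0:ℝ)..t, f' u = f t := by
    have h := intervalIntegral.integral_eq_sub_of_hasDeriv_right_of_le (le_of_lt ht0)
      (hfc.mono hsub)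
      (fun u hu => by
        have hu' : u ∈ Set.Ioo 0 R := ⟨hu.1, lt_trans hu.2 htR⟩
        have : HasDerivAt f (f' u) u :=
          (hderiv u ⟨le_of_lt hu'.1, hu'.2⟩).hasDerivAt
            (Ico_mem_nhds hu'.1 hu'.2)
        exact this.hasDerivWithinAt)
      ((hcont.mono hsub).intervalIntegrable_of_Icc (le_of_lt ht0))
    rw [h, h1a, sub_zero]
  have hcomp : ∫ τ in (0:ℝ)..1, f' (τ * t) = t⁻¹ * f t := by
    have h := intervalIntegral.integral_comp_mul_right (a := 0) (b := 1) f' (ne_of_gt ht0)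
    simp only [zero_mul, one_mul] at h
    rw [h, hftc, smul_eq_mul]
  have hintc : IntervalIntegrable (fun τ => f' (τ * t)) MeasureTheory.volume 0 1 := by
    apply ContinuousOn.intervalIntegrable_of_Icc (by norm_num)
    apply hcont.comp (Continuous.continuousOn (by continuity))
    intro u hu
    exact ⟨mul_nonneg hu.1 (le_of_lt ht0), lt_of_le_of_lt
      (by nlinarith [hu.2, hu.1] : u * t ≤ t) htR⟩
  rw [intervalIntegral.integral_sub (intervalIntegrable_const) hintc, hcomp]
  simp [div_eq_inv_mul]

set_option maxHeartbeats 1000000 in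
theorem stmt_12 (n : ℕ) (Ω : Set (EuclideanSpace ℝ (Fin n))) (hΩ : IsOpen Ω)
    (C : Set (EuclideanSpace ℝ (Fin n))) (hCne : C.Nonempty)
    (hCconv : Convex ℝ C) (hCcomp : IsCompact C) (hCΩ : C ⊆ Ω)
    (F : EuclideanSpace ℝ (Fin n) → EuclideanSpace ℝ (Fin n))
    (F' : EuclideanSpace ℝ (Fin n) →
      (EuclideanSpace ℝ (Fin n) →L[ℝ] EuclideanSpace ℝ (Fin n)))
    (hFderiv : ∀ x ∈ Ω, HasFDerivAt F (F' x) x)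
    (hFcont : ContinuousOn F' Ω)
    (xs : EuclideanSpace ℝ (Fin n)) (hxsC : xs ∈ C) (hFxs : F xs = 0)
    (hinv : IsUnit (F' xs))
    (R : ℝ) (hR : 0 < R)
    (κ : ℝ) (hκ : κ = sSup {t | t ∈ Set.Ico 0 R ∧ Metric.ball xs t ⊆ Ω})
    (f f' : ℝ → ℝ)
    (hderiv : ∀ t ∈ Set.Ico 0 R, HasDerivWithinAt f (f' t) (Set.Ico 0 R) t)
    (hcont : ContinuousOn f' (Set.Ico 0 R))
    (h1a : f 0 = 0) (h1b : f' 0 = -1)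
    (h2 : StrictMonoOn f' (Set.Ico 0 R))
    (hmaj : ∀ τ ∈ Set.Icc (0:ℝ) 1, ∀ x ∈ Metric.ball xs κ,
      ‖(Ring.inverse (F' xs)).comp (F' x - F' (xs + τ • (x - xs)))‖ ≤
        f' ‖x - xs‖ - f' (τ * ‖x - xs‖))
    (ν : ℝ) (hν : ν = sSup {t | t ∈ Set.Ico 0 R ∧ f' t < 0})
    (ϑ ω₁ ω₂ lam : ℝ)
    (hϑ0 : 0 ≤ ϑ) (hϑ1 : ϑ < 1) (hω₂0 : 0 ≤ ω₂) (hω₁₂ : ω₂ < ω₁)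
    (hωϑ : ω₁ * ϑ + ω₂ < 1)
    (hlam0 : 0 ≤ lam) (hlam : lam < (1 - ω₂ - ω₁ * ϑ) / (ω₁ * (1 + ϑ)))
    (ρ : ℝ)
    (hρ : ρ = sSup {δ | δ ∈ Set.Ioo 0 ν ∧ ∀ t ∈ Set.Ioo 0 δ,
      ω₁ * (1 + ϑ) * (1 + lam) * (f t / (t * f' t) - 1)
        + ω₁ * ((1 + ϑ) * lam + ϑ) + ω₂ < 1})
    (σ : ℝ) (hσ : σ = min κ ρ)
    (x s r : ℕ → EuclideanSpace ℝ (Fin n))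
    (M P : ℕ → (EuclideanSpace ℝ (Fin n) →L[ℝ] EuclideanSpace ℝ (Fin n)))
    (η θ : ℕ → ℝ)
    (hθ : ∀ k, θ k ∈ Set.Icc 0 (lam ^ 2 / 2))
    (hx0 : x 0 ∈ C ∩ Metric.ball xs σ) (hx0ne : x 0 ≠ xs)
    (hM : ∀ k, IsUnit (M k)) (hP : ∀ k, IsUnit (P k)) (hη : ∀ k, 0 ≤ η k)
    (hstep : ∀ k, (M k) (s k) = -F (x k) + r k)
    (hM1 : ∀ k, ‖(Ring.inverse (M k)).comp (F' (x k))‖ ≤ ω₁)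
    (hM2 : ∀ k, ‖(Ring.inverse (M k)).comp (F' (x k)) - 1‖ ≤ ω₂)
    (hres : ∀ k, ‖(P k) (r k)‖ ≤ η k * ‖(P k) (F (x k))‖)
    (hcond : ∀ k, η k * (‖Ring.inverse ((P k).comp (F' (x k)))‖
      * ‖(P k).comp (F' (x k))‖) ≤ ϑ)
    (hxC : ∀ k, x (k + 1) ∈ C)
    (hcondg : ∀ k, ‖x (k + 1) - xs‖ ≤
      ‖x k + s k - xs‖ + Real.sqrt (2 * θ k) * ‖s k‖)     (p : ℝ) (hp0 : 0 < p) (hp1 : p ≤ 1)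
    (h3 : StrictMonoOn (fun t => (f t / f' t - t) / t ^ (p + 1)) (Set.Ioo 0 ν)) :
    ∀ k, ‖x (k + 1) - xs‖ ≤
      ω₁ * (1 + ϑ) * (1 + lam) * (f ‖x 0 - xs‖ / f' ‖x 0 - xs‖ - ‖x 0 - xs‖)
          * (‖x k - xs‖ / ‖x 0 - xs‖) ^ (p + 1)
        + (ω₁ * ((1 + ϑ) * lam + ϑ) + ω₂) * ‖x k - xs‖ := by
  -- basic positivity
  have hω₁pos : 0 < ω₁ := lt_of_le_of_lt hω₂0 hω₁₂
  set t₀ : ℝ := ‖x 0 - xs‖ with ht₀def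
  have ht₀pos : 0 < t₀ := by
    rw [ht₀def, norm_pos_iff, sub_ne_zero]; exact hx0ne
  have hx0ball : t₀ < σ := by
    have := hx0.2; rwa [Metric.mem_ball, dist_eq_norm] at this
  -- κ facts
  have hSκne : {t | t ∈ Set.Ico 0 R ∧ Metric.ball xs t ⊆ Ω}.Nonempty :=
    ⟨0, ⟨⟨le_refl 0, hR⟩, by simp⟩⟩
  have hSνne : {t | t ∈ Set.Ico 0 R ∧ f' t < 0}.Nonempty :=
    ⟨0, ⟨⟨le_refl 0, hR⟩, by rw [h1b]; norm_num⟩⟩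
  have hballκ : Metric.ball xs κ ⊆ Ω := by
    intro y hy
    rw [Metric.mem_ball] at hy
    rw [hκ] at hy
    obtain ⟨t', ht'S, ht'⟩ := exists_lt_of_lt_csSup hSκne hy
    exact ht'S.2 (Metric.mem_ball.2 ht')
  -- ν facts
  have hν_lt : ∀ t : ℝ, 0 ≤ t → t < ν → t < R ∧ f' t < 0 := by
    intro t ht0 htν
    rw [hν] at htν
    obtain ⟨t', ht'S, ht'⟩ := exists_lt_of_lt_csSup hSνne htν
    have htR : t < R := lt_trans ht' ht'S.1.2
    refine ⟨htR, lt_of_lt_of_le ?_ (le_of_lt ht'S.2)⟩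
    have := h2 ⟨ht0, htR⟩ ht'S.1 ht'
    linarith [ht'S.2]
  have hνR : ν ≤ R := by
    rw [hν]
    apply csSup_le hSνne
    exact fun t ht => le_of_lt ht.1.2
  -- ρ facts
  have ht₀ρ : t₀ < ρ := lt_of_lt_of_le hx0ball (hσ ▸ min_le_right κ ρ)
  have ht₀κ : t₀ < κ := lt_of_lt_of_le hx0ball (hσ ▸ min_le_left κ ρ)
  obtain ⟨δ, hδS, hδt₀⟩ : ∃ δ, (δ ∈ Set.Ioo 0 ν ∧ ∀ t ∈ Set.Ioo 0 δ,
      ω₁ * (1 + ϑ) * (1 + lam) * (f t / (t * f' t) - 1)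
        + ω₁ * ((1 + ϑ) * lam + ϑ) + ω₂ < 1) ∧ t₀ < δ := by
    have hne : {δ | δ ∈ Set.Ioo 0 ν ∧ ∀ t ∈ Set.Ioo 0 δ,
        ω₁ * (1 + ϑ) * (1 + lam) * (f t / (t * f' t) - 1)
          + ω₁ * ((1 + ϑ) * lam + ϑ) + ω₂ < 1}.Nonempty := by
      by_contra h
      rw [Set.not_nonempty_iff_eq_empty] at h
      rw [hρ, h, Real.sSup_empty] at ht₀ρ
      linarith
    obtain ⟨δ, h1, h2⟩ := exists_lt_of_lt_csSup hne (hρ ▸ ht₀ρ)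
    exact ⟨δ, h1, h2⟩
  have ht₀ν : t₀ < ν := lt_trans hδt₀ hδS.1.2
  have hC : ω₁ * (1 + ϑ) * (1 + lam) * (f t₀ / (t₀ * f' t₀) - 1)
      + ω₁ * ((1 + ϑ) * lam + ϑ) + ω₂ < 1 := hδS.2 t₀ ⟨ht₀pos, hδt₀⟩
  obtain ⟨ht₀R, hf't₀⟩ := hν_lt t₀ (le_of_lt ht₀pos) ht₀ν
  -- the key per-step estimate
  have key : ∀ k, ‖x k - xs‖ ≤ t₀ → ‖x (k+1) - xs‖ ≤
      ω₁ * (1 + ϑ) * (1 + lam) * (f ‖x k - xs‖ / f' ‖x k - xs‖ - ‖x k - xs‖)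
        + (ω₁ * ((1 + ϑ) * lam + ϑ) + ω₂) * ‖x k - xs‖ := by
    intro k hle
    have hsqrt : Real.sqrt (2 * θ k) ≤ lam := by
      have h1 := (hθ k).1
      have h2 := (hθ k).2
      have h3 : 2 * θ k ≤ lam ^ 2 := by linarith
      calc Real.sqrt (2 * θ k) ≤ Real.sqrt (lam ^ 2) := Real.sqrt_le_sqrt h3
        _ = lam := Real.sqrt_sq hlam0
    set t : ℝ := ‖x k - xs‖ with htdef
    rcases eq_or_lt_of_le (norm_nonneg (x k - xs)) with h0 | ht0
    · -- degenerate case : x k = xs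
      have hyxs : x k = xs := by
        have h1 : ‖x k - xs‖ = 0 := h0.symm
        rwa [norm_eq_zero, sub_eq_zero] at h1
      have hFy : F (x k) = 0 := by rw [hyxs, hFxs]
      have hr0 : r k = 0 := by
        have h1 := hres k
        rw [hFy] at h1
        simp only [map_zero, norm_zero, mul_zero] at h1
        have h2 : (P k) (r k) = 0 := by
          have := norm_nonneg ((P k) (r k)); have := le_antisymm h1 this
          rwa [norm_eq_zero] at this
        have h3 : (Ring.inverse (P k)) ((P k) (r k)) = r k := by
          rw [← ContinuousLinearMap.mul_apply, Ring.inverse_mul_cancel _ (hP k),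
            ContinuousLinearMap.one_apply]
        rw [← h3, h2, map_zero]
      have hs0 : s k = 0 := by
        have h1 := hstep k
        rw [hFy, hr0, neg_zero, add_zero] at h1
        have h3 : (Ring.inverse (M k)) ((M k) (s k)) = s k := by
          rw [← ContinuousLinearMap.mul_apply, Ring.inverse_mul_cancel _ (hM k),
            ContinuousLinearMap.one_apply]
        rw [← h3, h1, map_zero]
      have h4 := hcondg k
      rw [hs0, hyxs] at h4
      simp only [add_zero, sub_self, norm_zero, mul_zero] at h4
      have ht0' : t = 0 := by rw [htdef, hyxs, sub_self, norm_zero]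
      rw [ht0', h1a, h1b]
      simpa using h4
    · -- main case
      have htκ : t < κ := lt_of_le_of_lt hle ht₀κ
      have htν : t < ν := lt_of_le_of_lt hle ht₀ν
      obtain ⟨htR, hf't⟩ := hν_lt t (le_of_lt ht0) htν
      have hyball : x k ∈ Metric.ball xs κ := by
        rw [Metric.mem_ball, dist_eq_norm, ← htdef]; exact htκ
      have hyΩ : (x k) ∈ Ω := hballκ hyball
      -- Banach lemma part
      have hmaj0 : ‖(Ring.inverse (F' xs)).comp (F' (x k) - F' xs)‖ ≤ f' t + 1 := by
        have h := hmaj 0 ⟨le_refl 0, zero_le_one⟩ (x k) hyball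
        rw [zero_smul, add_zero, zero_mul, h1b, ← htdef] at h
        linarith
      have hBeq : (Ring.inverse (F' xs)).comp (F' (x k) - F' xs) = (Ring.inverse (F' xs)) * F' (x k) - 1 := by
        rw [← ContinuousLinearMap.mul_def, mul_sub, Ring.inverse_mul_cancel _ hinv]
      have hnear : ‖1 - (Ring.inverse (F' xs)) * F' (x k)‖ < 1 := by
        rw [norm_sub_rev, ← hBeq]
        linarith [hmaj0]
      have hB₀unit : IsUnit ((Ring.inverse (F' xs)) * F' (x k)) := aux_isUnit_of_near_one _ hnear
      have hA'unit : IsUnit (F' (x k)) := by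
        have hA'eq : F' (x k) = F' xs * ((Ring.inverse (F' xs)) * F' (x k)) := by
          rw [← mul_assoc, Ring.mul_inverse_cancel _ hinv, one_mul]
        rw [hA'eq]; exact hinv.mul hB₀unit
      have huA : (Ring.inverse (F' (x k))) * F' xs = Ring.inverse ((Ring.inverse (F' xs)) * F' (x k)) := by
        have h1 : ((Ring.inverse (F' (x k))) * F' xs) * ((Ring.inverse (F' xs)) * F' (x k)) = 1 := by
          rw [mul_assoc, ← mul_assoc (F' xs), Ring.mul_inverse_cancel _ hinv, one_mul,
            Ring.inverse_mul_cancel _ hA'unit]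
        calc (Ring.inverse (F' (x k))) * F' xs
            = ((Ring.inverse (F' (x k))) * F' xs) * (((Ring.inverse (F' xs)) * F' (x k)) * Ring.inverse ((Ring.inverse (F' xs)) * F' (x k))) := by
              rw [Ring.mul_inverse_cancel _ hB₀unit, mul_one]
          _ = (((Ring.inverse (F' (x k))) * F' xs) * ((Ring.inverse (F' xs)) * F' (x k))) * Ring.inverse ((Ring.inverse (F' xs)) * F' (x k)) := by
              simp only [mul_assoc]
          _ = Ring.inverse ((Ring.inverse (F' xs)) * F' (x k)) := by rw [h1, one_mul]
      have hu_norm : ‖(Ring.inverse (F' (x k))) * F' xs‖ ≤ (- f' t)⁻¹ := by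
        rw [huA]
        have h1 := aux_inv_bound ((Ring.inverse (F' xs)) * F' (x k)) hnear
        have h2 : (0:ℝ) < - f' t := by linarith
        have h3 : - f' t ≤ 1 - ‖1 - (Ring.inverse (F' xs)) * F' (x k)‖ := by
          have h4 : ‖1 - (Ring.inverse (F' xs)) * F' (x k)‖ ≤ f' t + 1 := by
            rw [norm_sub_rev, ← hBeq]; exact hmaj0
          linarith
        calc ‖Ring.inverse ((Ring.inverse (F' xs)) * F' (x k))‖ ≤ (1 - ‖1 - (Ring.inverse (F' xs)) * F' (x k)‖)⁻¹ := h1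
          _ ≤ (- f' t)⁻¹ := inv_anti₀ h2 h3
      -- Taylor estimate
      have hseg : ∀ τ ∈ Set.Icc (0:ℝ) 1, xs + τ • (x k - xs) ∈ Ω := by
        intro τ hτ
        apply hballκ
        rw [Metric.mem_ball, dist_eq_norm, add_sub_cancel_left, norm_smul,
          Real.norm_eq_abs, abs_of_nonneg hτ.1, ← htdef]
        nlinarith [hτ.1, hτ.2, ht0, htκ]
      have hτtmem : ∀ τ ∈ Set.Icc (0:ℝ) 1, τ * t ∈ Set.Ico 0 R := by
        intro τ hτ
        constructor
        · exact mul_nonneg hτ.1 (le_of_lt ht0)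
        · nlinarith [hτ.1, hτ.2, ht0, htR]
      have hφcont : ContinuousOn (fun τ : ℝ => f' t - f' (τ * t)) (Set.Icc 0 1) := by
        apply ContinuousOn.sub continuousOn_const
        apply hcont.comp (Continuous.continuousOn (continuous_id.mul continuous_const))
        exact hτtmem
      have hφ0 : ∀ τ ∈ Set.Icc (0:ℝ) 1, 0 ≤ f' t - f' (τ * t) := by
        intro τ hτ
        have h1 : τ * t ≤ t := by nlinarith [hτ.1, hτ.2, ht0]
        have := h2.monotoneOn (hτtmem τ hτ) ⟨le_of_lt ht0, htR⟩ h1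
        linarith
      have hb : ∀ τ ∈ Set.Icc (0:ℝ) 1,
          ‖(Ring.inverse (F' xs)).comp (F' (x k) - F' (xs + τ • (x k - xs)))‖ ≤ f' t - f' (τ * t) := by
        intro τ hτ
        have := hmaj τ hτ (x k) hyball
        rwa [← htdef] at this
      have htay := aux_taylor Ω F F' hFderiv hFcont xs (x k) hseg (Ring.inverse (F' xs))
        (fun τ : ℝ => f' t - f' (τ * t)) hφcont hb hφ0
      rw [aux_scalar f f' R hderiv hcont h1a t ht0 htR, ← htdef] at htay
      -- htay : ‖(Ring.inverse (F' xs)) (F xs - F (x k) - (F' (x k)) (xs - x k))‖ ≤ (f' t - f t / t) * t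
      have hw : F xs - F (x k) - (F' (x k)) (xs - x k) = -F (x k) + (F' (x k)) (x k - xs) := by
        have h5 : (F' (x k)) (xs - x k) = -((F' (x k)) (x k - xs)) := by
          rw [← map_neg, neg_sub]
        rw [hFxs, h5]
        abel
      have hFG : ∀ v, (F' xs) ((Ring.inverse (F' xs)) v) = v := by
        intro v
        rw [← ContinuousLinearMap.mul_apply, Ring.mul_inverse_cancel _ hinv,
          ContinuousLinearMap.one_apply]
      have huA' : ∀ v, (Ring.inverse (F' (x k))) ((F' (x k)) v) = v := by
        intro v
        rw [← ContinuousLinearMap.mul_apply, Ring.inverse_mul_cancel _ hA'unit,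
          ContinuousLinearMap.one_apply]
      have hA'app : ∀ v, (F' (x k)) ((Ring.inverse (F' (x k))) v) = v := by
        intro v
        rw [← ContinuousLinearMap.mul_apply, Ring.mul_inverse_cancel _ hA'unit,
          ContinuousLinearMap.one_apply]
      have hnewton : ‖(x k - xs) - (Ring.inverse (F' (x k))) (F (x k))‖ ≤ f t / f' t - t := by
        have hid : (x k - xs) - (Ring.inverse (F' (x k))) (F (x k))
            = ((Ring.inverse (F' (x k))) * F' xs) ((Ring.inverse (F' xs)) (F xs - F (x k) - (F' (x k)) (xs - x k))) := by
          calc (x k - xs) - (Ring.inverse (F' (x k))) (F (x k))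
              = (Ring.inverse (F' (x k))) ((F' (x k)) (x k - xs)) - (Ring.inverse (F' (x k))) (F (x k)) := by rw [huA']
            _ = (Ring.inverse (F' (x k))) ((F' (x k)) (x k - xs) - F (x k)) := (map_sub (Ring.inverse (F' (x k))) _ _).symm
            _ = (Ring.inverse (F' (x k))) (F xs - F (x k) - (F' (x k)) (xs - x k)) := by
                rw [hw]; congr 1; abel
            _ = (Ring.inverse (F' (x k))) ((F' xs) ((Ring.inverse (F' xs)) (F xs - F (x k) - (F' (x k)) (xs - x k)))) := by rw [hFG]
            _ = ((Ring.inverse (F' (x k))) * F' xs) ((Ring.inverse (F' xs)) (F xs - F (x k) - (F' (x k)) (xs - x k))) :=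
                (ContinuousLinearMap.mul_apply _ _ _).symm
        rw [hid]
        have hc1 : ‖((Ring.inverse (F' (x k))) * F' xs) ((Ring.inverse (F' xs)) (F xs - F (x k) - (F' (x k)) (xs - x k)))‖
            ≤ ‖(Ring.inverse (F' (x k))) * F' xs‖ * ‖(Ring.inverse (F' xs)) (F xs - F (x k) - (F' (x k)) (xs - x k))‖ :=
          ContinuousLinearMap.le_opNorm _ _
        have hc2 : ‖(Ring.inverse (F' (x k))) * F' xs‖ * ‖(Ring.inverse (F' xs)) (F xs - F (x k) - (F' (x k)) (xs - x k))‖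
            ≤ (- f' t)⁻¹ * ((f' t - f t / t) * t) := by
          apply mul_le_mul hu_norm htay (norm_nonneg _)
          exact inv_nonneg.2 (by linarith)
        have hc3 : (- f' t)⁻¹ * ((f' t - f t / t) * t) = f t / f' t - t := by
          have hne1 : t ≠ 0 := ne_of_gt ht0
          have hne2 : f' t ≠ 0 := ne_of_lt hf't
          apply mul_left_cancel₀ (neg_ne_zero.2 hne2)
          rw [← mul_assoc, mul_inv_cancel₀ (neg_ne_zero.2 hne2), one_mul]
          field_simp
          ring
        linarith
      have het : 0 ≤ f t / f' t - t := le_trans (norm_nonneg _) hnewton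
      have hN : ‖(Ring.inverse (F' (x k))) (F (x k))‖ ≤ (f t / f' t - t) + t := by
        have hid : (Ring.inverse (F' (x k))) (F (x k)) = (x k - xs) - ((x k - xs) - (Ring.inverse (F' (x k))) (F (x k))) := by abel
        calc ‖(Ring.inverse (F' (x k))) (F (x k))‖ = ‖(x k - xs) - ((x k - xs) - (Ring.inverse (F' (x k))) (F (x k)))‖ := by rw [← hid]
          _ ≤ ‖x k - xs‖ + ‖(x k - xs) - (Ring.inverse (F' (x k))) (F (x k))‖ := norm_sub_le _ _
          _ ≤ t + (f t / f' t - t) := add_le_add (le_of_eq htdef.symm) hnewton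
          _ = (f t / f' t - t) + t := add_comm _ _
      -- bounds with M and P
      have hT1 := hM1 k
      have hT2 := hM2 k
      rw [← ContinuousLinearMap.mul_def] at hT1 hT2
      have hMFy : ‖(Ring.inverse (M k)) (F (x k))‖ ≤ ω₁ * ‖(Ring.inverse (F' (x k))) (F (x k))‖ := by
        have hid : (Ring.inverse (M k)) (F (x k))
            = ((Ring.inverse (M k)) * F' (x k)) ((Ring.inverse (F' (x k))) (F (x k))) := by
          rw [ContinuousLinearMap.mul_apply, hA'app]
        rw [hid]
        calc ‖((Ring.inverse (M k)) * F' (x k)) ((Ring.inverse (F' (x k))) (F (x k)))‖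
            ≤ ‖(Ring.inverse (M k)) * F' (x k)‖ * ‖(Ring.inverse (F' (x k))) (F (x k))‖ :=
              ContinuousLinearMap.le_opNorm _ _
          _ ≤ ω₁ * ‖(Ring.inverse (F' (x k))) (F (x k))‖ := mul_le_mul_of_nonneg_right hT1 (norm_nonneg _)
      -- the preconditioner
      have hPA'unit : IsUnit ((P k) * F' (x k)) := (hP k).mul hA'unit
      have hQr : ((P k) * F' (x k)) * ((Ring.inverse (F' (x k))) * Ring.inverse (P k)) = 1 := by
        rw [mul_assoc, ← mul_assoc (F' (x k)), Ring.mul_inverse_cancel _ hA'unit,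
          one_mul, Ring.mul_inverse_cancel _ (hP k)]
      have hQinv : Ring.inverse ((P k).comp (F' (x k))) = ((Ring.inverse (F' (x k))) * Ring.inverse (P k)) := by
        rw [← ContinuousLinearMap.mul_def]
        calc Ring.inverse ((P k) * F' (x k))
            = Ring.inverse ((P k) * F' (x k)) * (((P k) * F' (x k)) * ((Ring.inverse (F' (x k))) * Ring.inverse (P k))) := by
              rw [hQr, mul_one]
          _ = (Ring.inverse ((P k) * F' (x k)) * ((P k) * F' (x k))) * ((Ring.inverse (F' (x k))) * Ring.inverse (P k)) := by
              simp only [mul_assoc]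
          _ = ((Ring.inverse (F' (x k))) * Ring.inverse (P k)) := by rw [Ring.inverse_mul_cancel _ hPA'unit, one_mul]
      have hPF : ‖(P k) (F (x k))‖ ≤ ‖(P k).comp (F' (x k))‖ * ‖(Ring.inverse (F' (x k))) (F (x k))‖ := by
        have hid : (P k) (F (x k)) = ((P k).comp (F' (x k))) ((Ring.inverse (F' (x k))) (F (x k))) := by
          rw [ContinuousLinearMap.comp_apply, hA'app]
        rw [hid]
        exact ContinuousLinearMap.le_opNorm _ _
      have hMr : ‖(Ring.inverse (M k)) (r k)‖ ≤ ω₁ * ϑ * ‖(Ring.inverse (F' (x k))) (F (x k))‖ := by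
        have hQP : ((Ring.inverse (F' (x k))) * Ring.inverse (P k)) ((P k) (r k)) = (Ring.inverse (F' (x k))) (r k) := by
          rw [ContinuousLinearMap.mul_apply, ← ContinuousLinearMap.mul_apply
            (Ring.inverse (P k)) (P k), Ring.inverse_mul_cancel _ (hP k),
            ContinuousLinearMap.one_apply]
        have hid : (Ring.inverse (M k)) (r k)
            = ((Ring.inverse (M k)) * F' (x k)) (((Ring.inverse (F' (x k))) * Ring.inverse (P k)) ((P k) (r k))) := by
          rw [hQP, ContinuousLinearMap.mul_apply, hA'app]
        rw [hid]
        have hcnd := hcond k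
        rw [hQinv] at hcnd
        have hc1 : ‖((Ring.inverse (M k)) * F' (x k)) (((Ring.inverse (F' (x k))) * Ring.inverse (P k)) ((P k) (r k)))‖
            ≤ ‖(Ring.inverse (M k)) * F' (x k)‖ * (‖((Ring.inverse (F' (x k))) * Ring.inverse (P k))‖ * ‖(P k) (r k)‖) :=
          le_trans (ContinuousLinearMap.le_opNorm _ _)
            (mul_le_mul_of_nonneg_left (ContinuousLinearMap.le_opNorm _ _) (norm_nonneg _))
        have hc2 : ‖(P k) (r k)‖ ≤ η k * (‖(P k).comp (F' (x k))‖ * ‖(Ring.inverse (F' (x k))) (F (x k))‖) :=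
          le_trans (hres k) (mul_le_mul_of_nonneg_left hPF (hη k))
        have hc3 : ‖((Ring.inverse (F' (x k))) * Ring.inverse (P k))‖ * ‖(P k) (r k)‖
            ≤ (η k * (‖((Ring.inverse (F' (x k))) * Ring.inverse (P k))‖ * ‖(P k).comp (F' (x k))‖)) * ‖(Ring.inverse (F' (x k))) (F (x k))‖ := by
          calc ‖((Ring.inverse (F' (x k))) * Ring.inverse (P k))‖ * ‖(P k) (r k)‖
              ≤ ‖((Ring.inverse (F' (x k))) * Ring.inverse (P k))‖ * (η k * (‖(P k).comp (F' (x k))‖ * ‖(Ring.inverse (F' (x k))) (F (x k))‖)) :=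
                mul_le_mul_of_nonneg_left hc2 (norm_nonneg _)
            _ = (η k * (‖((Ring.inverse (F' (x k))) * Ring.inverse (P k))‖ * ‖(P k).comp (F' (x k))‖)) * ‖(Ring.inverse (F' (x k))) (F (x k))‖ := by ring
        calc ‖((Ring.inverse (M k)) * F' (x k)) (((Ring.inverse (F' (x k))) * Ring.inverse (P k)) ((P k) (r k)))‖
            ≤ ‖(Ring.inverse (M k)) * F' (x k)‖ * (‖((Ring.inverse (F' (x k))) * Ring.inverse (P k))‖ * ‖(P k) (r k)‖) := hc1
          _ ≤ ω₁ * ((η k * (‖((Ring.inverse (F' (x k))) * Ring.inverse (P k))‖ * ‖(P k).comp (F' (x k))‖)) * ‖(Ring.inverse (F' (x k))) (F (x k))‖) := by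
              apply mul_le_mul hT1 hc3 ?_ (le_of_lt hω₁pos)
              positivity
          _ ≤ ω₁ * (ϑ * ‖(Ring.inverse (F' (x k))) (F (x k))‖) := by
              apply mul_le_mul_of_nonneg_left ?_ (le_of_lt hω₁pos)
              exact mul_le_mul_of_nonneg_right hcnd (norm_nonneg _)
          _ = ω₁ * ϑ * ‖(Ring.inverse (F' (x k))) (F (x k))‖ := by ring
      -- the step s k
      have hsk : s k = (Ring.inverse (M k)) (-F (x k) + r k) := by
        have h1 := hstep k
        have h3 : (Ring.inverse (M k)) ((M k) (s k)) = s k := by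
          rw [← ContinuousLinearMap.mul_apply, Ring.inverse_mul_cancel _ (hM k),
            ContinuousLinearMap.one_apply]
        rw [← h3, h1]
      have hsnorm : ‖s k‖ ≤ ω₁ * (1 + ϑ) * ((f t / f' t - t) + t) := by
        rw [hsk, map_add, map_neg]
        calc ‖-(Ring.inverse (M k)) (F (x k)) + (Ring.inverse (M k)) (r k)‖
            ≤ ‖(Ring.inverse (M k)) (F (x k))‖ + ‖(Ring.inverse (M k)) (r k)‖ := by
              refine le_trans (norm_add_le _ _) ?_
              rw [norm_neg]
          _ ≤ ω₁ * ‖(Ring.inverse (F' (x k))) (F (x k))‖ + ω₁ * ϑ * ‖(Ring.inverse (F' (x k))) (F (x k))‖ := add_le_add hMFy hMr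
          _ = ω₁ * (1 + ϑ) * ‖(Ring.inverse (F' (x k))) (F (x k))‖ := by ring
          _ ≤ ω₁ * (1 + ϑ) * ((f t / f' t - t) + t) := by
              apply mul_le_mul_of_nonneg_left hN
              positivity
      -- decomposition of x k + s k - xs
      have hdec : ‖x k + s k - xs‖
          ≤ ω₂ * t + ω₁ * (f t / f' t - t) + ω₁ * ϑ * ‖(Ring.inverse (F' (x k))) (F (x k))‖ := by
        have hid : x k + s k - xs
            = (1 - (Ring.inverse (M k)) * F' (x k)) (x k - xs)
              + ((Ring.inverse (M k)) * F' (x k)) ((x k - xs) - (Ring.inverse (F' (x k))) (F (x k)))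
              + (Ring.inverse (M k)) (r k) := by
          have h1 : ((Ring.inverse (M k)) * F' (x k)) ((Ring.inverse (F' (x k))) (F (x k)))
              = (Ring.inverse (M k)) (F (x k)) := by
            rw [ContinuousLinearMap.mul_apply, hA'app]
          have h2 : (1 - (Ring.inverse (M k)) * F' (x k)) (x k - xs)
              = (x k - xs) - ((Ring.inverse (M k)) * F' (x k)) (x k - xs) := by
            rw [ContinuousLinearMap.sub_apply, ContinuousLinearMap.one_apply]
          rw [h2, map_sub _ (x k - xs) ((Ring.inverse (F' (x k))) (F (x k))), h1, hsk, map_add, map_neg]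
          abel
        rw [hid]
        have hn1 : ‖(1 - (Ring.inverse (M k)) * F' (x k)) (x k - xs)‖ ≤ ω₂ * t := by
          calc ‖(1 - (Ring.inverse (M k)) * F' (x k)) (x k - xs)‖
              ≤ ‖1 - (Ring.inverse (M k)) * F' (x k)‖ * ‖x k - xs‖ :=
                ContinuousLinearMap.le_opNorm _ _
            _ ≤ ω₂ * t := by
                rw [← htdef]
                apply mul_le_mul_of_nonneg_right ?_ (le_of_lt ht0)
                rw [norm_sub_rev]
                exact hT2
        have hn2 : ‖((Ring.inverse (M k)) * F' (x k)) ((x k - xs) - (Ring.inverse (F' (x k))) (F (x k)))‖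
            ≤ ω₁ * (f t / f' t - t) := by
          calc ‖((Ring.inverse (M k)) * F' (x k)) ((x k - xs) - (Ring.inverse (F' (x k))) (F (x k)))‖
              ≤ ‖(Ring.inverse (M k)) * F' (x k)‖ * ‖(x k - xs) - (Ring.inverse (F' (x k))) (F (x k))‖ :=
                ContinuousLinearMap.le_opNorm _ _
            _ ≤ ω₁ * (f t / f' t - t) :=
                mul_le_mul hT1 hnewton (norm_nonneg _) (le_of_lt hω₁pos)
        calc ‖(1 - (Ring.inverse (M k)) * F' (x k)) (x k - xs)
              + ((Ring.inverse (M k)) * F' (x k)) ((x k - xs) - (Ring.inverse (F' (x k))) (F (x k)))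
              + (Ring.inverse (M k)) (r k)‖
            ≤ ‖(1 - (Ring.inverse (M k)) * F' (x k)) (x k - xs)
              + ((Ring.inverse (M k)) * F' (x k)) ((x k - xs) - (Ring.inverse (F' (x k))) (F (x k)))‖
              + ‖(Ring.inverse (M k)) (r k)‖ := norm_add_le _ _
          _ ≤ (‖(1 - (Ring.inverse (M k)) * F' (x k)) (x k - xs)‖
              + ‖((Ring.inverse (M k)) * F' (x k)) ((x k - xs) - (Ring.inverse (F' (x k))) (F (x k)))‖)
              + ‖(Ring.inverse (M k)) (r k)‖ := add_le_add_left (norm_add_le _ _) _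
          _ ≤ (ω₂ * t + ω₁ * (f t / f' t - t)) + ω₁ * ϑ * ‖(Ring.inverse (F' (x k))) (F (x k))‖ :=
              add_le_add (add_le_add hn1 hn2) hMr
          _ = ω₂ * t + ω₁ * (f t / f' t - t) + ω₁ * ϑ * ‖(Ring.inverse (F' (x k))) (F (x k))‖ := by ring
      -- final combination
      have hfin := hcondg k
      have hsq : Real.sqrt (2 * θ k) * ‖s k‖ ≤ lam * (ω₁ * (1 + ϑ) * ((f t / f' t - t) + t)) := by
        apply mul_le_mul hsqrt hsnorm (norm_nonneg _) hlam0
      have hϑN : ω₁ * ϑ * ‖(Ring.inverse (F' (x k))) (F (x k))‖ ≤ ω₁ * ϑ * ((f t / f' t - t) + t) := by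
        apply mul_le_mul_of_nonneg_left hN
        positivity
      linarith [hfin, hdec, hsq, hϑN]
  -- e(t₀) ≥ 0 etc.
  have hf_le : ∀ t : ℝ, 0 < t → t < R → f t ≤ t * f' t := by
    intro t ht0 htR
    have hsc := aux_scalar f f' R hderiv hcont h1a t ht0 htR
    have hnonneg : 0 ≤ ∫ τ in (0:ℝ)..1, (f' t - f' (τ * t)) := by
      apply intervalIntegral.integral_nonneg (by norm_num)
      intro u hu
      have hu1 : u * t ≤ t := by nlinarith [hu.1, hu.2]
      have hu2 : 0 ≤ u * t := mul_nonneg hu.1 (le_of_lt ht0)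
      have := h2.monotoneOn (a := u * t) (b := t) ⟨hu2, lt_of_le_of_lt hu1 htR⟩
        ⟨le_of_lt ht0, htR⟩ hu1
      linarith
    rw [hsc] at hnonneg
    have : f t / t ≤ f' t := by linarith
    calc f t = (f t / t) * t := by field_simp
      _ ≤ f' t * t := mul_le_mul_of_nonneg_right this (le_of_lt ht0)
      _ = t * f' t := mul_comm _ _
  have het₀ : 0 ≤ f t₀ / f' t₀ - t₀ := by
    have h1 : f t₀ ≤ t₀ * f' t₀ := hf_le t₀ ht₀pos ht₀R
    have h2 : t₀ ≤ f t₀ / f' t₀ := (le_div_iff_of_neg hf't₀).2 h1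
    linarith
  -- comparison via h3
  have hcompare : ∀ t : ℝ, 0 ≤ t → t ≤ t₀ →
      f t / f' t - t ≤ (f t₀ / f' t₀ - t₀) * (t / t₀) ^ (p + 1) := by
    intro t ht0 htt₀
    rcases eq_or_lt_of_le ht0 with h0 | h0
    · rw [← h0]
      have hpne : p + 1 ≠ 0 := by positivity
      simp [h1a, h1b, Real.zero_rpow hpne]
    rcases eq_or_lt_of_le htt₀ with h1 | h1
    · rw [h1, div_self (ne_of_gt ht₀pos), Real.one_rpow, mul_one]
    · have hmem : t ∈ Set.Ioo 0 ν := ⟨h0, lt_trans h1 ht₀ν⟩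
      have hmem₀ : t₀ ∈ Set.Ioo 0 ν := ⟨ht₀pos, ht₀ν⟩
      have := le_of_lt (h3 hmem hmem₀ h1)
      have hpow : (0:ℝ) < t ^ (p+1) := Real.rpow_pos_of_pos h0 _
      have hpow₀ : (0:ℝ) < t₀ ^ (p+1) := Real.rpow_pos_of_pos ht₀pos _
      rw [div_le_div_iff₀ hpow hpow₀] at this
      rw [Real.div_rpow ht0 (le_of_lt ht₀pos), ← mul_div_assoc, le_div_iff₀ hpow₀]
      exact this
  -- invariant
  have hinv2 : ∀ k, ‖x k - xs‖ ≤ t₀ := by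
    intro k
    induction k with
    | zero => exact le_refl t₀
    | succ k ih =>
      have hk := key k ih
      have hcmp := hcompare ‖x k - xs‖ (norm_nonneg _) ih
      set t : ℝ := ‖x k - xs‖ with htdef
      have ht0 : 0 ≤ t := norm_nonneg _
      have hrle : (t / t₀) ^ (p + 1) ≤ t / t₀ := by
        rcases eq_or_lt_of_le ht0 with h0 | h0
        · rw [← h0]
          have hpne : p + 1 ≠ 0 := by positivity
          simp [Real.zero_rpow hpne]
        · have hx1 : t / t₀ ≤ 1 := (div_le_one ht₀pos).2 ih
          have hx0 : 0 < t / t₀ := div_pos h0 ht₀pos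
          calc (t/t₀) ^ (p+1) ≤ (t/t₀) ^ (1:ℝ) :=
                Real.rpow_le_rpow_of_exponent_ge hx0 hx1 (by linarith)
            _ = t/t₀ := Real.rpow_one _
      have he : f t₀ / (t₀ * f' t₀) - 1 = (f t₀ / f' t₀ - t₀) / t₀ := by
        have hne1 : t₀ ≠ 0 := ne_of_gt ht₀pos
        have hne2 : f' t₀ ≠ 0 := ne_of_lt hf't₀
        field_simp
      have hcoef : 0 ≤ ω₁ * (1 + ϑ) * (1 + lam) := by positivity
      have hC' : ω₁ * (1 + ϑ) * (1 + lam) * ((f t₀ / f' t₀ - t₀) / t₀)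
          + (ω₁ * ((1 + ϑ) * lam + ϑ) + ω₂) < 1 := by
        rw [← he]; linarith [hC]
      have hble : f t / f' t - t ≤ (f t₀ / f' t₀ - t₀) * (t / t₀) := by
        calc f t / f' t - t ≤ (f t₀ / f' t₀ - t₀) * (t/t₀) ^ (p+1) := hcmp
          _ ≤ (f t₀ / f' t₀ - t₀) * (t/t₀) := mul_le_mul_of_nonneg_left hrle het₀
      calc ‖x (k+1) - xs‖ ≤ ω₁ * (1 + ϑ) * (1 + lam) * (f t / f' t - t)
            + (ω₁ * ((1 + ϑ) * lam + ϑ) + ω₂) * t := hk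
        _ ≤ ω₁ * (1 + ϑ) * (1 + lam) * ((f t₀ / f' t₀ - t₀) * (t/t₀))
            + (ω₁ * ((1 + ϑ) * lam + ϑ) + ω₂) * t :=
            add_le_add_left (mul_le_mul_of_nonneg_left hble hcoef) _
        _ = (ω₁ * (1 + ϑ) * (1 + lam) * ((f t₀ / f' t₀ - t₀) / t₀)
            + (ω₁ * ((1 + ϑ) * lam + ϑ) + ω₂)) * t := by ring
        _ ≤ 1 * t := mul_le_mul_of_nonneg_right (le_of_lt hC') ht0
        _ = t := one_mul t
        _ ≤ t₀ := ih
  intro k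
  have hkey := key k (hinv2 k)
  have hcmp := hcompare ‖x k - xs‖ (norm_nonneg _) (hinv2 k)
  have hcoef : 0 ≤ ω₁ * (1 + ϑ) * (1 + lam) := by positivity
  calc ‖x (k+1) - xs‖ ≤ ω₁ * (1 + ϑ) * (1 + lam)
        * (f ‖x k - xs‖ / f' ‖x k - xs‖ - ‖x k - xs‖)
        + (ω₁ * ((1 + ϑ) * lam + ϑ) + ω₂) * ‖x k - xs‖ := hkey
    _ ≤ ω₁ * (1 + ϑ) * (1 + lam)
        * ((f t₀ / f' t₀ - t₀) * (‖x k - xs‖ / t₀) ^ (p + 1))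
        + (ω₁ * ((1 + ϑ) * lam + ϑ) + ω₂) * ‖x k - xs‖ :=
        add_le_add_left (mul_le_mul_of_nonneg_left hcmp hcoef) _
    _ = ω₁ * (1 + ϑ) * (1 + lam) * (f t₀ / f' t₀ - t₀)
        * (‖x k - xs‖ / t₀) ^ (p + 1)
        + (ω₁ * ((1 + ϑ) * lam + ϑ) + ω₂) * ‖x k - xs‖ := by ring
end
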